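/- arXiv:2009.09351 — 13 statements merged into one kernel-verified Lean document; each statement's English description precedes it below -/
import Mathlib

section
/- Assume each valuation v_i is homogeneous of degree r, concave, and differentiable, let ρ ∈ (0,1], and let p(y) = (∑_{j=1}^m q_j y_j)^{1/ρ} for some constants q_1,…,q_m ∈ ℝ_{≥0}. Then for any agent i, if x_i ∈ D_i(p), the payment equals a fixed fraction of the valuation: p(x_i) = ρ·r·v_i(x_i). -/
/-! Statement 1: under the convex pricing rule p(y) = (∑ q_j y_j)^{1/ρ},
any demanded bundle satisfies p(x_i) = ρ·r·v_i(x_i). -/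

/-- A bundle is nonnegative. -/
def Nonneg {m : ℕ} (y : Fin m → ℝ) : Prop := ∀ j, 0 ≤ y j

/-- `y` is in the (quasilinear) demand set for valuation `v` and pricing rule `p`. -/
def InDemand {m : ℕ} (v p : (Fin m → ℝ) → ℝ) (y : Fin m → ℝ) : Prop :=
  Nonneg y ∧ ∀ z, Nonneg z → v z - p z ≤ v y - p y

/-- Homogeneity of degree `r` on the nonnegative orthant. -/
def Homog {m : ℕ} (r : ℝ) (v : (Fin m → ℝ) → ℝ) : Prop :=
  ∀ y, Nonneg y → ∀ c : ℝ, 0 ≤ c → v (c • y) = c ^ r * v y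

/-- Monotone valuation. -/
def MonotoneVal {m : ℕ} (v : (Fin m → ℝ) → ℝ) : Prop :=
  ∀ y z : Fin m → ℝ, Nonneg y → Nonneg z → (∀ j, y j ≤ z j) → v y ≤ v z

/-- Nonzero valuation. -/
def NonzeroVal {m : ℕ} (v : (Fin m → ℝ) → ℝ) : Prop :=
  ∃ y, Nonneg y ∧ 0 < v y

/-- Differentiability: all partial derivatives exist at every point of the
nonnegative orthant. -/
def DiffVal {m : ℕ} (v : (Fin m → ℝ) → ℝ) : Prop :=
  ∀ y : Fin m → ℝ, Nonneg y → ∀ j, ∃ d : ℝ,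
    HasDerivWithinAt (fun t => v (Function.update y j t)) d (Set.Ici 0) (y j)

theorem stmt1 {m : ℕ} (v : (Fin m → ℝ) → ℝ) (r ρ : ℝ)
    (hρ0 : 0 < ρ) (hρ1 : ρ ≤ 1)
    (hnz : NonzeroVal v) (hmono : MonotoneVal v) (hnorm : v 0 = 0)
    (hhom : Homog r v)
    (hconc : ConcaveOn ℝ {y : Fin m → ℝ | Nonneg y} v)
    (hdiff : DiffVal v)
    (q : Fin m → ℝ) (hq : ∀ j, 0 ≤ q j)
    (x : Fin m → ℝ)
    (hx : InDemand v (fun y => (∑ j, q j * y j) ^ (1 / ρ)) x) :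
    (∑ j, q j * x j) ^ (1 / ρ) = ρ * r * v x := by
  
  obtain ⟨hxpos, hmax⟩ := hx
  set S : ℝ := ∑ j, q j * x j with hS
  have hS0 : 0 ≤ S := Finset.sum_nonneg fun j _ => mul_nonneg (hq j) (hxpos j)
  set Q : ℝ := S ^ (1 / ρ) with hQ
  set A : ℝ := v x with hA
  -- value-minus-payment along the ray c ↦ c • x is maximized at c = 1
  have key : ∀ c : ℝ, 0 ≤ c → c ^ r * A - c ^ (1/ρ) * Q ≤ 1 ^ r * A - 1 ^ (1/ρ) * Q := by
    intro c hc
    have hcx : Nonneg (c • x) := fun j => mul_nonneg hc (hxpos j)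
    have h1 := hmax (c • x) hcx
    have hv : v (c • x) = c ^ r * A := hhom x hxpos c hc
    have hp : (∑ j, q j * (c • x) j) = c * S := by
      simp only [Pi.smul_apply, smul_eq_mul, hS, Finset.mul_sum]
      exact Finset.sum_congr rfl fun j _ => by ring
    have hp2 : (∑ j, q j * (c • x) j) ^ (1/ρ) = c ^ (1/ρ) * Q := by
      rw [hp, Real.mul_rpow hc hS0]
    simp only [hv, hp2, ← hS, ← hQ] at h1
    simpa using h1
  have hloc : IsLocalMax (fun c : ℝ => c ^ r * A - c ^ (1/ρ) * Q) 1 := by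
    have : Set.Ici (0:ℝ) ∈ nhds (1:ℝ) := Ici_mem_nhds one_pos
    filter_upwards [this] with c hc
    exact key c hc
  have hd : HasDerivAt (fun c : ℝ => c ^ r * A - c ^ (1/ρ) * Q) (r * A - (1/ρ) * Q) 1 := by
    have h1 : HasDerivAt (fun c : ℝ => c ^ r) (r * (1:ℝ) ^ (r - 1)) 1 :=
      Real.hasDerivAt_rpow_const (Or.inl one_ne_zero)
    have h2 : HasDerivAt (fun c : ℝ => c ^ (1/ρ)) ((1/ρ) * (1:ℝ) ^ (1/ρ - 1)) 1 :=
      Real.hasDerivAt_rpow_const (Or.inl one_ne_zero)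
    have h3 := (h1.mul_const A).sub (h2.mul_const Q)
    simp only [Real.one_rpow, mul_one] at h3
    exact h3
  have hz : r * A - (1/ρ) * Q = 0 := hloc.hasDerivAt_eq_zero hd
  have hρ : ρ ≠ 0 := ne_of_gt hρ0
  field_simp at hz
  show Q = ρ * r * A
  linarith
end

section
/- Let there be a single good (m = 1) and n agents with valuations v_i(x) = w_i·x^r for constants w_i > 0 and r ∈ (0,1]. Fix ρ ∈ (0,1] with rρ ≠ 1. Then a valid allocation x ∈ Ψ(ρ) if and only if each agent i receives x_i = w_i^{ρ/(1−rρ)} / ∑_{k=1}^n w_k^{ρ/(1−rρ)}. Moreover, if r = ρ = 1 and x ∈ Ψ(ρ), then x_i > 0 implies w_i = max_{k} w_k. -/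
open Real Finset

lemma bern {s t : ℝ} (hs0 : 0 < s) (hs1 : s < 1) (ht : 0 ≤ t) :
    t ^ s ≤ 1 - s + s * t ∧ (t ≠ 1 → t ^ s < 1 - s + s * t) := by
  have h1 : -1 ≤ t - 1 := by linarith
  constructor
  · have h := rpow_one_add_le_one_add_mul_self (s := t - 1) h1 hs0.le hs1.le
    simp only [add_sub_cancel] at h
    linarith
  · intro ht1
    have h := rpow_one_add_lt_one_add_mul_self (s := t - 1) h1
      (by intro h; apply ht1; linarith) hs0 hs1
    simp only [add_sub_cancel] at h
    linarith

lemma pointwise {s ρ A w y : ℝ} (hw : 0 < w) (hs0 : 0 < s) (hs1 : s < 1)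
    (hA : 0 < A) (hy : 0 ≤ y) :
    w ^ ρ * y ^ s ≤ A ^ (-s) * ((1 - s) * w ^ (ρ / (1 - s)) + s * A * y) ∧
    (y ≠ w ^ (ρ / (1 - s)) / A →
      w ^ ρ * y ^ s < A ^ (-s) * ((1 - s) * w ^ (ρ / (1 - s)) + s * A * y)) := by
  set c : ℝ := w ^ (ρ / (1 - s)) with hc_def
  have hc : 0 < c := Real.rpow_pos_of_pos hw _
  set xs : ℝ := c / A with hxs_def
  have hxs : 0 < xs := div_pos hc hA
  set t : ℝ := y / xs with ht_def
  have ht0 : 0 ≤ t := div_nonneg hy hxs.le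
  have hyt : y = xs * t := by rw [ht_def]; field_simp [hxs.ne']
  have h3 : w ^ ρ * c ^ s = c := by
    rw [hc_def, ← Real.rpow_mul hw.le, ← Real.rpow_add hw]
    have h1s : (1:ℝ) - s ≠ 0 := by linarith
    congr 1
    field_simp
    ring
  have key1 : w ^ ρ * y ^ s = c * A ^ (-s) * t ^ s := by
    calc w ^ ρ * y ^ s = w ^ ρ * (xs ^ s * t ^ s) := by
          rw [hyt, Real.mul_rpow hxs.le ht0]
      _ = (w ^ ρ * c ^ s) * A ^ (-s) * t ^ s := by
          rw [hxs_def, Real.div_rpow hc.le hA.le, Real.rpow_neg hA.le, div_eq_mul_inv]; ring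
      _ = c * A ^ (-s) * t ^ s := by rw [h3]
  have h4 : c * t = A * y := by
    rw [ht_def, hxs_def]
    field_simp
  have key2 : A ^ (-s) * ((1 - s) * c + s * A * y) = c * A ^ (-s) * (1 - s + s * t) := by
    have : c * (s * t) = s * (A * y) := by rw [← mul_assoc, mul_comm c s, mul_assoc, h4]
    linear_combination (-(A ^ (-s))) * this
  have hpos : 0 < c * A ^ (-s) := mul_pos hc (Real.rpow_pos_of_pos hA _)
  have hb := bern hs0 hs1 ht0
  constructor
  · rw [key1, key2]
    exact mul_le_mul_of_nonneg_left hb.1 hpos.le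
  · intro hne
    rw [key1, key2]
    refine (mul_lt_mul_iff_right₀ hpos).2 (hb.2 ?_)
    intro h1
    apply hne
    rw [hyt, h1, mul_one, hxs_def]

lemma Fstar {n : ℕ} (hn : 0 < n) (w : Fin n → ℝ) (hw : ∀ i, 0 < w i) {s ρ : ℝ}
    (hs0 : 0 < s) (hs1 : s < 1) :
    ∑ i, w i ^ ρ * (w i ^ (ρ / (1 - s)) / ∑ k, w k ^ (ρ / (1 - s))) ^ s
      = (∑ k, w k ^ (ρ / (1 - s))) ^ (1 - s) := by
  have : Nonempty (Fin n) := Fin.pos_iff_nonempty.mp hn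
  set A : ℝ := ∑ k, w k ^ (ρ / (1 - s)) with hA_def
  have hA : 0 < A := Finset.sum_pos (fun i _ => Real.rpow_pos_of_pos (hw i) _) univ_nonempty
  have h1s : (1:ℝ) - s ≠ 0 := by linarith
  have hterm : ∀ i, w i ^ ρ * (w i ^ (ρ / (1 - s)) / A) ^ s
      = w i ^ (ρ / (1 - s)) * A ^ (-s) := by
    intro i
    have hc : (0:ℝ) < w i ^ (ρ / (1 - s)) := Real.rpow_pos_of_pos (hw i) _
    rw [Real.div_rpow hc.le hA.le, Real.rpow_neg hA.le, div_eq_mul_inv, ← mul_assoc]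
    congr 1
    rw [← Real.rpow_mul (hw i).le, ← Real.rpow_add (hw i)]
    congr 1
    field_simp
    ring
  rw [Finset.sum_congr rfl (fun i _ => hterm i), ← Finset.sum_mul]
  rw [← hA_def]
  calc A * A ^ (-s) = A ^ (1:ℝ) * A ^ (-s) := by rw [Real.rpow_one]
    _ = A ^ (1 + -s) := (Real.rpow_add hA _ _).symm
    _ = A ^ (1 - s) := by ring_nf

lemma keysum {n : ℕ} (hn : 0 < n) (w : Fin n → ℝ) (hw : ∀ i, 0 < w i) {s ρ : ℝ}
    (hs0 : 0 < s) (hs1 : s < 1) (y : Fin n → ℝ) (hy : ∀ i, 0 ≤ y i) (hy1 : ∑ i, y i ≤ 1) :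
    (∑ i, w i ^ ρ * y i ^ s ≤ (∑ k, w k ^ (ρ / (1 - s))) ^ (1 - s)) ∧
    (∀ j, y j ≠ w j ^ (ρ / (1 - s)) / ∑ k, w k ^ (ρ / (1 - s)) →
      ∑ i, w i ^ ρ * y i ^ s < (∑ k, w k ^ (ρ / (1 - s))) ^ (1 - s)) := by
  have : Nonempty (Fin n) := Fin.pos_iff_nonempty.mp hn
  set A : ℝ := ∑ k, w k ^ (ρ / (1 - s)) with hA_def
  have hA : 0 < A := Finset.sum_pos (fun i _ => Real.rpow_pos_of_pos (hw i) _) univ_nonempty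
  have hsum : ∑ i, A ^ (-s) * ((1 - s) * w i ^ (ρ / (1 - s)) + s * A * y i)
      ≤ A ^ (1 - s) := by
    have he : ∑ i, A ^ (-s) * ((1 - s) * w i ^ (ρ / (1 - s)) + s * A * y i)
        = A ^ (-s) * ((1 - s) * A + s * A * ∑ i, y i) := by
      rw [← Finset.mul_sum, Finset.sum_add_distrib, ← Finset.mul_sum, ← Finset.mul_sum, hA_def]
    rw [he]
    have hAe : A ^ (1 - s) = A ^ (-s) * A := by
      calc A ^ (1-s) = A ^ (-s + 1) := by ring_nf
        _ = A ^ (-s) * A ^ (1:ℝ) := Real.rpow_add hA _ _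
        _ = A ^ (-s) * A := by rw [Real.rpow_one]
    rw [hAe]
    have hAn : (0:ℝ) ≤ A ^ (-s) := (Real.rpow_pos_of_pos hA _).le
    have : (1 - s) * A + s * A * ∑ i, y i ≤ A := by nlinarith [mul_pos hs0 hA]
    exact mul_le_mul_of_nonneg_left this hAn
  constructor
  · calc ∑ i, w i ^ ρ * y i ^ s
        ≤ ∑ i, A ^ (-s) * ((1 - s) * w i ^ (ρ / (1 - s)) + s * A * y i) :=
          Finset.sum_le_sum (fun i _ => (pointwise (hw i) hs0 hs1 hA (hy i)).1)
      _ ≤ A ^ (1 - s) := hsum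
  · intro j hj
    calc ∑ i, w i ^ ρ * y i ^ s
        < ∑ i, A ^ (-s) * ((1 - s) * w i ^ (ρ / (1 - s)) + s * A * y i) :=
          Finset.sum_lt_sum (fun i _ => (pointwise (hw i) hs0 hs1 hA (hy i)).1)
            ⟨j, Finset.mem_univ j, (pointwise (hw j) hs0 hs1 hA (hy j)).2 hj⟩
      _ ≤ A ^ (1 - s) := hsum




/-! Statement 4: closed form of the maximum CES welfare allocation for a
single good and valuations v_i(x) = w_i·x^r. -/

/-- A valid single-good allocation. -/
def Valid1 {n : ℕ} (x : Fin n → ℝ) : Prop := (∀ i, 0 ≤ x i) ∧ ∑ i, x i ≤ 1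

/-- Single-good CES welfare `Φ(ρ, x)`. -/
noncomputable def CES1 {n : ℕ} (v : Fin n → ℝ → ℝ) (ρ : ℝ) (x : Fin n → ℝ) : ℝ :=
  (∑ i, v i (x i) ^ ρ) ^ (1 / ρ)

/-- `x ∈ Ψ(ρ)` for a single good: valid allocation maximizing CES welfare. -/
def MaxCES1 {n : ℕ} (v : Fin n → ℝ → ℝ) (ρ : ℝ) (x : Fin n → ℝ) : Prop :=
  Valid1 x ∧ ∀ y, Valid1 y → CES1 v ρ y ≤ CES1 v ρ x

theorem stmt4 {n : ℕ} (w : Fin n → ℝ) (hw : ∀ i, 0 < w i) (r ρ : ℝ)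
    (hr0 : 0 < r) (hr1 : r ≤ 1) (hρ0 : 0 < ρ) (hρ1 : ρ ≤ 1)
    (v : Fin n → ℝ → ℝ) (hv : ∀ i t, v i t = w i * t ^ r)
    (x : Fin n → ℝ) (hx : Valid1 x) :
    (r * ρ ≠ 1 →
      (MaxCES1 v ρ x ↔
        ∀ i, x i = w i ^ (ρ / (1 - r * ρ)) / ∑ k, w k ^ (ρ / (1 - r * ρ)))) ∧
    (r = 1 → ρ = 1 → MaxCES1 v ρ x → ∀ i, 0 < x i → ∀ k, w k ≤ w i) := by
  constructor
  · intro hrρ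
    have hs0 : 0 < r * ρ := mul_pos hr0 hρ0
    have hs1 : r * ρ < 1 := lt_of_le_of_ne (mul_le_one₀ hr1 hρ0.le hρ1) hrρ
    rcases Nat.eq_zero_or_pos n with hn | hn
    · subst hn
      constructor
      · intro _ i
        exact i.elim0
      · intro _
        exact ⟨hx, fun y _ => le_of_eq (by simp [CES1])⟩
    -- n > 0
    have hne : Nonempty (Fin n) := Fin.pos_iff_nonempty.mp hn
    set A : ℝ := ∑ k, w k ^ (ρ / (1 - r * ρ)) with hA_def
    have hA : 0 < A := Finset.sum_pos (fun i _ => Real.rpow_pos_of_pos (hw i) _) univ_nonempty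
    set F : (Fin n → ℝ) → ℝ := fun y => ∑ i, w i ^ ρ * y i ^ (r * ρ) with hF_def
    have hFeq : ∀ y : Fin n → ℝ, Valid1 y → CES1 v ρ y = (F y) ^ (1/ρ) := by
      intro y hy
      unfold CES1
      congr 1
      refine Finset.sum_congr rfl (fun i _ => ?_)
      rw [hv, Real.mul_rpow (hw i).le (Real.rpow_nonneg (hy.1 i) r),
        ← Real.rpow_mul (hy.1 i)]
    have hFnn : ∀ y : Fin n → ℝ, Valid1 y → 0 ≤ F y := by
      intro y hy
      exact Finset.sum_nonneg fun i _ =>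
        mul_nonneg (Real.rpow_pos_of_pos (hw i) ρ).le (Real.rpow_nonneg (hy.1 i) _)
    have hCle : ∀ y z : Fin n → ℝ, Valid1 y → Valid1 z →
        (CES1 v ρ y ≤ CES1 v ρ z ↔ F y ≤ F z) := by
      intro y z hy hz
      rw [hFeq y hy, hFeq z hz]
      constructor
      · intro h
        have h2 := Real.rpow_le_rpow (Real.rpow_nonneg (hFnn y hy) _) h (le_of_lt hρ0)
        rwa [← Real.rpow_mul (hFnn y hy), ← Real.rpow_mul (hFnn z hz),
          one_div_mul_cancel hρ0.ne', Real.rpow_one, Real.rpow_one] at h2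
      · intro h
        exact Real.rpow_le_rpow (hFnn y hy) h (by positivity)
    have hxstar_valid : Valid1 (fun i => w i ^ (ρ / (1 - r * ρ)) / A) := by
      constructor
      · intro i
        exact div_nonneg (Real.rpow_pos_of_pos (hw i) _).le hA.le
      · rw [← Finset.sum_div, ← hA_def, div_self hA.ne']
    have hFxstar : F (fun i => w i ^ (ρ / (1 - r * ρ)) / A) = A ^ (1 - r * ρ) := by
      rw [hF_def]
      exact Fstar hn w hw hs0 hs1
    constructor
    · intro hmax i
      by_contra hnei
      have h1 := (hCle _ x hxstar_valid hx).1 (hmax.2 _ hxstar_valid)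
      rw [hFxstar] at h1
      have h2 := (keysum hn w hw hs0 hs1 x hx.1 hx.2).2 i hnei
      rw [← hA_def] at h2
      linarith
    · intro hxeq
      refine ⟨hx, fun y hy => ?_⟩
      rw [hCle y x hy hx]
      have hFx : F x = A ^ (1 - r * ρ) := by
        rw [← hFxstar, hF_def]
        exact Finset.sum_congr rfl fun i _ => by rw [hxeq i]
      rw [hFx]
      exact (keysum hn w hw hs0 hs1 y hy.1 hy.2).1.trans (le_of_eq (by rw [hA_def]))
  · intro hr hρ hmax i hxi k
    subst hr; subst hρ
    by_contra hlt
    push_neg at hlt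
    have hik : i ≠ k := fun h => by rw [h] at hlt; exact lt_irrefl _ hlt
    set y : Fin n → ℝ := fun j => x j + (if j = k then x i else 0) - (if j = i then x i else 0)
      with hy_def
    have hyv : Valid1 y := by
      constructor
      · intro j
        rw [hy_def]
        dsimp only
        by_cases hjk : j = k
        · have hji : ¬ j = i := fun h => hik (h ▸ hjk)
          rw [if_pos hjk, if_neg hji]
          have := hx.1 j
          linarith
        · by_cases hji : j = i
          · subst hji
            simp [hjk]
          · simp [hjk, hji, hx.1 j]
      · have : ∑ j, y j = ∑ j, x j := by
          rw [hy_def]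
          dsimp only
          rw [Finset.sum_sub_distrib, Finset.sum_add_distrib]
          simp [Finset.sum_ite_eq']
        rw [this]
        exact hx.2
    have hces : ∀ z : Fin n → ℝ, CES1 v 1 z = ∑ j, w j * z j := by
      intro z
      simp [CES1, hv, Real.rpow_one]
    have h1 := hmax.2 y hyv
    rw [hces, hces] at h1
    have h2 : ∑ j, w j * y j = (∑ j, w j * x j) + w k * x i - w i * x i := by
      rw [hy_def]
      dsimp only
      have : ∀ j, w j * (x j + (if j = k then x i else 0) - (if j = i then x i else 0))
          = w j * x j + (if j = k then w j * x i else 0) - (if j = i then w j * x i else 0) := by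
        intro j
        split_ifs <;> ring
      rw [Finset.sum_congr rfl (fun j _ => this j), Finset.sum_sub_distrib,
        Finset.sum_add_distrib]
      simp [Finset.sum_ite_eq']
    rw [h2] at h1
    nlinarith [mul_pos (sub_pos.mpr hlt) hxi]
end

section
/- Uniqueness of the truthful payment rule: let m = 1, r ∈ (0,1], ρ ∈ (0,1), α = ρ/(1−rρ), and fix positive bids b_{−i} of agents other than i. Define x_i(b) = b^α / (b^α + ∑_{k≠i} b_k^α) and p_i(b) = r·α·(∑_{k≠i} b_k^α) · ∫_0^{b} t^{rα} / (t^α + ∑_{k≠i} b_k^α)^{r+1} dt for b > 0. Suppose p̃ : ℝ_{>0} → ℝ_{≥0} is any payment function such that for every w > 0, w ∈ argmax_{b > 0} (w·x_i(b)^r − p̃(b)). Then there exists a constant c such that p̃(b) = p_i(b) + c for all b > 0. -/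
open Set

-- telescoping: sandwich forces constancy
private lemma stmt6_const (f h : ℝ → ℝ)
    (H : ∀ w t : ℝ, 0 < w → w ≤ t → |h t - h w| ≤ (t - w) * (f t - f w))
    (a c : ℝ) (ha : 0 < a) (hac : a ≤ c) : h c = h a := by
  have key : ∀ N : ℕ, 0 < N → |h c - h a| ≤ ((c - a) / N) * (f c - f a) := by
    intro N hN
    have hNne : (N:ℝ) ≠ 0 := by positivity
    set δ := (c - a) / N with hδ
    have hδ0 : 0 ≤ δ := div_nonneg (by linarith) (by positivity)
    set tk : ℕ → ℝ := fun k => a + k * δ with htk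
    have htk0 : tk 0 = a := by simp [htk]
    have htkN : tk N = c := by simp only [htk, hδ]; field_simp; ring
    have hpos : ∀ k : ℕ, 0 < tk k := by
      intro k
      have : 0 ≤ (k:ℝ) * δ := by positivity
      simp only [htk]; linarith
    have hstep : ∀ k : ℕ, tk (k+1) = tk k + δ := by
      intro k; simp only [htk]; push_cast; ring
    calc |h c - h a| = |∑ k ∈ Finset.range N, (h (tk (k+1)) - h (tk k))| := by
          rw [Finset.sum_range_sub (fun k => h (tk k)) N, htk0, htkN]
      _ ≤ ∑ k ∈ Finset.range N, |h (tk (k+1)) - h (tk k)| := Finset.abs_sum_le_sum_abs _ _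
      _ ≤ ∑ k ∈ Finset.range N, δ * (f (tk (k+1)) - f (tk k)) := by
          apply Finset.sum_le_sum
          intro k _
          have h1 := H (tk k) (tk (k+1)) (hpos k) (by rw [hstep]; linarith)
          have h2 : tk (k+1) - tk k = δ := by rw [hstep]; ring
          rw [h2] at h1; exact h1
      _ = δ * (f c - f a) := by
          rw [← Finset.mul_sum, Finset.sum_range_sub (fun k => f (tk k)) N, htk0, htkN]
  by_contra hne
  have habs : 0 < |h c - h a| := abs_pos.mpr (sub_ne_zero.mpr hne)
  set C := (c - a) * (f c - f a) with hC
  have hC0 : |h c - h a| ≤ C := by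
    have := key 1 one_pos; rw [hC]; simpa using this
  obtain ⟨N, hNgt⟩ := exists_nat_gt (C / |h c - h a|)
  have hCpos : 0 < C := lt_of_lt_of_le habs hC0
  have hN1 : 0 < N := by
    rcases Nat.eq_zero_or_pos N with h0 | h0
    · exfalso
      have hx : 0 < C / |h c - h a| := div_pos hCpos habs
      rw [h0] at hNgt
      have hy : C / |h c - h a| < 0 := by exact_mod_cast hNgt
      linarith
    · exact h0
  have hk := key N hN1
  have hNpos : (0:ℝ) < N := by exact_mod_cast hN1
  have h2 : |h c - h a| * N ≤ C := by
    calc |h c - h a| * N ≤ ((c-a)/N * (f c - f a)) * N := by nlinarith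
      _ = C := by field_simp [hC]; exact hC.symm
  have h3 : (N:ℝ) ≤ C / |h c - h a| := by rw [le_div_iff₀ habs]; linarith
  linarith

private lemma stmt6_cont (r α S : ℝ) (hr : 0 < r) (hα : 0 < α) (hS : 0 < S) :
    ContinuousOn (fun s : ℝ => s ^ (r*α) / (s ^ α + S) ^ (r+1)) (Set.Ici 0) := by
  intro s hs
  have hs0 : (0:ℝ) ≤ s := hs
  have hden : s ^ α + S ≠ 0 := by
    have : 0 ≤ s ^ α := Real.rpow_nonneg hs0 α
    linarith
  have h1 : ContinuousAt (fun u : ℝ => u ^ (r*α)) s :=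
    Real.continuousAt_rpow_const s _ (Or.inr (by positivity))
  have h2 : ContinuousAt (fun u : ℝ => u ^ α) s :=
    Real.continuousAt_rpow_const s _ (Or.inr hα.le)
  have h3 : ContinuousAt (fun u : ℝ => (u ^ α + S) ^ (r+1)) s :=
    ContinuousAt.rpow_const (h2.add continuousAt_const) (Or.inl hden)
  have h4 : (fun u : ℝ => (u ^ α + S) ^ (r+1)) s ≠ 0 := by
    simp only
    have : 0 < s ^ α + S := by
      have : 0 ≤ s ^ α := Real.rpow_nonneg hs0 α
      linarith
    exact (Real.rpow_pos_of_pos this _).ne'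
  exact (h1.div h3 h4).continuousWithinAt

private lemma stmt6_deriv (r α S : ℝ) (hr : 0 < r) (hα : 0 < α) (hS : 0 < S)
    (s : ℝ) (hs : 0 < s) :
    HasDerivAt (fun u : ℝ => (u ^ α / (u ^ α + S)) ^ r)
      (r * α * S * s ^ (r * α) / (s ^ α + S) ^ (r+1) / s) s := by
  have hP : 0 < s ^ α := Real.rpow_pos_of_pos hs α
  have hT : 0 < s ^ α + S := by linarith
  have hq : 0 < s ^ α / (s ^ α + S) := div_pos hP hT
  have hu : HasDerivAt (fun u : ℝ => u ^ α) (α * s ^ (α-1)) s :=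
    Real.hasDerivAt_rpow_const (Or.inl hs.ne')
  have hd : HasDerivAt (fun u : ℝ => u ^ α + S) (α * s ^ (α-1)) s := hu.add_const S
  have hq' : HasDerivAt (fun u : ℝ => u ^ α / (u ^ α + S))
      ((α * s ^ (α-1) * (s ^ α + S) - s ^ α * (α * s ^ (α-1))) / (s ^ α + S) ^ 2) s :=
    hu.div hd hT.ne'
  have hF := hq'.rpow_const (p := r) (Or.inl hq.ne')
  convert hF using 1
  -- algebraic identity
  have e1 : (s ^ α / (s ^ α + S)) ^ (r-1) = s ^ (α*(r-1)) / (s ^ α + S) ^ (r-1) := by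
    rw [Real.div_rpow hP.le hT.le, ← Real.rpow_mul hs.le]
  have e2 : s ^ (α-1) * s ^ (α*(r-1)) * s = s ^ (r*α) := by
    rw [← Real.rpow_add hs, ← Real.rpow_add_one hs.ne']
    congr 1; ring
  have e3 : (s ^ α + S) ^ (r-1) * (s ^ α + S) ^ 2 = (s ^ α + S) ^ (r+1) := by
    rw [show ((s ^ α + S) ^ 2 : ℝ) = (s ^ α + S) ^ (2:ℝ) by
          rw [← Real.rpow_natCast (s ^ α + S) 2]; norm_num,
        ← Real.rpow_add hT]
    congr 1; ring
  have hTr1 : (s ^ α + S) ^ (r-1) ≠ 0 := (Real.rpow_pos_of_pos hT _).ne'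
  have hTr2 : ((s ^ α + S) ^ 2 : ℝ) ≠ 0 := by positivity
  have hTr3 : (s ^ α + S) ^ (r+1) ≠ 0 := (Real.rpow_pos_of_pos hT _).ne'
  rw [e1]
  field_simp
  linear_combination (S*s^(r*α)) * e3 - (S*(s^α+S)^(r+1)) * e2

example : True := trivial

private lemma stmt6_psw (r α S : ℝ) (hr : 0 < r) (hα : 0 < α) (hS : 0 < S)
    (w t : ℝ) (hw : 0 < w) (hwt : w ≤ t) :
    w * ((t^α/(t^α+S))^r - (w^α/(w^α+S))^r) ≤ r*α*S * ∫ s in w..t, s^(r*α)/(s^α+S)^(r+1)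
    ∧ r*α*S * (∫ s in w..t, s^(r*α)/(s^α+S)^(r+1)) ≤ t * ((t^α/(t^α+S))^r - (w^α/(w^α+S))^r) := by
  set F : ℝ → ℝ := fun u => (u^α/(u^α+S))^r with hF
  set D : ℝ → ℝ := fun s => r*α*S * s^(r*α)/(s^α+S)^(r+1)/s with hD
  have hIccpos : ∀ s ∈ Set.uIcc w t, 0 < s := by
    intro s hs; rw [Set.uIcc_of_le hwt] at hs; exact lt_of_lt_of_le hw hs.1
  have hsub : Set.uIcc w t ⊆ Set.Ici (0:ℝ) := fun s hs => (hIccpos s hs).le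
  have hφcont : ContinuousOn (fun s : ℝ => s^(r*α)/(s^α+S)^(r+1)) (Set.uIcc w t) :=
    (stmt6_cont r α S hr hα hS).mono hsub
  have hφint : IntervalIntegrable (fun s : ℝ => s^(r*α)/(s^α+S)^(r+1))
      MeasureTheory.volume w t := hφcont.intervalIntegrable
  have hDcont : ContinuousOn D (Set.uIcc w t) := by
    have c1 : ContinuousOn (fun s : ℝ => r*α*S * (s^(r*α)/(s^α+S)^(r+1)))
        (Set.uIcc w t) := continuousOn_const.mul hφcont
    have : ContinuousOn (fun s : ℝ => r*α*S * (s^(r*α)/(s^α+S)^(r+1)) / s)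
        (Set.uIcc w t) := c1.div continuousOn_id (fun s hs => (hIccpos s hs).ne')
    apply this.congr
    intro s hs
    simp only [hD]; ring
  have hDint : IntervalIntegrable D MeasureTheory.volume w t := hDcont.intervalIntegrable
  have hderiv : ∀ s ∈ Set.uIcc w t, HasDerivAt F (D s) s :=
    fun s hs => stmt6_deriv r α S hr hα hS s (hIccpos s hs)
  have hFTC : (∫ s in w..t, D s) = F t - F w :=
    intervalIntegral.integral_eq_sub_of_hasDerivAt hderiv hDint
  have hDnn : ∀ s : ℝ, 0 < s → 0 ≤ D s := by
    intro s hs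
    have h1 : 0 < s^(r*α) := Real.rpow_pos_of_pos hs _
    have h2 : 0 < s^α + S := by
      have := Real.rpow_pos_of_pos hs α; linarith
    have h3 : 0 < (s^α+S)^(r+1) := Real.rpow_pos_of_pos h2 _
    rw [hD]
    positivity
  have hkey : ∀ s : ℝ, 0 < s → s * D s = r*α*S * (s^(r*α)/(s^α+S)^(r+1)) := by
    intro s hs
    rw [hD]
    field_simp
  have hint2 : IntervalIntegrable (fun s : ℝ => r*α*S * (s^(r*α)/(s^α+S)^(r+1)))
      MeasureTheory.volume w t := by
    apply (continuousOn_const.mul hφcont).intervalIntegrable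
  constructor
  · have hmono : (∫ s in w..t, w * D s) ≤ ∫ s in w..t, r*α*S * (s^(r*α)/(s^α+S)^(r+1)) := by
      apply intervalIntegral.integral_mono_on hwt (hDint.const_mul w) hint2
      intro s hs
      have hs0 : 0 < s := lt_of_lt_of_le hw hs.1
      rw [← hkey s hs0]
      exact mul_le_mul_of_nonneg_right hs.1 (hDnn s hs0)
    rw [intervalIntegral.integral_const_mul, intervalIntegral.integral_const_mul, hFTC] at hmono
    simpa [hF] using hmono
  · have hmono : (∫ s in w..t, r*α*S * (s^(r*α)/(s^α+S)^(r+1))) ≤ ∫ s in w..t, t * D s := by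
      apply intervalIntegral.integral_mono_on hwt hint2 (hDint.const_mul t)
      intro s hs
      have hs0 : 0 < s := lt_of_lt_of_le hw hs.1
      rw [← hkey s hs0]
      exact mul_le_mul_of_nonneg_right hs.2 (hDnn s hs0)
    rw [intervalIntegral.integral_const_mul, intervalIntegral.integral_const_mul, hFTC] at hmono
    simpa [hF] using hmono

theorem stmt6 {n : ℕ} (r ρ α : ℝ) (hr0 : 0 < r) (hr1 : r ≤ 1)
    (hρ0 : 0 < ρ) (hρ1 : ρ < 1) (hα : α = ρ / (1 - r * ρ))
    (i : Fin n) (b : Fin n → ℝ) (hb : ∀ k, k ≠ i → 0 < b k)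
    (S : ℝ) (hS : S = ∑ k ∈ Finset.univ.erase i, b k ^ α)
    (x : ℝ → ℝ) (hx : ∀ t : ℝ, x t = t ^ α / (t ^ α + S))
    (p : ℝ → ℝ)
    (hp : ∀ t : ℝ, p t = r * α * S * ∫ s in (0:ℝ)..t, s ^ (r * α) / (s ^ α + S) ^ (r + 1))
    (ptil : ℝ → ℝ) (hnn : ∀ t : ℝ, 0 < t → 0 ≤ ptil t)
    (htruth : ∀ w : ℝ, 0 < w → ∀ t : ℝ, 0 < t →
      w * x t ^ r - ptil t ≤ w * x w ^ r - ptil w) :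
    ∃ c : ℝ, ∀ t : ℝ, 0 < t → ptil t = p t + c := by
  have hα0 : 0 < α := by
    rw [hα]; apply div_pos hρ0; nlinarith
  have hS0 : 0 ≤ S := by
    rw [hS]
    apply Finset.sum_nonneg
    intro k hk
    exact (Real.rpow_pos_of_pos (hb k (Finset.mem_erase.mp hk).1) α).le
  set f : ℝ → ℝ := fun u => x u ^ r with hf
  set g : ℝ → ℝ := fun u => ptil u - p u with hg
  have Hptil : ∀ w t : ℝ, 0 < w → w ≤ t →
      w * (f t - f w) ≤ ptil t - ptil w ∧ ptil t - ptil w ≤ t * (f t - f w) := by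
    intro w t hw hwt
    have ht : 0 < t := lt_of_lt_of_le hw hwt
    have h1 := htruth w hw t ht
    have h2 := htruth t ht w hw
    constructor
    · simp only [hf]; nlinarith
    · simp only [hf]; nlinarith
  have Hp : ∀ w t : ℝ, 0 < w → w ≤ t →
      w * (f t - f w) ≤ p t - p w ∧ p t - p w ≤ t * (f t - f w) := by
    intro w t hw hwt
    have ht : 0 < t := lt_of_lt_of_le hw hwt
    rcases hS0.eq_or_lt with hSz | hSpos
    · have hfu : ∀ u : ℝ, 0 < u → f u = 1 := by
        intro u hu
        simp only [hf, hx, ← hSz, add_zero,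
          div_self (Real.rpow_pos_of_pos hu α).ne', Real.one_rpow]
      have hpu : ∀ u : ℝ, p u = 0 := by
        intro u; rw [hp, ← hSz]; ring
      rw [hfu w hw, hfu t ht, hpu, hpu]
      norm_num
    · have hps := stmt6_psw r α S hr0 hα0 hSpos w t hw hwt
      have hi0t : IntervalIntegrable (fun s : ℝ => s^(r*α)/(s^α+S)^(r+1))
          MeasureTheory.volume 0 t := by
        apply ((stmt6_cont r α S hr0 hα0 hSpos).mono _).intervalIntegrable
        rw [Set.uIcc_of_le ht.le]
        exact Set.Icc_subset_Ici_self
      have hi0w : IntervalIntegrable (fun s : ℝ => s^(r*α)/(s^α+S)^(r+1))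
          MeasureTheory.volume 0 w := by
        apply ((stmt6_cont r α S hr0 hα0 hSpos).mono _).intervalIntegrable
        rw [Set.uIcc_of_le hw.le]
        exact Set.Icc_subset_Ici_self
      have hsubint : p t - p w = r*α*S * ∫ s in w..t, s^(r*α)/(s^α+S)^(r+1) := by
        rw [hp, hp, ← mul_sub, intervalIntegral.integral_interval_sub_left hi0t hi0w]
      simp only [hf, hx]
      rw [hsubint]
      exact hps
  have H : ∀ w t : ℝ, 0 < w → w ≤ t → |g t - g w| ≤ (t - w) * (f t - f w) := by
    intro w t hw hwt
    obtain ⟨a1, a2⟩ := Hptil w t hw hwt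
    obtain ⟨b1, b2⟩ := Hp w t hw hwt
    have hexp : (t - w) * (f t - f w) = t * (f t - f w) - w * (f t - f w) := by ring
    rw [abs_le]
    constructor
    · simp only [hg]; linarith
    · simp only [hg]; linarith
  refine ⟨ptil 1 - p 1, ?_⟩
  intro t ht
  rcases le_total t 1 with h1 | h1
  · have := stmt6_const f g H t 1 ht h1
    simp only [hg] at this; linarith
  · have := stmt6_const f g H 1 t one_pos h1
    simp only [hg] at this; linarith
end

section
/- Assume each valuation v_i is concave, differentiable, and homogeneous of degree 1, let ρ ∈ (0,1], let κ > 0 be the identity-creation cost, define the pricing rule p(y) = ρ·(∑_j q_j y_j)^{1/ρ} with q_1,…,q_m the constants for which Theorem main holds (so that (x,p) is a WE for x ∈ Ψ(ρ)), and let x ∈ Ψ(ρ). Then for each agent i: if v_i(x_i)·(1−ρ) ≤ κ, then (x_i, 1) belongs to agent i's Sybil demand set D_i(p); and if v_i(x_i)·(1−ρ) > κ, then the Sybil demand set D_i(p) is empty. -/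
/-- A valid allocation. -/
def ValidAlloc {n m : ℕ} (x : Fin n → Fin m → ℝ) : Prop :=
  (∀ i, Nonneg (x i)) ∧ ∀ j, ∑ i, x i j ≤ 1

/-- Good `j` has nonzero cost under pricing rule `p`. -/
def NonzeroCost {m : ℕ} (p : (Fin m → ℝ) → ℝ) (j : Fin m) : Prop :=
  ∃ y : Fin m → ℝ, Nonneg y ∧ (∀ l, l ≠ j → y l = 0) ∧ 0 < p y

/-- `(x, p)` is a Walrasian equilibrium. -/
def IsWE {n m : ℕ} (v : Fin n → (Fin m → ℝ) → ℝ) (p : (Fin m → ℝ) → ℝ)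
    (x : Fin n → Fin m → ℝ) : Prop :=
  (∀ i, InDemand (v i) p (x i)) ∧ ValidAlloc x ∧
    ∀ j, NonzeroCost p j → ∑ i, x i j = 1

/-- CES welfare `Φ(ρ, x)`. -/
noncomputable def CES {n m : ℕ} (v : Fin n → (Fin m → ℝ) → ℝ) (ρ : ℝ)
    (x : Fin n → Fin m → ℝ) : ℝ :=
  (∑ i, v i (x i) ^ ρ) ^ (1 / ρ)

/-- `x ∈ Ψ(ρ)`. -/
def MaxCES {n m : ℕ} (v : Fin n → (Fin m → ℝ) → ℝ) (ρ : ℝ)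
    (x : Fin n → Fin m → ℝ) : Prop :=
  ValidAlloc x ∧ ∀ y, ValidAlloc y → CES v ρ y ≤ CES v ρ x

/-- Sybil utility for purchasing bundle `y` with each of `η` identities,
with identity-creation cost `κ`. -/
def SybilU {m : ℕ} (v p : (Fin m → ℝ) → ℝ) (κ : ℝ) (y : Fin m → ℝ) (η : ℕ) : ℝ :=
  v ((η : ℝ) • y) - (η : ℝ) * p y - (η : ℝ) * κ

/-- `(y, η)` is in the Sybil demand set. -/
def InSybilDemand {m : ℕ} (v p : (Fin m → ℝ) → ℝ) (κ : ℝ)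
    (y : Fin m → ℝ) (η : ℕ) : Prop :=
  Nonneg y ∧ 1 ≤ η ∧ ∀ (z : Fin m → ℝ) (μ : ℕ), Nonneg z → 1 ≤ μ →
    SybilU v p κ z μ ≤ SybilU v p κ y η

theorem stmt7 {n m : ℕ} (v : Fin n → (Fin m → ℝ) → ℝ) (ρ κ : ℝ)
    (hρ0 : 0 < ρ) (hρ1 : ρ ≤ 1) (hκ : 0 < κ)
    (hnz : ∀ i, NonzeroVal (v i)) (hmono : ∀ i, MonotoneVal (v i))
    (hnorm : ∀ i, v i 0 = 0)
    (hhom : ∀ i, Homog 1 (v i))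
    (hconc : ∀ i, ConcaveOn ℝ {y : Fin m → ℝ | Nonneg y} (v i))
    (hdiff : ∀ i, DiffVal (v i))
    (q : Fin m → ℝ) (hq : ∀ j, 0 ≤ q j)
    (p : (Fin m → ℝ) → ℝ) (hp : ∀ y, p y = ρ * (∑ j, q j * y j) ^ (1 / ρ))
    (x : Fin n → Fin m → ℝ) (hmax : MaxCES v ρ x) (hwe : IsWE v p x) :
    ∀ i,
      (v i (x i) * (1 - ρ) ≤ κ → InSybilDemand (v i) p κ (x i) 1) ∧
      (κ < v i (x i) * (1 - ρ) →
        ∀ (y : Fin m → ℝ) (η : ℕ), ¬ InSybilDemand (v i) p κ y η) := by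

  classical
  intro i
  obtain ⟨hdem, hvalid, _⟩ := hwe
  have hxi := hdem i
  have hxnn : Nonneg (x i) := hxi.1
  set V := v i (x i) with hVdef
  set A := ∑ j, q j * x i j with hAdef
  have hA : 0 ≤ A := Finset.sum_nonneg fun j _ => mul_nonneg (hq j) (hxnn j)
  have hρne : ρ ≠ 0 := ne_of_gt hρ0
  have h0nn : Nonneg (0 : Fin m → ℝ) := fun j => le_refl 0
  have hV0 : 0 ≤ V := by
    have := hmono i 0 (x i) h0nn hxnn (fun j => hxnn j)
    rw [hnorm i] at this
    exact this
  -- p(x i) = ρ * A^(1/ρ)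
  have hPx : p (x i) = ρ * A ^ (1/ρ) := hp (x i)
  -- scaling computation
  have hsum : ∀ t : ℝ, (∑ j, q j * (t • x i) j) = t * A := by
    intro t
    rw [hAdef, Finset.mul_sum]
    exact Finset.sum_congr rfl fun j _ => by
      simp [Pi.smul_apply, smul_eq_mul]; ring
  have hpt : ∀ t : ℝ, 0 ≤ t → p (t • x i) = t ^ (1/ρ) * (ρ * A ^ (1/ρ)) := by
    intro t ht
    rw [hp, hsum, Real.mul_rpow ht hA]; ring
  have hvt : ∀ t : ℝ, 0 ≤ t → v i (t • x i) = t * V := by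
    intro t ht
    have := hhom i (x i) hxnn t ht
    rwa [Real.rpow_one] at this
  -- the scaled bundle is dominated
  have hbound : ∀ t : ℝ, 0 ≤ t →
      t * V - t ^ (1/ρ) * (ρ * A ^ (1/ρ)) ≤ V - ρ * A ^ (1/ρ) := by
    intro t ht
    have htnn : Nonneg (t • x i) := fun j => mul_nonneg ht (hxnn j)
    have := hxi.2 (t • x i) htnn
    rwa [hvt t ht, hpt t ht, hPx] at this
  -- first-order condition at t = 1 gives V = A^(1/ρ)
  have hVA : V = A ^ (1/ρ) := by
    have hloc : IsLocalMax (fun t : ℝ => t * V - t ^ (1/ρ) * (ρ * A ^ (1/ρ))) 1 := by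
      refine Filter.eventually_of_mem (Ici_mem_nhds (zero_lt_one)) ?_
      intro t ht
      have h1 : (1:ℝ) ^ (1/ρ) = 1 := Real.one_rpow _
      simpa [h1] using hbound t ht
    have hd1 : HasDerivAt (fun t : ℝ => t * V) V 1 := by
      simpa using (hasDerivAt_id (1:ℝ)).mul_const V
    have hd2 : HasDerivAt (fun t : ℝ => t ^ (1/ρ) * (ρ * A ^ (1/ρ)))
        ((1/ρ) * (ρ * A ^ (1/ρ))) 1 := by
      have := (Real.hasDerivAt_rpow_const (x := (1:ℝ)) (p := 1/ρ)
        (Or.inl one_ne_zero)).mul_const (ρ * A ^ (1/ρ))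
      simpa using this
    have hzero := hloc.hasDerivAt_eq_zero (hd1.sub hd2)
    have : V - (1/ρ) * (ρ * A ^ (1/ρ)) = 0 := hzero
    field_simp at this
    nlinarith [this]
  have hP : p (x i) = ρ * V := by rw [hPx, hVA]
  -- demand bound
  have hDem : ∀ z, Nonneg z → v i z - p z ≤ V - ρ * V := by
    intro z hz
    have := hxi.2 z hz
    rwa [hP] at this
  -- sybil utility formula
  have hSyb : ∀ (z : Fin m → ℝ) (μ : ℕ), Nonneg z →
      SybilU (v i) p κ z μ = (μ : ℝ) * (v i z - p z - κ) := by
    intro z μ hz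
    have := hhom i z hz (μ : ℝ) (Nat.cast_nonneg μ)
    rw [Real.rpow_one] at this
    unfold SybilU
    rw [this]; ring
  have hS1 : SybilU (v i) p κ (x i) 1 = V - ρ * V - κ := by
    rw [hSyb (x i) 1 hxnn, hP]; push_cast; ring
  constructor
  · intro hle
    have hUκ : V - ρ * V - κ ≤ 0 := by nlinarith
    refine ⟨hxnn, le_refl 1, ?_⟩
    intro z μ hz hμ
    rw [hSyb z μ hz, hS1]
    have hμ1 : (1:ℝ) ≤ (μ:ℝ) := by exact_mod_cast hμ
    have ha : v i z - p z - κ ≤ V - ρ * V - κ := by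
      have := hDem z hz; linarith
    nlinarith
  · intro hgt y η hcon
    obtain ⟨hy, hη, hopt⟩ := hcon
    set B := SybilU (v i) p κ y η with hBdef
    have hd : 0 < V - ρ * V - κ := by nlinarith
    obtain ⟨N, hN⟩ := exists_nat_gt (B / (V - ρ * V - κ))
    have hμ1 : 1 ≤ N + 1 := Nat.le_add_left 1 N
    have hle := hopt (x i) (N + 1) hxnn hμ1
    rw [hSyb (x i) (N + 1) hxnn, hP] at hle
    have hcast : (B / (V - ρ * V - κ)) < ((N:ℝ) + 1) := by
      have : (N:ℝ) < (N:ℝ) + 1 := by linarith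
      linarith
    have : B < ((N:ℝ) + 1) * (V - ρ * V - κ) := by
      rw [div_lt_iff₀ hd] at hcast; linarith
    push_cast at hle
    nlinarith
end

section
/- Assume each valuation v_i is concave, differentiable, and homogeneous of degree 1, let ρ ∈ (0,1], let κ > 0 be the identity-creation cost, let x ∈ Ψ(ρ), and define the pricing rule p(y) = ρ·(∑_j q_j y_j)^{1/ρ} with q_1,…,q_m the constants for which Theorem main holds (so that (x,p) is a WE). If v_i(x_i)·(1−ρ) ≤ κ for every agent i, then (x, p, 1) — where every agent uses exactly one identity — is a Sybil Walrasian equilibrium. -/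
/-- `(x, p, η)` is a Sybil Walrasian equilibrium, where the goods with nonzero
cost are those with `q j > 0`. -/
def IsSWE {n m : ℕ} (v : Fin n → (Fin m → ℝ) → ℝ) (p : (Fin m → ℝ) → ℝ) (κ : ℝ)
    (x : Fin n → Fin m → ℝ) (η : Fin n → ℕ) (q : Fin m → ℝ) : Prop :=
  (∀ i, InSybilDemand (v i) p κ (x i) (η i)) ∧ (∀ i, Nonneg (x i)) ∧
    (∀ j, ∑ i, x i j ≤ 1) ∧ ∀ j, 0 < q j → ∑ i, x i j = 1

theorem stmt8 {n m : ℕ} (v : Fin n → (Fin m → ℝ) → ℝ) (ρ κ : ℝ)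
    (hρ0 : 0 < ρ) (hρ1 : ρ ≤ 1) (hκ : 0 < κ)
    (hnz : ∀ i, NonzeroVal (v i)) (hmono : ∀ i, MonotoneVal (v i))
    (hnorm : ∀ i, v i 0 = 0)
    (hhom : ∀ i, Homog 1 (v i))
    (hconc : ∀ i, ConcaveOn ℝ {y : Fin m → ℝ | Nonneg y} (v i))
    (hdiff : ∀ i, DiffVal (v i))
    (q : Fin m → ℝ) (hq : ∀ j, 0 ≤ q j)
    (p : (Fin m → ℝ) → ℝ) (hp : ∀ y, p y = ρ * (∑ j, q j * y j) ^ (1 / ρ))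
    (x : Fin n → Fin m → ℝ) (hmax : MaxCES v ρ x) (hwe : IsWE v p x)
    (hsmall : ∀ i, v i (x i) * (1 - ρ) ≤ κ) :
    IsSWE v p κ x (fun _ => 1) q := by
  obtain ⟨hdem, ⟨hxnn, hsupply⟩, hmkt⟩ := hwe
  -- Key: for each i, p (x i) = ρ * v i (x i)
  have key : ∀ i, p (x i) = ρ * v i (x i) := by
    intro i
    set V := v i (x i) with hV
    set S := ∑ j, q j * x i j with hS
    have hS0 : 0 ≤ S := Finset.sum_nonneg fun j _ => mul_nonneg (hq j) (hxnn i j)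
    have hPx : p (x i) = ρ * S ^ (1 / ρ) := hp (x i)
    have hscale : ∀ c : ℝ, 0 ≤ c → p (c • x i) = c ^ (1 / ρ) * p (x i) := by
      intro c hc
      rw [hp, hPx]
      have : ∑ j, q j * (c • x i) j = c * S := by
        rw [hS, Finset.mul_sum]
        congr 1; funext j; simp [Pi.smul_apply]; ring
      rw [this, Real.mul_rpow hc hS0]; ring
    have hf : ∀ c : ℝ, 0 ≤ c → c * V - c ^ (1 / ρ) * p (x i) ≤ V - p (x i) := by
      intro c hc
      have hnn : Nonneg (c • x i) := fun j => mul_nonneg hc (hxnn i j)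
      have := (hdem i).2 (c • x i) hnn
      have hv : v i (c • x i) = c * V := by
        have := hhom i (x i) (hxnn i) c hc
        simpa [Real.rpow_one] using this
      rw [hv, hscale c hc] at this
      exact this
    -- local max of f at 1
    set f : ℝ → ℝ := fun c => c * V - c ^ (1 / ρ) * p (x i) with hfdef
    have hd : HasDerivAt f (V - (1 / ρ) * p (x i)) 1 := by
      have h1 : HasDerivAt (fun c : ℝ => c * V) V 1 := by
        simpa using (hasDerivAt_id (1 : ℝ)).mul_const V
      have h2 : HasDerivAt (fun c : ℝ => c ^ (1 / ρ) * p (x i))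
          ((1 / ρ) * p (x i)) 1 := by
        have := (Real.hasDerivAt_rpow_const (x := (1 : ℝ)) (p := 1 / ρ)
          (Or.inl one_ne_zero)).mul_const (p (x i))
        simpa [Real.one_rpow] using this
      exact h1.sub h2
    have hmaxf : IsLocalMax f 1 := by
      have hmem : Set.Ici (0 : ℝ) ∈ nhds (1 : ℝ) :=
        Ici_mem_nhds (by norm_num)
      filter_upwards [hmem] with c hc
      have := hf c hc
      simpa [hfdef, Real.one_rpow] using this
    have hzero : V - (1 / ρ) * p (x i) = 0 := hmaxf.hasDerivAt_eq_zero hd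
    have hρne : ρ ≠ 0 := ne_of_gt hρ0
    field_simp at hzero
    linarith
  refine ⟨?_, hxnn, hsupply, ?_⟩
  · -- Sybil demand
    intro i
    refine ⟨hxnn i, le_refl 1, ?_⟩
    intro z μ hz hμ
    have hA : v i (x i) - p (x i) ≤ κ := by
      have := hsmall i
      rw [key i]; linarith
    have hU1 : SybilU (v i) p κ (x i) 1 = v i (x i) - p (x i) - κ := by
      simp [SybilU]
    have hμR : (1 : ℝ) ≤ (μ : ℝ) := by exact_mod_cast hμ
    have hvz : v i ((μ : ℝ) • z) = (μ : ℝ) * v i z := by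
      have := hhom i z hz (μ : ℝ) (by positivity)
      simpa [Real.rpow_one] using this
    have hdz : v i z - p z ≤ v i (x i) - p (x i) := (hdem i).2 z hz
    rw [hU1]
    show v i ((μ:ℝ) • z) - (μ:ℝ) * p z - (μ:ℝ) * κ ≤ v i (x i) - p (x i) - κ
    rw [hvz]
    nlinarith [hμR, hdz, hA]
  · -- market clearing for goods with positive q
    intro j hqj
    apply hmkt j
    refine ⟨fun l => if l = j then 1 else 0, ?_, ?_, ?_⟩
    · intro l; by_cases h : l = j <;> simp [h]
    · intro l hl; simp [hl]
    · rw [hp]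
      have hsum : ∑ l, q l * (if l = j then 1 else 0) = q j := by
        simp [mul_ite]
      rw [hsum]
      exact mul_pos hρ0 (Real.rpow_pos_of_pos hqj _)
end

section
/- Assume each valuation v_i is concave, differentiable, and homogeneous of degree 1, let ρ ∈ (0,1), let κ > 0 be the identity-creation cost, and define the pricing rule p(y) = ρ·(∑_j q_j y_j)^{1/ρ} for constants q_1,…,q_m ∈ ℝ_{≥0} as in Theorem main. Then for any allocation x and multiplicities η such that (x, p, η) is a Sybil Walrasian equilibrium, every agent i satisfies v_i(x_i) ≤ κ/(1−ρ). -/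
theorem stmt9 {n m : ℕ} (v : Fin n → (Fin m → ℝ) → ℝ) (ρ κ : ℝ)
    (hρ0 : 0 < ρ) (hρ1 : ρ < 1) (hκ : 0 < κ)
    (hnz : ∀ i, NonzeroVal (v i)) (hmono : ∀ i, MonotoneVal (v i))
    (hnorm : ∀ i, v i 0 = 0)
    (hhom : ∀ i, Homog 1 (v i))
    (hconc : ∀ i, ConcaveOn ℝ {y : Fin m → ℝ | Nonneg y} (v i))
    (hdiff : ∀ i, DiffVal (v i))
    (q : Fin m → ℝ) (hq : ∀ j, 0 ≤ q j)
    (p : (Fin m → ℝ) → ℝ) (hp : ∀ y, p y = ρ * (∑ j, q j * y j) ^ (1 / ρ))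
    -- q are "as in Theorem main": (x₀, p) is a WE for some x₀ ∈ Ψ(ρ)
    (x₀ : Fin n → Fin m → ℝ) (hmax : MaxCES v ρ x₀) (hwe : IsWE v p x₀) :
    ∀ (x : Fin n → Fin m → ℝ) (η : Fin n → ℕ), IsSWE v p κ x η q →
      ∀ i, v i (x i) ≤ κ / (1 - ρ) := by
  intro x η hswe i
  obtain ⟨hdem, hxnn, -, -⟩ := hswe
  obtain ⟨hxi, hηi, hopt⟩ := hdem i
  set V : ℝ := v i (x i) with hV
  set S : ℝ := ∑ j, q j * x i j with hS
  have hS0 : 0 ≤ S := Finset.sum_nonneg fun j _ => mul_nonneg (hq j) (hxi j)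
  set W : ℝ := S ^ (1/ρ) with hW
  have hW0 : 0 ≤ W := Real.rpow_nonneg hS0 _
  have hη1 : (1:ℝ) ≤ (η i : ℝ) := by exact_mod_cast hηi
  have hη0 : (0:ℝ) < (η i : ℝ) := lt_of_lt_of_le one_pos hη1
  have hpx : p (x i) = ρ * W := by rw [hp, hW, hS]
  have hvhom : ∀ c : ℝ, 0 ≤ c → v i (c • x i) = c * V := by
    intro c hc
    rw [hhom i (x i) hxi c hc, Real.rpow_one, hV]
  have e4 : v i ((η i : ℝ) • x i) = (η i : ℝ) * V := hvhom _ hη0.le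
  have key1 : ∀ t : ℝ, 0 ≤ t → t * V - ρ * t ^ (1/ρ) * W ≤ V - ρ * W := by
    intro t ht
    have hz : Nonneg (t • x i) := fun j => by
      simpa using mul_nonneg ht (hxi j)
    have h := hopt (t • x i) (η i) hz hηi
    unfold SybilU at h
    have e1 : (η i : ℝ) • (t • x i) = ((η i : ℝ) * t) • x i := smul_smul _ _ _
    have e2 : v i (((η i:ℝ) * t) • x i) = (η i : ℝ) * t * V :=
      hvhom _ (mul_nonneg hη0.le ht)
    have e3 : p (t • x i) = ρ * (t ^ (1/ρ) * W) := by
      rw [hp]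
      have hsum : (∑ j, q j * (t • x i) j) = t * S := by
        rw [hS, Finset.mul_sum]
        refine Finset.sum_congr rfl fun j _ => ?_
        simp [mul_comm, mul_assoc, mul_left_comm]
      rw [hsum, hW, Real.mul_rpow ht hS0]
    rw [e1, e2, e3, e4, hpx] at h
    nlinarith [h, hη0]
  have hloc : IsLocalMax (fun t : ℝ => t * V - ρ * t ^ (1/ρ) * W) 1 := by
    filter_upwards [Ioi_mem_nhds (zero_lt_one)] with t ht
    have h := key1 t (le_of_lt ht)
    simpa [Real.one_rpow] using h
  have hρ0' : ρ ≠ 0 := ne_of_gt hρ0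
  have hder : HasDerivAt (fun t : ℝ => t * V - ρ * t ^ (1/ρ) * W) (V - W) 1 := by
    have h1 : HasDerivAt (fun t : ℝ => t ^ (1/ρ)) ((1/ρ) * (1:ℝ) ^ (1/ρ - 1)) 1 :=
      Real.hasDerivAt_rpow_const (Or.inl one_ne_zero)
    have h2 : HasDerivAt (fun t : ℝ => ρ * t ^ (1/ρ) * W)
        (ρ * ((1/ρ) * (1:ℝ) ^ (1/ρ - 1)) * W) 1 := (h1.const_mul ρ).mul_const W
    have h3 : HasDerivAt (fun t : ℝ => t * V) V 1 := hasDerivAt_mul_const V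
    have h4 := h3.sub h2
    have : V - ρ * ((1/ρ) * (1:ℝ) ^ (1/ρ - 1)) * W = V - W := by
      rw [Real.one_rpow]
      field_simp
    rwa [this] at h4
  have hVW : V = W := by
    have h0 := hloc.hasDerivAt_eq_zero hder
    linarith
  -- identity-increase comparison
  have key2 : V - ρ * W - κ ≤ 0 := by
    have h := hopt (x i) (η i + 1) hxi (le_trans hηi (Nat.le_succ _))
    unfold SybilU at h
    have e5 : v i ((↑(η i + 1) : ℝ) • x i) = (↑(η i + 1) : ℝ) * V :=
      hvhom _ (by positivity)
    rw [e4, e5, hpx] at h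
    push_cast at h
    nlinarith [h]
  have h1ρ : (0:ℝ) < 1 - ρ := by linarith
  rw [le_div_iff₀ h1ρ]
  nlinarith [key2, hVW]
end

section
/- Linear pricing poorly approximates CES welfare: let m = 1, ρ ∈ (0,1], ε > 0, v_1(x) = (1+ε)·x, and v_i(x) = x for all i ≠ 1. If (x, p) is a Walrasian equilibrium where p is a linear pricing rule, then Φ(ρ, x) / max_y Φ(ρ, y) ≤ (1+ε)/n^{1/ρ − 1}, where the maximum is over valid allocations y. -/
/-- `y` is in the quasilinear demand set (single good). -/
def InDemand1 (v p : ℝ → ℝ) (y : ℝ) : Prop :=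
  0 ≤ y ∧ ∀ z : ℝ, 0 ≤ z → v z - p z ≤ v y - p y

/-- `(x, p)` is a Walrasian equilibrium for a single good. -/
def IsWE1 {n : ℕ} (v : Fin n → ℝ → ℝ) (p : ℝ → ℝ) (x : Fin n → ℝ) : Prop :=
  (∀ i, InDemand1 (v i) p (x i)) ∧ Valid1 x ∧
    ((∃ y : ℝ, 0 ≤ y ∧ 0 < p y) → ∑ i, x i = 1)

theorem stmt11 {n : ℕ} (ρ ε : ℝ) (hρ0 : 0 < ρ) (hρ1 : ρ ≤ 1) (hε : 0 < ε)
    (v : Fin (n + 1) → ℝ → ℝ)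
    (hv0 : ∀ t, v 0 t = (1 + ε) * t) (hvi : ∀ i, i ≠ 0 → ∀ t, v i t = t)
    (q : ℝ) (hq : 0 ≤ q)
    (x : Fin (n + 1) → ℝ) (hwe : IsWE1 v (fun t => q * t) x) :
    CES1 v ρ x / sSup {c : ℝ | ∃ y, Valid1 y ∧ c = CES1 v ρ y}
      ≤ (1 + ε) / ((n : ℝ) + 1) ^ (1 / ρ - 1) := by
  obtain ⟨hd, ⟨hxnn, hxsum⟩, hsum1⟩ := hwe
  have hq1 : 1 + ε ≤ q := by
    by_contra h
    push_neg at h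
    obtain ⟨hx0, hmax⟩ := hd 0
    have := hmax (x 0 + 1) (by linarith)
    simp only [hv0] at this
    nlinarith
  have hqpos : 0 < q := by linarith
  have hsum : ∑ i, x i = 1 := hsum1 ⟨1, by norm_num, by simpa using hqpos⟩
  have hxi0 : ∀ i : Fin (n+1), i ≠ 0 → x i = 0 := by
    intro i hi
    obtain ⟨hxi, hmax⟩ := hd i
    have := hmax 0 le_rfl
    simp only [hvi i hi] at this
    nlinarith
  have hx01 : x 0 = 1 := by
    have h2 : ∑ i : Fin (n+1), x i = x 0 := by
      rw [Fin.sum_univ_succ]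
      have h3 : ∑ i : Fin n, x i.succ = 0 :=
        Finset.sum_eq_zero (fun i _ => hxi0 i.succ (Fin.succ_ne_zero i))
      rw [h3]; ring
    linarith
  have hεpos : (0:ℝ) < 1 + ε := by linarith
  have hCES : CES1 v ρ x = 1 + ε := by
    unfold CES1
    have hsumρ : ∑ i, v i (x i) ^ ρ = (1+ε) ^ ρ := by
      rw [Fin.sum_univ_succ]
      have h1 : v 0 (x 0) = 1 + ε := by rw [hv0, hx01]; ring
      have h2 : ∀ i : Fin n, v i.succ (x i.succ) ^ ρ = 0 := by
        intro i
        rw [hvi _ (Fin.succ_ne_zero i), hxi0 _ (Fin.succ_ne_zero i),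
          Real.zero_rpow hρ0.ne']
      rw [h1, Finset.sum_congr rfl (fun i _ => h2 i), Finset.sum_const, smul_zero, add_zero]
    rw [hsumρ, ← Real.rpow_mul hεpos.le, mul_one_div_cancel hρ0.ne', Real.rpow_one]
  set S := {c : ℝ | ∃ y, Valid1 y ∧ c = CES1 v ρ y} with hS
  by_cases hbd : BddAbove S
  · have hn1 : (0:ℝ) < (n:ℝ) + 1 := by positivity
    set s : ℝ := ((n:ℝ)+1)⁻¹ with hs
    have hspos : 0 < s := by positivity
    set c₀ : ℝ := ((n:ℝ)+1) ^ (1/ρ - 1) with hc₀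
    have hc₀pos : 0 < c₀ := Real.rpow_pos_of_pos hn1 _
    have hmem : CES1 v ρ (fun _ => s) ∈ S := by
      refine ⟨fun _ => s, ⟨fun i => hspos.le, ?_⟩, rfl⟩
      rw [Finset.sum_const, Finset.card_univ, Fintype.card_fin, nsmul_eq_mul]
      push_cast
      rw [hs, mul_inv_cancel₀ hn1.ne']
    have hge : c₀ ≤ CES1 v ρ (fun _ => s) := by
      unfold CES1
      have hsum2 : ((n:ℝ)+1) * s ^ ρ ≤ ∑ i : Fin (n+1), v i s ^ ρ := by
        rw [Fin.sum_univ_succ]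
        have h1 : s ^ ρ ≤ v 0 s ^ ρ := by
          rw [hv0]
          exact Real.rpow_le_rpow hspos.le (by nlinarith) hρ0.le
        have h2 : ∀ i : Fin n, v i.succ s ^ ρ = s ^ ρ := fun i => by
          rw [hvi _ (Fin.succ_ne_zero i)]
        rw [Finset.sum_congr rfl (fun i _ => h2 i), Finset.sum_const, Finset.card_univ,
          Fintype.card_fin, nsmul_eq_mul]
        push_cast
        nlinarith
      have key : (((n:ℝ)+1) * s ^ ρ) ^ (1/ρ) ≤ (∑ i : Fin (n+1), v i s ^ ρ) ^ (1/ρ) :=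
        Real.rpow_le_rpow (by positivity) hsum2 (by positivity)
      have heq : (((n:ℝ)+1) * s ^ ρ) ^ (1/ρ) = c₀ := by
        rw [Real.mul_rpow hn1.le (Real.rpow_nonneg hspos.le _),
          ← Real.rpow_mul hspos.le, mul_one_div_cancel hρ0.ne', Real.rpow_one,
          hs, ← Real.rpow_neg_one ((n:ℝ)+1), ← Real.rpow_add hn1, hc₀]
        norm_num
        congr 1
      calc c₀ = (((n:ℝ)+1) * s ^ ρ) ^ (1/ρ) := heq.symm
        _ ≤ _ := key
    have hsSup : c₀ ≤ sSup S := le_trans hge (le_csSup hbd hmem)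
    rw [hCES]
    gcongr
  · rw [Real.sSup_of_not_bddAbove hbd, div_zero]
    exact div_nonneg (by linarith) (Real.rpow_nonneg (by positivity) _)
end

section
/- Let n = 2, m = 1, v_1(x) = x, and v_2(x) = √(2x) for x ∈ ℝ_{≥0}. Then for every ρ ∈ (0,1), there exists no allocation x ∈ Ψ(ρ) and no pricing rule p : ℝ_{≥0} → ℝ_{≥0} such that (x, p) is a Walrasian equilibrium. (In particular, CES welfare maximization cannot be implemented in WE when agents' valuations have different homogeneity degrees.) -/
/-- The CES objective along the line `x₀ = t, x₁ = 1 - t`. -/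
noncomputable def Faux (ρ t : ℝ) : ℝ := t ^ ρ + (2 * (1 - t)) ^ (ρ / 2)

lemma Faux_hasDerivAt (ρ : ℝ) {t : ℝ} (ht0 : 0 < t) (ht1 : t < 1) :
    HasDerivAt (Faux ρ) (ρ * t ^ (ρ - 1) - ρ * (2 * (1 - t)) ^ (ρ / 2 - 1)) t := by
  have h1 : HasDerivAt (fun s : ℝ => s ^ ρ) (ρ * t ^ (ρ - 1)) t :=
    Real.hasDerivAt_rpow_const (Or.inl ht0.ne')
  have h2 : HasDerivAt (fun s : ℝ => 2 * (1 - s)) (-2) t := by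
    have := ((hasDerivAt_const t (1:ℝ)).sub (hasDerivAt_id t)).const_mul (2:ℝ)
    simpa using this
  have h3 := h2.rpow_const (p := ρ / 2) (Or.inl (by nlinarith))
  convert h1.add h3 using 1
  exacts [rfl, rfl, rfl, by ring]

lemma Faux_continuous (ρ : ℝ) (hρ0 : 0 < ρ) : Continuous (Faux ρ) := by
  have c1 : Continuous fun s : ℝ => s ^ ρ :=
    continuous_iff_continuousAt.2 fun x => Real.continuousAt_rpow_const x ρ (Or.inr hρ0.le)
  have c2 : Continuous fun s : ℝ => s ^ (ρ / 2) :=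
    continuous_iff_continuousAt.2 fun x =>
      Real.continuousAt_rpow_const x (ρ / 2) (Or.inr (by positivity))
  have c3 : Continuous fun s : ℝ => 2 * (1 - s) := by continuity
  exact c1.add (c2.comp c3)

/-- There is a point `t0 > 1/2` beating every `s ≤ 1/2` for the CES objective. -/
lemma exists_better (ρ : ℝ) (hρ0 : 0 < ρ) (hρ1 : ρ < 1) :
    ∃ t0 : ℝ, 1 / 2 < t0 ∧ t0 < 1 ∧ ∀ s, 0 ≤ s → s ≤ 1 / 2 → Faux ρ s < Faux ρ t0 := by
  obtain ⟨c, hc_def⟩ : ∃ c : ℝ, c = (2 : ℝ) ^ (1 - ρ) := ⟨_, rfl⟩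
  have hc : 1 < c := by
    rw [hc_def]
    have := Real.one_lt_rpow_iff_of_pos (x := 2) (y := 1 - ρ) (by norm_num)
    rw [this]; left; constructor <;> [norm_num; linarith]
  obtain ⟨δ, hδ_def⟩ : ∃ δ : ℝ, δ = (c - 1) / (2 * (c + 1)) := ⟨_, rfl⟩
  have hcpos : (0:ℝ) < c + 1 := by linarith
  have hδpos : 0 < δ := by
    rw [hδ_def]; apply div_pos (by linarith) (by linarith)
  have hδhalf : 2 * δ < 1 := by
    have : δ < 1 / 2 := by
      rw [hδ_def, div_lt_iff₀ (by linarith)]; nlinarith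
    linarith
  obtain ⟨t0, ht0_def⟩ : ∃ t0 : ℝ, t0 = 1 / 2 + δ := ⟨_, rfl⟩
  have ht0h : 1 / 2 < t0 := by rw [ht0_def]; linarith
  have ht01 : t0 < 1 := by rw [ht0_def]; linarith
  have ht0pos : 0 < t0 := by linarith
  -- key computations
  have h1m2δ : 1 - 2 * δ = 2 / (c + 1) := by
    rw [hδ_def]; field_simp; ring
  have h1p2δ : 1 + 2 * δ = 2 * c / (c + 1) := by
    rw [hδ_def]; field_simp; ring
  have h1m2δpos : 0 < 1 - 2 * δ := by linarith
  -- derivative positive on (0, t0)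
  have hderiv_pos : ∀ t ∈ Set.Ioo (0:ℝ) t0,
      0 < ρ * t ^ (ρ - 1) - ρ * (2 * (1 - t)) ^ (ρ / 2 - 1) := by
    rintro t ⟨htl, htr⟩
    have ht1 : t < 1 := lt_trans htr ht01
    have hbase : 1 - 2 * δ < 2 * (1 - t) := by linarith
    have A : (2 * (1 - t)) ^ (ρ / 2 - 1) < (1 - 2 * δ) ^ (ρ / 2 - 1) :=
      Real.rpow_lt_rpow_of_neg h1m2δpos hbase (by linarith)
    have B : (1 - 2 * δ) ^ (ρ / 2 - 1) ≤ (1 - 2 * δ) ^ (-1 : ℝ) := by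
      apply Real.rpow_le_rpow_of_exponent_ge h1m2δpos (by linarith) (by linarith)
    have C : (1 - 2 * δ) ^ (-1 : ℝ) = (c + 1) / 2 := by
      rw [Real.rpow_neg_one, h1m2δ]
      rw [inv_div]
    -- t0 ^ (ρ - 1) > (c+1)/2
    have hT : t0 ^ (ρ - 1) = (1 + 2 * δ) ^ (ρ - 1) * (2:ℝ) ^ (1 - ρ) := by
      have : t0 = (1 + 2 * δ) * (2:ℝ)⁻¹ := by rw [ht0_def]; ring
      rw [this, Real.mul_rpow (by linarith) (by norm_num),
        Real.inv_rpow (by norm_num), ← Real.rpow_neg (by norm_num)]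
      ring_nf
    have hE1 : (1 + 2 * δ) ^ (-1 : ℝ) < (1 + 2 * δ) ^ (ρ - 1) :=
      Real.rpow_lt_rpow_of_exponent_lt (by linarith) (by linarith)
    have hE2 : (1 + 2 * δ) ^ (-1 : ℝ) = (c + 1) / (2 * c) := by
      rw [Real.rpow_neg_one, h1p2δ, inv_div]
    have hcpos' : (0:ℝ) < c := by linarith
    have D : (c + 1) / 2 < t0 ^ (ρ - 1) := by
      rw [hT, ← hc_def]
      have : (c + 1) / (2 * c) * c < (1 + 2 * δ) ^ (ρ - 1) * c := by
        apply mul_lt_mul_of_pos_right _ hcpos'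
        rw [← hE2]; exact hE1
      calc (c + 1) / 2 = (c + 1) / (2 * c) * c := by field_simp
        _ < (1 + 2 * δ) ^ (ρ - 1) * c := this
    have E : t0 ^ (ρ - 1) < t ^ (ρ - 1) :=
      Real.rpow_lt_rpow_of_neg htl htr (by linarith)
    have : (2 * (1 - t)) ^ (ρ / 2 - 1) < t ^ (ρ - 1) := by
      calc (2 * (1 - t)) ^ (ρ / 2 - 1) < (1 - 2 * δ) ^ (ρ / 2 - 1) := A
        _ ≤ (1 - 2 * δ) ^ (-1:ℝ) := B
        _ = (c + 1) / 2 := C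
        _ < t0 ^ (ρ - 1) := D
        _ < t ^ (ρ - 1) := E
    nlinarith
  -- strict monotonicity on [0, t0]
  have hmono : StrictMonoOn (Faux ρ) (Set.Icc 0 t0) := by
    apply strictMonoOn_of_deriv_pos (convex_Icc 0 t0) ((Faux_continuous ρ hρ0).continuousOn)
    intro t ht
    rw [interior_Icc] at ht
    have ht1 : t < 1 := lt_trans ht.2 ht01
    rw [(Faux_hasDerivAt ρ ht.1 ht1).deriv]
    exact hderiv_pos t ht
  refine ⟨t0, ht0h, ht01, fun s hs0 hs1 => ?_⟩
  exact hmono ⟨hs0, by linarith⟩ ⟨by linarith, le_refl t0⟩ (by linarith)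

theorem stmt12 (ρ : ℝ) (hρ0 : 0 < ρ) (hρ1 : ρ < 1)
    (v : Fin 2 → ℝ → ℝ)
    (hv0 : ∀ t, v 0 t = t) (hv1 : ∀ t, v 1 t = Real.sqrt (2 * t)) :
    ¬ ∃ (x : Fin 2 → ℝ) (p : ℝ → ℝ),
        (∀ t : ℝ, 0 ≤ t → 0 ≤ p t) ∧ MaxCES1 v ρ x ∧ IsWE1 v p x := by
  rintro ⟨x, p, hp, ⟨⟨hxnn, hxsum⟩, hopt⟩, hdem, hval, hmkt⟩
  have h0 : (0:ℝ) ≤ x 0 := hxnn 0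
  have h1 : (0:ℝ) ≤ x 1 := hxnn 1
  have hsle : x 0 + x 1 ≤ 1 := by simpa [Fin.sum_univ_two] using hxsum
  have hces : ∀ y : Fin 2 → ℝ, 0 ≤ y 1 →
      CES1 v ρ y = ((y 0) ^ ρ + (2 * y 1) ^ (ρ / 2)) ^ (1 / ρ) := by
    intro y hy
    rw [CES1, Fin.sum_univ_two, hv0, hv1, Real.sqrt_eq_rpow,
      ← Real.rpow_mul (by linarith), show (1 / (2:ℝ)) * ρ = ρ / 2 by ring]
  -- Step A: full allocation
  have hsum1 : x 0 + x 1 = 1 := by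
    by_contra hne
    have hlt : x 0 + x 1 < 1 := lt_of_le_of_ne hsle hne
    have hvalid : Valid1 ![x 0, 1 - x 0] := by
      constructor
      · intro i; fin_cases i <;> simp <;> linarith
      · simp [Fin.sum_univ_two]
    have hle := hopt _ hvalid
    rw [hces x h1, hces ![x 0, 1 - x 0] (by simp; linarith)] at hle
    simp only [Matrix.cons_val_zero, Matrix.cons_val_one, Matrix.head_cons] at hle
    have hinner : (2 * x 1) ^ (ρ / 2) < (2 * (1 - x 0)) ^ (ρ / 2) :=
      Real.rpow_lt_rpow (by linarith) (by linarith) (by positivity)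
    have hstrict : (x 0 ^ ρ + (2 * x 1) ^ (ρ / 2)) ^ (1 / ρ)
        < (x 0 ^ ρ + (2 * (1 - x 0)) ^ (ρ / 2)) ^ (1 / ρ) := by
      apply Real.rpow_lt_rpow
        (add_nonneg (Real.rpow_nonneg h0 _) (Real.rpow_nonneg (by linarith) _))
        (by linarith) (by positivity)
    linarith
  -- Step B: x 0 > 1/2
  obtain ⟨t0, ht0h, ht01, hbetter⟩ := exists_better ρ hρ0 hρ1
  have hx0half : 1 / 2 < x 0 := by
    by_contra hle'
    push_neg at hle'
    have hvalid : Valid1 ![t0, 1 - t0] := by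
      constructor
      · intro i; fin_cases i <;> simp <;> linarith
      · simp [Fin.sum_univ_two]
    have hle := hopt _ hvalid
    rw [hces x h1, hces ![t0, 1 - t0] (by simp; linarith)] at hle
    simp only [Matrix.cons_val_zero, Matrix.cons_val_one, Matrix.head_cons] at hle
    have hx1 : x 1 = 1 - x 0 := by linarith
    have hFs : Faux ρ (x 0) < Faux ρ t0 := hbetter (x 0) h0 hle'
    have hFeq : x 0 ^ ρ + (2 * x 1) ^ (ρ / 2) = Faux ρ (x 0) := by
      rw [Faux, hx1]
    have hFeq2 : t0 ^ ρ + (2 * (1 - t0)) ^ (ρ / 2) = Faux ρ t0 := rfl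
    rw [hFeq, hFeq2] at hle
    have : Faux ρ (x 0) ^ (1 / ρ) < Faux ρ t0 ^ (1 / ρ) := by
      apply Real.rpow_lt_rpow _ hFs (by positivity)
      exact add_nonneg (Real.rpow_nonneg h0 _) (Real.rpow_nonneg (by linarith) _)
    linarith
  -- Step C: the WE demand conditions force a contradiction
  obtain ⟨_, hd0⟩ := hdem 0
  obtain ⟨_, hd1⟩ := hdem 1
  have i0 := hd0 (x 1) h1
  have i1 := hd1 (x 0) h0
  rw [hv0, hv0] at i0
  rw [hv1, hv1] at i1
  -- i0 : x 1 - p (x 1) ≤ x 0 - p (x 0)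
  -- i1 : √(2 * x 0) - p (x 0) ≤ √(2 * x 1) - p (x 1)
  have hkey : x 1 + Real.sqrt (2 * x 0) ≤ x 0 + Real.sqrt (2 * x 1) := by linarith
  set a := Real.sqrt (2 * x 0) with ha_def
  set b := Real.sqrt (2 * x 1) with hb_def
  have ha2 : a ^ 2 = 2 * x 0 := Real.sq_sqrt (by linarith)
  have hb2 : b ^ 2 = 2 * x 1 := Real.sq_sqrt (by linarith)
  have hbnn : 0 ≤ b := Real.sqrt_nonneg _
  have hba : b < a := by
    rw [ha_def, hb_def]
    apply Real.sqrt_lt_sqrt (by linarith)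
    linarith
  have habs : a + b < 2 := by nlinarith [sq_nonneg (a - b)]
  nlinarith [mul_pos (sub_pos.2 hba) (by linarith : (0:ℝ) < 2 - (a + b))]
end

section
/- Let n = 2, m = 1, v_1(x) = x, and v_2(x) = 2x. Then for every ρ < 0, there is no pricing rule p : ℝ_{≥0} → ℝ_{≥0} and allocation x ∈ Ψ(ρ) such that (x, p) is a Walrasian equilibrium. -/
open Real Filter Set



/-- `x ∈ Ψ(ρ)` for ρ < 0: a valid allocation with strictly positive
valuations maximizing CES welfare among all such allocations. -/
def MaxCES1neg {n : ℕ} (v : Fin n → ℝ → ℝ) (ρ : ℝ) (x : Fin n → ℝ) : Prop :=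
  Valid1 x ∧ (∀ i, 0 < v i (x i)) ∧
    ∀ y, Valid1 y → (∀ i, 0 < v i (y i)) → CES1 v ρ y ≤ CES1 v ρ x

/-- Key analytic fact: for ρ < 0, the function ε ↦ (1+ε)^ρ + (2-2ε)^ρ has
negative derivative at 0, hence takes a value below 1 + 2^ρ at some small ε. -/
lemma aux_eps (ρ : ℝ) (hρ : ρ < 0) :
    ∃ ε : ℝ, 0 < ε ∧ ε < 1 ∧ (1 + ε) ^ ρ + (2 - 2 * ε) ^ ρ < 1 + (2:ℝ) ^ ρ := by
  set g : ℝ → ℝ := fun ε => (1 + ε) ^ ρ + (2 - 2 * ε) ^ ρ with hg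
  have h1 : HasDerivAt (fun ε : ℝ => (1 + ε) ^ ρ) (ρ * (1:ℝ) ^ (ρ - 1) * 1) 0 := by
    have hinner : HasDerivAt (fun ε : ℝ => 1 + ε) 1 0 := (hasDerivAt_id 0).const_add 1
    have houter : HasDerivAt (fun t : ℝ => t ^ ρ) (ρ * (1:ℝ) ^ (ρ - 1)) ((fun ε : ℝ => 1 + ε) 0) := by
      simpa using Real.hasDerivAt_rpow_const (p := ρ) (x := (1:ℝ)) (Or.inl one_ne_zero)
    exact houter.comp 0 hinner
  have h2 : HasDerivAt (fun ε : ℝ => (2 - 2 * ε) ^ ρ) (ρ * (2:ℝ) ^ (ρ - 1) * (-2)) 0 := by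
    have hinner : HasDerivAt (fun ε : ℝ => 2 - 2 * ε) (-2) 0 := by
      simpa using ((hasDerivAt_id (0:ℝ)).const_mul 2).const_sub 2
    have houter : HasDerivAt (fun t : ℝ => t ^ ρ) (ρ * (2:ℝ) ^ (ρ - 1)) ((fun ε : ℝ => 2 - 2 * ε) 0) := by
      simpa using Real.hasDerivAt_rpow_const (p := ρ) (x := (2:ℝ)) (Or.inl two_ne_zero)
    exact houter.comp 0 hinner
  have hgd : HasDerivAt g (ρ * (1:ℝ) ^ (ρ - 1) * 1 + ρ * (2:ℝ) ^ (ρ - 1) * (-2)) 0 := h1.add h2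
  have h2pow : (2:ℝ) ^ (ρ - 1) * 2 = (2:ℝ) ^ ρ := by
    rw [← Real.rpow_add_one two_ne_zero (ρ - 1)]; ring_nf
  have hderiv_neg : ρ * (1:ℝ) ^ (ρ - 1) * 1 + ρ * (2:ℝ) ^ (ρ - 1) * (-2) < 0 := by
    have h2lt1 : (2:ℝ) ^ ρ < 1 := Real.rpow_lt_one_of_one_lt_of_neg one_lt_two hρ
    have : ρ * (1:ℝ) ^ (ρ - 1) * 1 + ρ * (2:ℝ) ^ (ρ - 1) * (-2) = ρ * (1 - (2:ℝ) ^ ρ) := by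
      rw [Real.one_rpow]; nlinarith [h2pow]
    rw [this]
    exact mul_neg_of_neg_of_pos hρ (by linarith)
  have hslope := hasDerivAt_iff_tendsto_slope.1 hgd
  have hev : ∀ᶠ ε in nhdsWithin (0:ℝ) {(0:ℝ)}ᶜ, slope g 0 ε < 0 :=
    hslope.eventually_lt_const hderiv_neg
  have hle : nhdsWithin (0:ℝ) (Set.Ioi 0) ≤ nhdsWithin (0:ℝ) {(0:ℝ)}ᶜ :=
    nhdsWithin_mono 0 (fun x hx => ne_of_gt hx)
  have hev2 : ∀ᶠ ε in nhdsWithin (0:ℝ) (Set.Ioi 0), slope g 0 ε < 0 := hev.filter_mono hle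
  have hev3 : ∀ᶠ ε in nhdsWithin (0:ℝ) (Set.Ioi 0), ε ∈ Set.Ioo (0:ℝ) 1 :=
    Filter.eventually_of_mem (Ioo_mem_nhdsGT_of_mem (by constructor <;> norm_num)) (fun x hx => hx)
  obtain ⟨ε, hslopeε, hε0, hε1⟩ := (hev2.and hev3).exists
  refine ⟨ε, hε0, hε1, ?_⟩
  have hg0 : g 0 = 1 + (2:ℝ) ^ ρ := by simp [hg]
  have : (g ε - g 0) / (ε - 0) < 0 := by simpa [slope_def_field, div_eq_iff] using hslopeε
  have hlt : g ε < g 0 := by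
    have hεpos : (0:ℝ) < ε - 0 := by linarith
    have := (div_lt_iff₀ hεpos).1 this
    linarith
  rw [hg0] at hlt
  simpa [hg] using hlt

theorem stmt13 (ρ : ℝ) (hρ : ρ < 0)
    (v : Fin 2 → ℝ → ℝ)
    (hv0 : ∀ t, v 0 t = t) (hv1 : ∀ t, v 1 t = 2 * t) :
    ¬ ∃ (x : Fin 2 → ℝ) (p : ℝ → ℝ),
        (∀ t : ℝ, 0 ≤ t → 0 ≤ p t) ∧ MaxCES1neg v ρ x ∧ IsWE1 v p x := by
  rintro ⟨x, p, -, ⟨⟨hxnn, hxsum⟩, hxpos, hmax⟩, hdem, -, -⟩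
  have hx0 : 0 < x 0 := by have := hxpos 0; rwa [hv0] at this
  have hx1 : 0 < x 1 := by have := hxpos 1; rw [hv1] at this; linarith
  have hxs : x 0 + x 1 ≤ 1 := by rw [← Fin.sum_univ_two x]; exact hxsum
  -- Step 1: WE forces x 0 ≤ x 1
  have hd0 := (hdem 0).2 (x 1) (le_of_lt hx1)
  have hd1 := (hdem 1).2 (x 0) (le_of_lt hx0)
  rw [hv0, hv0] at hd0
  rw [hv1, hv1] at hd1
  have hle : x 0 ≤ x 1 := by linarith
  -- Step 2: CES maximality forces x 1 < x 0. Derive contradiction.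
  have hCESx : CES1 v ρ x = ((x 0) ^ ρ + (2 * x 1) ^ ρ) ^ (1 / ρ) := by
    simp [CES1, Fin.sum_univ_two, hv0, hv1]
  have h2x1 : 0 < 2 * x 1 := by linarith
  have hSx_pos : 0 < (x 0) ^ ρ + (2 * x 1) ^ ρ :=
    add_pos (Real.rpow_pos_of_pos hx0 ρ) (Real.rpow_pos_of_pos h2x1 ρ)
  -- build a strictly better allocation y
  obtain ⟨y, hyv, hypos, hSy_pos, hSlt⟩ :
      ∃ y : Fin 2 → ℝ, Valid1 y ∧ (∀ i, 0 < v i (y i)) ∧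
        0 < (y 0) ^ ρ + (2 * y 1) ^ ρ ∧
        (y 0) ^ ρ + (2 * y 1) ^ ρ < (x 0) ^ ρ + (2 * x 1) ^ ρ := by
    rcases lt_or_eq_of_le hle with hlt | heq
    · -- swap
      refine ⟨![x 1, x 0], ⟨?_, ?_⟩, ?_, ?_, ?_⟩
      · intro i; fin_cases i <;> simp <;> linarith
      · simp [Fin.sum_univ_two]; linarith
      · intro i; fin_cases i <;> simp [hv0, hv1] <;> linarith
      · simp only [Matrix.cons_val_zero, Matrix.cons_val_one, Matrix.head_cons]
        exact add_pos (Real.rpow_pos_of_pos hx1 ρ) (Real.rpow_pos_of_pos (by linarith) ρ)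
      · simp only [Matrix.cons_val_zero, Matrix.cons_val_one, Matrix.head_cons]
        have e0 : (2 * x 0) ^ ρ = 2 ^ ρ * (x 0) ^ ρ :=
          Real.mul_rpow (by norm_num) (le_of_lt hx0)
        have e1 : (2 * x 1) ^ ρ = 2 ^ ρ * (x 1) ^ ρ :=
          Real.mul_rpow (by norm_num) (le_of_lt hx1)
        have hmono : (x 1) ^ ρ < (x 0) ^ ρ := Real.rpow_lt_rpow_of_neg hx0 hlt hρ
        have h2lt1 : (2:ℝ) ^ ρ < 1 := Real.rpow_lt_one_of_one_lt_of_neg one_lt_two hρ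
        have h2pos : (0:ℝ) < 2 ^ ρ := Real.rpow_pos_of_pos two_pos ρ
        rw [e0, e1]; nlinarith
    · -- equal case: perturb
      obtain ⟨ε, hε0, hε1, hεlt⟩ := aux_eps ρ hρ
      set a := x 0 with ha
      have hax1 : x 1 = a := heq.symm
      refine ⟨![a * (1 + ε), a * (1 - ε)], ⟨?_, ?_⟩, ?_, ?_, ?_⟩
      · intro i; fin_cases i <;> simp <;> nlinarith
      · simp [Fin.sum_univ_two]; nlinarith
      · intro i; fin_cases i <;> simp [hv0, hv1] <;> nlinarith
      · simp only [Matrix.cons_val_zero, Matrix.cons_val_one, Matrix.head_cons]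
        exact add_pos (Real.rpow_pos_of_pos (by nlinarith) ρ)
          (Real.rpow_pos_of_pos (by nlinarith) ρ)
      · simp only [Matrix.cons_val_zero, Matrix.cons_val_one, Matrix.head_cons]
        have e0 : (a * (1 + ε)) ^ ρ = a ^ ρ * (1 + ε) ^ ρ :=
          Real.mul_rpow (le_of_lt hx0) (by linarith)
        have e1 : (2 * (a * (1 - ε))) ^ ρ = a ^ ρ * (2 - 2 * ε) ^ ρ := by
          rw [show 2 * (a * (1 - ε)) = a * (2 - 2 * ε) by ring]
          exact Real.mul_rpow (le_of_lt hx0) (by linarith)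
        have e2 : (2 * x 1) ^ ρ = a ^ ρ * 2 ^ ρ := by
          rw [hax1, mul_comm]
          exact Real.mul_rpow (le_of_lt hx0) (by norm_num)
        have hapos : 0 < a ^ ρ := Real.rpow_pos_of_pos hx0 ρ
        have hx0eq : (x 0) ^ ρ = a ^ ρ := by rw [ha]
        rw [e0, e1, e2, hx0eq]
        nlinarith
  -- CES comparison
  have hCESy : CES1 v ρ y = ((y 0) ^ ρ + (2 * y 1) ^ ρ) ^ (1 / ρ) := by
    simp [CES1, Fin.sum_univ_two, hv0, hv1]
  have hcontra : CES1 v ρ x < CES1 v ρ y := by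
    rw [hCESx, hCESy]
    exact Real.rpow_lt_rpow_of_neg hSy_pos hSlt (one_div_neg.2 hρ)
  exact absurd (hmax y hyv hypos) (not_le.2 hcontra)
end

section
/- Let n = 2, m = 1, v_1(x) = x, and v_2(x) = 2x. Then there is no allocation x maximizing Nash welfare (the product v_1(x_1)·v_2(x_2) over valid allocations) and no differentiable pricing rule p : ℝ_{≥0} → ℝ_{≥0} such that (x, p) is a Walrasian equilibrium. -/
/-- `x` maximizes Nash welfare (the product of the two agents' valuations)
over valid allocations. -/
def MaxNash (v : Fin 2 → ℝ → ℝ) (x : Fin 2 → ℝ) : Prop :=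
  Valid1 x ∧ ∀ y : Fin 2 → ℝ, Valid1 y →
    v 0 (y 0) * v 1 (y 1) ≤ v 0 (x 0) * v 1 (x 1)

theorem stmt14 (v : Fin 2 → ℝ → ℝ)
    (hv0 : ∀ t, v 0 t = t) (hv1 : ∀ t, v 1 t = 2 * t) :
    ¬ ∃ (x : Fin 2 → ℝ) (p : ℝ → ℝ),
        (∀ t : ℝ, 0 ≤ t → 0 ≤ p t) ∧
        (∀ t : ℝ, 0 ≤ t → DifferentiableWithinAt ℝ p (Set.Ici 0) t) ∧
        MaxNash v x ∧ IsWE1 v p x := by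
  rintro ⟨x, p, _hpos, hdiff, ⟨⟨hxnn, hxsum⟩, hmax⟩, hdem, _, _⟩
  -- Step 1: x 0 = 1/2 and x 1 = 1/2
  have hsum2 : x 0 + x 1 ≤ 1 := by
    have := hxsum
    simpa [Fin.sum_univ_two] using this
  have hmax' := hmax (fun _ => 1/2) ⟨fun i => by norm_num, by
    simp [Fin.sum_univ_two]⟩
  rw [hv0, hv1, hv0, hv1] at hmax'
  have h0 : 0 ≤ x 0 := hxnn 0
  have h1 : 0 ≤ x 1 := hxnn 1
  have hx0 : x 0 = 1/2 := by nlinarith [sq_nonneg (x 0 - x 1)]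
  -- Step 2: demand conditions at 1/2
  have hd1 := hdem 0
  have hd2 := hdem 1
  rw [InDemand1] at hd1 hd2
  have hq1 : ∀ z : ℝ, 0 ≤ z → z - p z ≤ 1/2 - p (1/2) := by
    intro z hz
    have := hd1.2 z hz
    rw [hv0, hv0, hx0] at this
    exact this
  have hq2 : ∀ z : ℝ, 0 ≤ z → 2*z - p z ≤ 2*(1/2) - p (1/2) := by
    intro z hz
    have := hd2.2 z hz
    rw [hv1, hv1] at this
    have hx1 : x 1 = 1/2 := by nlinarith [sq_nonneg (x 0 - x 1)]
    rw [hx1] at this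
    exact this
  -- p is differentiable at 1/2 (interior point)
  have hmem : Set.Ici (0:ℝ) ∈ nhds (1/2 : ℝ) := by
    refine Filter.mem_of_superset (Ioo_mem_nhds (by norm_num : (0:ℝ) < 1/2)
      (by norm_num : (1/2:ℝ) < 1)) ?_
    intro t ht
    exact le_of_lt ht.1
  have hp : DifferentiableAt ℝ p (1/2) :=
    (hdiff (1/2) (by norm_num)).differentiableAt hmem
  set d := deriv p (1/2) with hd
  have hpd : HasDerivAt p d (1/2) := hp.hasDerivAt
  -- local max facts
  have hev : ∀ᶠ z in nhds (1/2 : ℝ), (0:ℝ) ≤ z := by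
    filter_upwards [hmem] with z hz using hz
  have hm1 : IsLocalMax (fun z => z - p z) (1/2 : ℝ) := by
    filter_upwards [hev] with z hz using hq1 z hz
  have hm2 : IsLocalMax (fun z => 2*z - p z) (1/2 : ℝ) := by
    filter_upwards [hev] with z hz using hq2 z hz
  have hder1 : HasDerivAt (fun z : ℝ => z - p z) (1 - d) (1/2) :=
    (hasDerivAt_id (1/2 : ℝ)).sub hpd
  have hder2 : HasDerivAt (fun z : ℝ => 2*z - p z) (2 - d) (1/2) := by
    have : HasDerivAt (fun z : ℝ => 2*z) 2 (1/2) := by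
      simpa using (hasDerivAt_id (1/2 : ℝ)).const_mul 2
    exact this.sub hpd
  have e1 : (1 : ℝ) - d = 0 := by
    have := hm1.deriv_eq_zero
    rwa [hder1.deriv] at this
  have e2 : (2 : ℝ) - d = 0 := by
    have := hm2.deriv_eq_zero
    rwa [hder2.deriv] at this
  linarith
end

section
/- If (x, p) is a quasilinear Walrasian equilibrium, and each agent i is given budget B_i = p(x_i), then (x, B, p) is a Fisher market Walrasian equilibrium. -/
/-- `y` is in the Fisher market demand set for budget `B`. -/
def InFisherDemand {m : ℕ} (v p : (Fin m → ℝ) → ℝ) (B : ℝ) (y : Fin m → ℝ) : Prop :=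
  Nonneg y ∧ p y ≤ B ∧ ∀ z, Nonneg z → p z ≤ B → v z ≤ v y

/-- `(x, B, p)` is a Fisher market Walrasian equilibrium. -/
def IsFisherWE {n m : ℕ} (v : Fin n → (Fin m → ℝ) → ℝ) (B : Fin n → ℝ)
    (p : (Fin m → ℝ) → ℝ) (x : Fin n → Fin m → ℝ) : Prop :=
  (∀ i, InFisherDemand (v i) p (B i) (x i)) ∧ ValidAlloc x ∧
    ∀ j, NonzeroCost p j → ∑ i, x i j = 1

theorem stmt15 {n m : ℕ} (v : Fin n → (Fin m → ℝ) → ℝ)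
    (p : (Fin m → ℝ) → ℝ) (x : Fin n → Fin m → ℝ)
    (hwe : IsWE v p x) :
    IsFisherWE v (fun i => p (x i)) p x := by
  obtain ⟨hd, hva, hnc⟩ := hwe
  refine ⟨fun i => ?_, hva, hnc⟩
  obtain ⟨hnn, hmax⟩ := hd i
  exact ⟨hnn, le_refl _, fun z hz hpz => by linarith [hmax z hz]⟩
end

section
/- Assume each valuation v_i is concave and differentiable. Let x′ be a valid allocation with v_i(x′_i) > 0 for all i, set a_i = v_i(x′_i), and let ρ ∈ (0,1]. Then x′ ∈ Ψ(ρ) if and only if x′ ∈ Ψ_a(ρ−1), i.e., x′ maximizes unweighted CES welfare with exponent ρ if and only if it maximizes CES welfare with exponent ρ−1 weighted by the multipliers a_i (where for ρ = 1 the weighted objective Ψ_a(0) is weighted Nash welfare, i.e., the maximizers of ∑_i a_i log v_i(x_i)). -/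
/-- `x ∈ Ψ_a(ρ')` for ρ' < 0: a valid allocation with strictly positive
valuations maximizing the weighted CES welfare `(∑ a_i v_i(x_i)^{ρ'})^{1/ρ'}`
among all such allocations. -/
def MaxWCESneg {n m : ℕ} (v : Fin n → (Fin m → ℝ) → ℝ) (a : Fin n → ℝ) (ρ' : ℝ)
    (x : Fin n → Fin m → ℝ) : Prop :=
  ValidAlloc x ∧ (∀ i, 0 < v i (x i)) ∧
    ∀ y, ValidAlloc y → (∀ i, 0 < v i (y i)) →
      (∑ i, a i * v i (y i) ^ ρ') ^ (1 / ρ') ≤ (∑ i, a i * v i (x i) ^ ρ') ^ (1 / ρ')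

/-- `x ∈ Ψ_a(0)`: a valid allocation with strictly positive valuations
maximizing weighted Nash welfare `∑ a_i log v_i(x_i)` among all such
allocations. -/
def MaxWNash {n m : ℕ} (v : Fin n → (Fin m → ℝ) → ℝ) (a : Fin n → ℝ)
    (x : Fin n → Fin m → ℝ) : Prop :=
  ValidAlloc x ∧ (∀ i, 0 < v i (x i)) ∧
    ∀ y, ValidAlloc y → (∀ i, 0 < v i (y i)) →
      ∑ i, a i * Real.log (v i (y i)) ≤ ∑ i, a i * Real.log (v i (x i))


/-! ### Auxiliary lemmas for the proof of `stmt16` -/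

lemma val_nonneg' {m : ℕ} {v : (Fin m → ℝ) → ℝ} (hmono : MonotoneVal v) (hnorm : v 0 = 0)
    {y : Fin m → ℝ} (hy : Nonneg y) : 0 ≤ v y := by
  have h0 : Nonneg (0 : Fin m → ℝ) := fun j => le_refl 0
  have := hmono 0 y h0 hy (fun j => by simpa using hy j)
  simpa [hnorm] using this

lemma comb_valid {n m : ℕ} {x y : Fin n → Fin m → ℝ} (hx : ValidAlloc x) (hy : ValidAlloc y)
    {l : ℝ} (h0 : 0 ≤ l) (h1 : l ≤ 1) :
    ValidAlloc (fun i j => (1 - l) * x i j + l * y i j) := by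
  constructor
  · intro i j
    show 0 ≤ (1 - l) * x i j + l * y i j
    have hxx := hx.1 i j
    have hyy := hy.1 i j
    nlinarith
  · intro j
    show ∑ i, ((1 - l) * x i j + l * y i j) ≤ 1
    have hs : ∑ i, ((1 - l) * x i j + l * y i j)
        = (1 - l) * ∑ i, x i j + l * ∑ i, y i j := by
      rw [Finset.mul_sum, Finset.mul_sum, ← Finset.sum_add_distrib]
    rw [hs]
    have hxx := hx.2 j
    have hyy := hy.2 j
    nlinarith

lemma comb_val {m : ℕ} {v : (Fin m → ℝ) → ℝ} (hc : ConcaveOn ℝ {y : Fin m → ℝ | Nonneg y} v)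
    {x y : Fin m → ℝ} (hx : Nonneg x) (hy : Nonneg y) {l : ℝ} (h0 : 0 ≤ l) (h1 : l ≤ 1) :
    (1 - l) * v x + l * v y ≤ v (fun j => (1 - l) * x j + l * y j) := by
  have h := hc.2 hx hy (by linarith : (0:ℝ) ≤ 1 - l) h0 (by ring)
  have e : (1 - l) • x + l • y = fun j => (1 - l) * x j + l * y j := by
    funext j; simp [smul_eq_mul]
  rw [e] at h
  simpa [smul_eq_mul] using h

lemma exists_gt_of_derivAt_pos {h : ℝ → ℝ} {d : ℝ} (hd : HasDerivAt h d 0) (hdpos : 0 < d)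
    {ε : ℝ} (hε : 0 < ε) : ∃ l : ℝ, 0 < l ∧ l < ε ∧ h 0 < h l := by
  have h1 : Filter.Tendsto (slope h 0) (nhdsWithin 0 (Set.Ioi 0)) (nhds d) := by
    have h0 : (0:ℝ) ∉ Set.Ioi (0:ℝ) := by simp
    have := hd.hasDerivWithinAt (s := Set.Ioi (0:ℝ))
    rwa [hasDerivWithinAt_iff_tendsto_slope' h0] at this
  have h2 : ∀ᶠ l in nhdsWithin 0 (Set.Ioi 0), 0 < slope h 0 l :=
    h1 (Ioi_mem_nhds hdpos)
  have h3 : ∀ᶠ l in nhdsWithin 0 (Set.Ioi 0), l < ε :=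
    mem_nhdsWithin_of_mem_nhds (Iio_mem_nhds hε)
  have h4 : ∀ᶠ l in nhdsWithin 0 (Set.Ioi 0), (0:ℝ) < l :=
    self_mem_nhdsWithin
  obtain ⟨l, ⟨hsl, hlε⟩, hl0⟩ := ((h2.and h3).and h4).exists
  refine ⟨l, hl0, hlε, ?_⟩
  have hslope : slope h 0 l = (h l - h 0) / l := by
    rw [slope_def_field, sub_zero]
  rw [hslope] at hsl
  have := mul_pos hsl hl0
  rw [div_mul_cancel₀ _ (ne_of_gt hl0)] at this
  linarith

lemma exists_lt_of_derivAt_neg {h : ℝ → ℝ} {d : ℝ} (hd : HasDerivAt h d 0) (hdneg : d < 0)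
    {ε : ℝ} (hε : 0 < ε) : ∃ l : ℝ, 0 < l ∧ l < ε ∧ h l < h 0 := by
  obtain ⟨l, h1, h2, h3⟩ := exists_gt_of_derivAt_pos hd.neg (by linarith) hε
  exact ⟨l, h1, h2, by simpa using h3⟩

lemma tangent_upper {s t p : ℝ} (hs : 0 < s) (ht : 0 ≤ t) (hp1 : 0 < p) (hp2 : p ≤ 1) :
    t ^ p ≤ s ^ p + p * s ^ (p - 1) * (t - s) := by
  have hr : -1 ≤ t / s - 1 := by
    have : 0 ≤ t / s := div_nonneg ht hs.le
    linarith
  have hb := rpow_one_add_le_one_add_mul_self hr hp1.le hp2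
  have h1 : (1 + (t / s - 1)) = t / s := by ring
  rw [h1] at hb
  have hsp : 0 < s ^ p := Real.rpow_pos_of_pos hs p
  have h3 : t ^ p ≤ s ^ p * (1 + p * (t / s - 1)) := by
    have h2 : (t / s) ^ p = t ^ p / s ^ p := Real.div_rpow ht hs.le p
    rw [h2] at hb
    calc t ^ p = s ^ p * (t ^ p / s ^ p) := by field_simp
      _ ≤ s ^ p * (1 + p * (t / s - 1)) := mul_le_mul_of_nonneg_left hb hsp.le
  have h4 : s ^ p * (1 + p * (t / s - 1)) = s ^ p + p * s ^ (p - 1) * (t - s) := by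
    have e : s ^ (p - 1) = s ^ p / s := by rw [Real.rpow_sub hs, Real.rpow_one]
    rw [e]; field_simp
  linarith

lemma tangent_lower {s t p : ℝ} (hs : 0 < s) (ht : 0 < t) (hp : p < 0) :
    s ^ p + p * s ^ (p - 1) * (t - s) ≤ t ^ p := by
  have hr : 0 < t / s := div_pos ht hs
  have hlog : Real.log (t / s) ≤ t / s - 1 := Real.log_le_sub_one_of_pos hr
  have h1 : p * (t / s - 1) ≤ p * Real.log (t / s) := mul_le_mul_of_nonpos_left hlog hp.le
  have h2 : 1 + p * Real.log (t / s) ≤ Real.exp (p * Real.log (t / s)) := by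
    linarith [Real.add_one_le_exp (p * Real.log (t / s))]
  have h3 : Real.exp (p * Real.log (t / s)) = (t / s) ^ p := by
    rw [Real.rpow_def_of_pos hr, mul_comm]
  have h4 : 1 + p * (t / s - 1) ≤ (t / s) ^ p := by rw [← h3]; linarith
  have hsp : 0 < s ^ p := Real.rpow_pos_of_pos hs p
  have h5 : s ^ p * (1 + p * (t / s - 1)) ≤ s ^ p * ((t / s) ^ p) :=
    mul_le_mul_of_nonneg_left h4 hsp.le
  have h6 : s ^ p * ((t / s) ^ p) = t ^ p := by
    rw [Real.div_rpow ht.le hs.le]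
    field_simp
  have h7 : s ^ p * (1 + p * (t / s - 1)) = s ^ p + p * s ^ (p - 1) * (t - s) := by
    have e : s ^ (p - 1) = s ^ p / s := by rw [Real.rpow_sub hs, Real.rpow_one]
    rw [e]; field_simp
  linarith

lemma D0_pos_of_P_lt {n : ℕ} {s t : Fin n → ℝ} {p : ℝ} (hp : p < 0)
    (hs : ∀ i, 0 < s i) (ht : ∀ i, 0 < t i)
    (h : ∑ i, s i * t i ^ p < ∑ i, s i * s i ^ p) :
    0 < ∑ i, s i ^ p * (t i - s i) := by
  have key : ∀ i : Fin n, s i * s i ^ p + p * (s i ^ p * (t i - s i)) ≤ s i * t i ^ p := by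
    intro i
    have htan := tangent_lower (hs i) (ht i) hp
    have e : s i * s i ^ (p - 1) = s i ^ p := by
      rw [Real.rpow_sub (hs i), Real.rpow_one, ← mul_div_assoc,
        mul_div_cancel_left₀ _ (hs i).ne']
    have h2 := mul_le_mul_of_nonneg_left htan (hs i).le
    calc s i * s i ^ p + p * (s i ^ p * (t i - s i))
        = s i * (s i ^ p + p * s i ^ (p - 1) * (t i - s i)) := by rw [← e]; ring
      _ ≤ s i * t i ^ p := h2
  have hsum := Finset.sum_le_sum (fun i (_ : i ∈ Finset.univ) => key i)
  rw [Finset.sum_add_distrib, ← Finset.mul_sum] at hsum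
  by_contra hc
  push_neg at hc
  nlinarith

lemma D0_pos_of_S_lt {n : ℕ} {s t : Fin n → ℝ} {ρ : ℝ} (hρ0 : 0 < ρ) (hρ1 : ρ ≤ 1)
    (hs : ∀ i, 0 < s i) (ht : ∀ i, 0 ≤ t i)
    (h : ∑ i, s i ^ ρ < ∑ i, t i ^ ρ) :
    0 < ∑ i, s i ^ (ρ - 1) * (t i - s i) := by
  have key : ∀ i : Fin n, t i ^ ρ ≤ s i ^ ρ + ρ * (s i ^ (ρ - 1) * (t i - s i)) := by
    intro i
    have := tangent_upper (hs i) (ht i) hρ0 hρ1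
    linarith [this]
  have hsum := Finset.sum_le_sum (fun i (_ : i ∈ Finset.univ) => key i)
  rw [Finset.sum_add_distrib, ← Finset.mul_sum] at hsum
  nlinarith

lemma Dsum_pos_of_N_lt {n : ℕ} {s t : Fin n → ℝ} (hs : ∀ i, 0 < s i) (ht : ∀ i, 0 < t i)
    (h : ∑ i, s i * Real.log (s i) < ∑ i, s i * Real.log (t i)) :
    0 < ∑ i, (t i - s i) := by
  have key : ∀ i : Fin n, s i * Real.log (t i) ≤ s i * Real.log (s i) + (t i - s i) := by
    intro i
    have h1 : Real.log (t i) ≤ Real.log (s i) + (t i - s i) / s i := by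
      have h2 : Real.log (t i / s i) ≤ t i / s i - 1 :=
        Real.log_le_sub_one_of_pos (div_pos (ht i) (hs i))
      rw [Real.log_div (ht i).ne' (hs i).ne'] at h2
      have e : t i / s i - 1 = (t i - s i) / s i := by
        rw [sub_div, div_self (hs i).ne']
      linarith [e ▸ h2]
    have h3 := mul_le_mul_of_nonneg_left h1 (hs i).le
    have h4 : s i * ((t i - s i) / s i) = t i - s i := by
      rw [← mul_div_assoc, mul_div_cancel_left₀ _ (hs i).ne']
    nlinarith [h3, h4]
  have hsum := Finset.sum_le_sum (fun i (_ : i ∈ Finset.univ) => key i)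
  rw [Finset.sum_add_distrib] at hsum
  linarith

lemma improveS {n m : ℕ} (v : Fin n → (Fin m → ℝ) → ℝ) (ρ : ℝ) (hρ0 : 0 < ρ)
    (hmono : ∀ i, MonotoneVal (v i)) (hnorm : ∀ i, v i 0 = 0)
    (hconc : ∀ i, ConcaveOn ℝ {y : Fin m → ℝ | Nonneg y} (v i))
    (x' y : Fin n → Fin m → ℝ) (hx' : ValidAlloc x') (hy : ValidAlloc y)
    (hpos : ∀ i, 0 < v i (x' i))
    (hD : 0 < ∑ i, v i (x' i) ^ (ρ - 1) * (v i (y i) - v i (x' i))) :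
    ∃ z, ValidAlloc z ∧ ∑ i, v i (x' i) ^ ρ < ∑ i, v i (z i) ^ ρ := by
  set s : Fin n → ℝ := fun i => v i (x' i) with hs
  set t : Fin n → ℝ := fun i => v i (y i) with ht
  have htn : ∀ i, 0 ≤ t i := fun i => val_nonneg' (hmono i) (hnorm i) (hy.1 i)
  have hder : ∀ i : Fin n, HasDerivAt (fun l : ℝ => (s i + l * (t i - s i)) ^ ρ)
      (ρ * s i ^ (ρ - 1) * (t i - s i)) 0 := by
    intro i
    have hinner : HasDerivAt (fun l : ℝ => s i + l * (t i - s i)) (t i - s i) 0 :=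
      (hasDerivAt_mul_const (t i - s i)).const_add (s i)
    have houter : HasDerivAt (fun u : ℝ => u ^ ρ) (ρ * s i ^ (ρ - 1)) (s i) :=
      Real.hasDerivAt_rpow_const (Or.inl (hpos i).ne')
    have hcomp := (by simpa using houter :
        HasDerivAt (fun u : ℝ => u ^ ρ) (ρ * s i ^ (ρ - 1))
          ((fun l : ℝ => s i + l * (t i - s i)) 0)).comp 0 hinner
    simpa [Function.comp_def, mul_assoc] using hcomp
  have hsum : HasDerivAt (fun l : ℝ => ∑ i, (s i + l * (t i - s i)) ^ ρ)
      (∑ i, ρ * s i ^ (ρ - 1) * (t i - s i)) 0 :=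
    HasDerivAt.fun_sum (fun i _ => hder i)
  have hDpos : 0 < ∑ i, ρ * s i ^ (ρ - 1) * (t i - s i) := by
    have he : ∑ i, ρ * s i ^ (ρ - 1) * (t i - s i)
        = ρ * ∑ i, s i ^ (ρ - 1) * (t i - s i) := by
      rw [Finset.mul_sum]; exact Finset.sum_congr rfl (fun i _ => by ring)
    rw [he]; exact mul_pos hρ0 hD
  obtain ⟨l, hl0, hl1, hlt⟩ := exists_gt_of_derivAt_pos hsum hDpos (by norm_num : (0:ℝ) < 1)
  refine ⟨fun i j => (1 - l) * x' i j + l * y i j, comb_valid hx' hy hl0.le hl1.le, ?_⟩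
  have hbound : ∀ i : Fin n,
      (s i + l * (t i - s i)) ^ ρ ≤ v i (fun j => (1 - l) * x' i j + l * y i j) ^ ρ := by
    intro i
    have hcomb := comb_val (hconc i) (hx'.1 i) (hy.1 i) hl0.le hl1.le
    have hc : 0 ≤ s i + l * (t i - s i) := by nlinarith [hpos i, htn i]
    refine Real.rpow_le_rpow hc ?_ hρ0.le
    calc s i + l * (t i - s i) = (1 - l) * s i + l * t i := by ring
      _ ≤ _ := hcomb
  calc ∑ i, s i ^ ρ < ∑ i, (s i + l * (t i - s i)) ^ ρ := by simpa using hlt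
    _ ≤ _ := Finset.sum_le_sum (fun i _ => hbound i)

lemma improveP {n m : ℕ} (v : Fin n → (Fin m → ℝ) → ℝ) (p : ℝ) (hp : p < 0)
    (hmono : ∀ i, MonotoneVal (v i)) (hnorm : ∀ i, v i 0 = 0)
    (hconc : ∀ i, ConcaveOn ℝ {y : Fin m → ℝ | Nonneg y} (v i))
    (x' y : Fin n → Fin m → ℝ) (hx' : ValidAlloc x') (hy : ValidAlloc y)
    (hpos : ∀ i, 0 < v i (x' i))
    (hD : 0 < ∑ i, v i (x' i) ^ p * (v i (y i) - v i (x' i))) :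
    ∃ z, ValidAlloc z ∧ (∀ i, 0 < v i (z i)) ∧
      ∑ i, v i (x' i) * v i (z i) ^ p < ∑ i, v i (x' i) * v i (x' i) ^ p := by
  set s : Fin n → ℝ := fun i => v i (x' i) with hs
  set t : Fin n → ℝ := fun i => v i (y i) with ht
  have htn : ∀ i, 0 ≤ t i := fun i => val_nonneg' (hmono i) (hnorm i) (hy.1 i)
  have hder : ∀ i : Fin n, HasDerivAt (fun l : ℝ => s i * (s i + l * (t i - s i)) ^ p)
      (s i * (p * s i ^ (p - 1) * (t i - s i))) 0 := by
    intro i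
    have hinner : HasDerivAt (fun l : ℝ => s i + l * (t i - s i)) (t i - s i) 0 :=
      (hasDerivAt_mul_const (t i - s i)).const_add (s i)
    have houter : HasDerivAt (fun u : ℝ => u ^ p) (p * s i ^ (p - 1)) (s i) :=
      Real.hasDerivAt_rpow_const (Or.inl (hpos i).ne')
    have hcomp := (by simpa using houter :
        HasDerivAt (fun u : ℝ => u ^ p) (p * s i ^ (p - 1))
          ((fun l : ℝ => s i + l * (t i - s i)) 0)).comp 0 hinner
    have := hcomp.const_mul (s i)
    simpa [Function.comp, mul_assoc] using this
  have hsum : HasDerivAt (fun l : ℝ => ∑ i, s i * (s i + l * (t i - s i)) ^ p)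
      (∑ i, s i * (p * s i ^ (p - 1) * (t i - s i))) 0 :=
    HasDerivAt.fun_sum (fun i _ => hder i)
  have hDneg : ∑ i, s i * (p * s i ^ (p - 1) * (t i - s i)) < 0 := by
    have he : ∑ i, s i * (p * s i ^ (p - 1) * (t i - s i))
        = p * ∑ i, s i ^ p * (t i - s i) := by
      rw [Finset.mul_sum]
      refine Finset.sum_congr rfl (fun i _ => ?_)
      have e : s i * s i ^ (p - 1) = s i ^ p := by
        rw [Real.rpow_sub (hpos i), Real.rpow_one, ← mul_div_assoc,
          mul_div_cancel_left₀ _ (hpos i).ne']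
      calc s i * (p * s i ^ (p - 1) * (t i - s i))
          = p * ((s i * s i ^ (p - 1)) * (t i - s i)) := by ring
        _ = p * (s i ^ p * (t i - s i)) := by rw [e]
    rw [he]
    exact mul_neg_of_neg_of_pos hp hD
  obtain ⟨l, hl0, hl1, hlt⟩ := exists_lt_of_derivAt_neg hsum hDneg (by norm_num : (0:ℝ) < 1)
  have hcpos : ∀ i : Fin n, 0 < s i + l * (t i - s i) := by
    intro i
    have : s i + l * (t i - s i) = (1 - l) * s i + l * t i := by ring
    rw [this]
    have h1 : 0 < (1 - l) * s i := mul_pos (by linarith) (hpos i)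
    nlinarith [mul_nonneg hl0.le (htn i)]
  have hvz : ∀ i : Fin n, s i + l * (t i - s i) ≤ v i (fun j => (1 - l) * x' i j + l * y i j) := by
    intro i
    have hcomb := comb_val (hconc i) (hx'.1 i) (hy.1 i) hl0.le hl1.le
    calc s i + l * (t i - s i) = (1 - l) * s i + l * t i := by ring
      _ ≤ _ := hcomb
  refine ⟨fun i j => (1 - l) * x' i j + l * y i j, comb_valid hx' hy hl0.le hl1.le,
    fun i => lt_of_lt_of_le (hcpos i) (hvz i), ?_⟩
  have hbound : ∀ i : Fin n,
      s i * v i (fun j => (1 - l) * x' i j + l * y i j) ^ p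
        ≤ s i * (s i + l * (t i - s i)) ^ p := by
    intro i
    refine mul_le_mul_of_nonneg_left ?_ (hpos i).le
    exact Real.rpow_le_rpow_of_nonpos (hcpos i) (hvz i) hp.le
  calc ∑ i, s i * v i (fun j => (1 - l) * x' i j + l * y i j) ^ p
      ≤ ∑ i, s i * (s i + l * (t i - s i)) ^ p := Finset.sum_le_sum (fun i _ => hbound i)
    _ < ∑ i, s i * s i ^ p := by simpa using hlt

lemma improveN {n m : ℕ} (v : Fin n → (Fin m → ℝ) → ℝ)
    (hmono : ∀ i, MonotoneVal (v i)) (hnorm : ∀ i, v i 0 = 0)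
    (hconc : ∀ i, ConcaveOn ℝ {y : Fin m → ℝ | Nonneg y} (v i))
    (x' y : Fin n → Fin m → ℝ) (hx' : ValidAlloc x') (hy : ValidAlloc y)
    (hpos : ∀ i, 0 < v i (x' i))
    (hD : 0 < ∑ i, (v i (y i) - v i (x' i))) :
    ∃ z, ValidAlloc z ∧ (∀ i, 0 < v i (z i)) ∧
      ∑ i, v i (x' i) * Real.log (v i (x' i)) < ∑ i, v i (x' i) * Real.log (v i (z i)) := by
  set s : Fin n → ℝ := fun i => v i (x' i) with hs
  set t : Fin n → ℝ := fun i => v i (y i) with ht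
  have htn : ∀ i, 0 ≤ t i := fun i => val_nonneg' (hmono i) (hnorm i) (hy.1 i)
  have hder : ∀ i : Fin n, HasDerivAt (fun l : ℝ => s i * Real.log (s i + l * (t i - s i)))
      (s i * ((s i)⁻¹ * (t i - s i))) 0 := by
    intro i
    have hinner : HasDerivAt (fun l : ℝ => s i + l * (t i - s i)) (t i - s i) 0 :=
      (hasDerivAt_mul_const (t i - s i)).const_add (s i)
    have houter : HasDerivAt Real.log (s i)⁻¹ (s i) := Real.hasDerivAt_log (hpos i).ne'
    have hcomp := (by simpa using houter :
        HasDerivAt Real.log (s i)⁻¹ ((fun l : ℝ => s i + l * (t i - s i)) 0)).comp 0 hinner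
    have := hcomp.const_mul (s i)
    simpa [Function.comp, mul_assoc] using this
  have hsum : HasDerivAt (fun l : ℝ => ∑ i, s i * Real.log (s i + l * (t i - s i)))
      (∑ i, s i * ((s i)⁻¹ * (t i - s i))) 0 :=
    HasDerivAt.fun_sum (fun i _ => hder i)
  have hDpos : 0 < ∑ i, s i * ((s i)⁻¹ * (t i - s i)) := by
    have he : ∑ i, s i * ((s i)⁻¹ * (t i - s i)) = ∑ i, (t i - s i) := by
      refine Finset.sum_congr rfl (fun i _ => ?_)
      rw [← mul_assoc, mul_inv_cancel₀ (hpos i).ne', one_mul]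
    rw [he]; exact hD
  obtain ⟨l, hl0, hl1, hlt⟩ := exists_gt_of_derivAt_pos hsum hDpos (by norm_num : (0:ℝ) < 1)
  have hcpos : ∀ i : Fin n, 0 < s i + l * (t i - s i) := by
    intro i
    have : s i + l * (t i - s i) = (1 - l) * s i + l * t i := by ring
    rw [this]
    have h1 : 0 < (1 - l) * s i := mul_pos (by linarith) (hpos i)
    nlinarith [mul_nonneg hl0.le (htn i)]
  have hvz : ∀ i : Fin n, s i + l * (t i - s i) ≤ v i (fun j => (1 - l) * x' i j + l * y i j) := by
    intro i
    have hcomb := comb_val (hconc i) (hx'.1 i) (hy.1 i) hl0.le hl1.le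
    calc s i + l * (t i - s i) = (1 - l) * s i + l * t i := by ring
      _ ≤ _ := hcomb
  refine ⟨fun i j => (1 - l) * x' i j + l * y i j, comb_valid hx' hy hl0.le hl1.le,
    fun i => lt_of_lt_of_le (hcpos i) (hvz i), ?_⟩
  have hbound : ∀ i : Fin n,
      s i * Real.log (s i + l * (t i - s i))
        ≤ s i * Real.log (v i (fun j => (1 - l) * x' i j + l * y i j)) := by
    intro i
    exact mul_le_mul_of_nonneg_left (Real.log_le_log (hcpos i) (hvz i)) (hpos i).le
  calc ∑ i, s i * Real.log (s i)
      < ∑ i, s i * Real.log (s i + l * (t i - s i)) := by simpa using hlt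
    _ ≤ _ := Finset.sum_le_sum (fun i _ => hbound i)

theorem stmt16 {n m : ℕ} (v : Fin n → (Fin m → ℝ) → ℝ) (ρ : ℝ)
    (hρ0 : 0 < ρ) (hρ1 : ρ ≤ 1)
    (hnz : ∀ i, NonzeroVal (v i)) (hmono : ∀ i, MonotoneVal (v i))
    (hnorm : ∀ i, v i 0 = 0)
    (hconc : ∀ i, ConcaveOn ℝ {y : Fin m → ℝ | Nonneg y} (v i))
    (hdiff : ∀ i, DiffVal (v i))
    (x' : Fin n → Fin m → ℝ) (hx' : ValidAlloc x')
    (hpos : ∀ i, 0 < v i (x' i))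
    (a : Fin n → ℝ) (ha : ∀ i, a i = v i (x' i)) :
    (ρ ≠ 1 → (MaxCES v ρ x' ↔ MaxWCESneg v a (ρ - 1) x')) ∧
    (ρ = 1 → (MaxCES v ρ x' ↔ MaxWNash v a x')) := by
  by_cases hn : n = 0
  · subst hn
    have h1 : MaxCES v ρ x' := ⟨hx', fun y _ => le_of_eq (by simp [CES])⟩
    have h2 : MaxWCESneg v a (ρ - 1) x' := ⟨hx', hpos, fun y _ _ => le_of_eq (by simp)⟩
    have h3 : MaxWNash v a x' := ⟨hx', hpos, fun y _ _ => le_of_eq (by simp)⟩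
    exact ⟨fun _ => ⟨fun _ => h2, fun _ => h1⟩, fun _ => ⟨fun _ => h3, fun _ => h1⟩⟩
  haveI : Nonempty (Fin n) := ⟨⟨0, Nat.pos_of_ne_zero hn⟩⟩
  have hSnn : ∀ y : Fin n → Fin m → ℝ, ValidAlloc y → (0:ℝ) ≤ ∑ i, v i (y i) ^ ρ := by
    intro y hy
    exact Finset.sum_nonneg fun i _ =>
      Real.rpow_nonneg (val_nonneg' (hmono i) (hnorm i) (hy.1 i)) ρ
  have hMaxCES_iff : MaxCES v ρ x' ↔
      ∀ y, ValidAlloc y → ∑ i, v i (y i) ^ ρ ≤ ∑ i, v i (x' i) ^ ρ := by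
    constructor
    · intro hM y hy
      have h := hM.2 y hy
      unfold CES at h
      have h2 := Real.rpow_le_rpow (Real.rpow_nonneg (hSnn y hy) _) h hρ0.le
      have e : ∀ A : ℝ, 0 ≤ A → (A ^ (1/ρ)) ^ ρ = A := fun A hA => by
        rw [one_div, Real.rpow_inv_rpow hA hρ0.ne']
      rwa [e _ (hSnn y hy), e _ (hSnn x' hx')] at h2
    · intro h
      refine ⟨hx', fun y hy => ?_⟩
      exact Real.rpow_le_rpow (hSnn y hy) (h y hy) (by positivity)
  constructor
  · -- ρ ≠ 1 : weighted CES with exponent ρ - 1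
    intro hne
    have hρlt : ρ < 1 := lt_of_le_of_ne hρ1 hne
    have hplt : ρ - 1 < 0 := by linarith
    have h1p : 1 / (ρ - 1) < 0 := div_neg_of_pos_of_neg one_pos hplt
    constructor
    · intro hM
      refine ⟨hx', hpos, ?_⟩
      intro y hy hyp
      have hPy : 0 < ∑ i, a i * v i (y i) ^ (ρ - 1) :=
        Finset.sum_pos (fun i _ => by
          rw [ha i]; exact mul_pos (hpos i) (Real.rpow_pos_of_pos (hyp i) _))
          Finset.univ_nonempty
      have hPx : 0 < ∑ i, a i * v i (x' i) ^ (ρ - 1) :=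
        Finset.sum_pos (fun i _ => by
          rw [ha i]; exact mul_pos (hpos i) (Real.rpow_pos_of_pos (hpos i) _))
          Finset.univ_nonempty
      rw [Real.rpow_le_rpow_iff_of_neg hPy hPx h1p]
      by_contra hc
      push_neg at hc
      simp only [ha] at hc
      have hD0 := D0_pos_of_P_lt hplt hpos hyp hc
      obtain ⟨z, hz, hzS⟩ := improveS v ρ hρ0 hmono hnorm hconc x' y hx' hy hpos hD0
      exact absurd (hMaxCES_iff.mp hM z hz) (not_le.mpr hzS)
    · intro hW
      rw [hMaxCES_iff]
      intro y hy
      by_contra hc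
      push_neg at hc
      have htn : ∀ i, 0 ≤ v i (y i) := fun i => val_nonneg' (hmono i) (hnorm i) (hy.1 i)
      have hD0 := D0_pos_of_S_lt hρ0 hρ1 hpos htn hc
      obtain ⟨z, hz, hzpos, hzP⟩ :=
        improveP v (ρ - 1) hplt hmono hnorm hconc x' y hx' hy hpos hD0
      have h := hW.2.2 z hz hzpos
      have hPz : 0 < ∑ i, a i * v i (z i) ^ (ρ - 1) :=
        Finset.sum_pos (fun i _ => by
          rw [ha i]; exact mul_pos (hpos i) (Real.rpow_pos_of_pos (hzpos i) _))
          Finset.univ_nonempty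
      have hPx : 0 < ∑ i, a i * v i (x' i) ^ (ρ - 1) :=
        Finset.sum_pos (fun i _ => by
          rw [ha i]; exact mul_pos (hpos i) (Real.rpow_pos_of_pos (hpos i) _))
          Finset.univ_nonempty
      rw [Real.rpow_le_rpow_iff_of_neg hPz hPx h1p] at h
      simp only [ha] at h
      exact absurd h (not_le.mpr hzP)
  · -- ρ = 1 : weighted Nash welfare
    intro h1
    subst h1
    constructor
    · intro hM
      refine ⟨hx', hpos, ?_⟩
      intro y hy hyp
      by_contra hc
      push_neg at hc
      simp only [ha] at hc
      have hD := Dsum_pos_of_N_lt hpos hyp hc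
      have hlt : ∑ i, v i (x' i) ^ (1:ℝ) < ∑ i, v i (y i) ^ (1:ℝ) := by
        simp only [Real.rpow_one]
        rw [Finset.sum_sub_distrib] at hD
        linarith
      exact absurd (hMaxCES_iff.mp hM y hy) (not_le.mpr hlt)
    · intro hN
      rw [hMaxCES_iff]
      intro y hy
      by_contra hc
      push_neg at hc
      simp only [Real.rpow_one] at hc
      have hD : 0 < ∑ i, (v i (y i) - v i (x' i)) := by
        rw [Finset.sum_sub_distrib]; linarith
      obtain ⟨z, hz, hzpos, hzN⟩ := improveN v hmono hnorm hconc x' y hx' hy hpos hD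
      have h := hN.2.2 z hz hzpos
      simp only [ha] at h
      exact absurd h (not_le.mpr hzN)
end

section
/- Assume each valuation is Leontief: v_i(x_i) = min_{j : w_{ij} ≠ 0} x_{ij}/w_{ij} for weights w_{i1},…,w_{im} ∈ ℝ_{≥0} (not all zero). Then for any ρ ∈ (0,1] and any valid allocation x, we have x ∈ Ψ(ρ) if and only if there exist constants q_1,…,q_m ∈ ℝ_{≥0} such that, for the pricing rule p(y) = ρ·(∑_j q_j y_j)^{1/ρ}, the pair (x, p) is a Walrasian equilibrium. -/
section AuxProof
open Filter Set Topology


lemma conj_exp {ρ : ℝ} (hρ0 : 0 < ρ) (hρ1 : ρ < 1) :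
    Real.HolderConjugate (1/ρ) (1/(1-ρ)) := by
  rw [Real.holderConjugate_iff]
  constructor
  · rw [lt_div_iff₀ hρ0]; linarith
  · rw [one_div, one_div, inv_inv, inv_inv]; ring

/-- Key Young-type bound: `s ≤ ρ (s u^{ρ-1})^{1/ρ} + (1-ρ) u`. -/
lemma young_bound {ρ s u : ℝ} (hρ0 : 0 < ρ) (hρ1 : ρ < 1) (hs : 0 ≤ s) (hu : 0 < u) :
    s ≤ ρ * (s * u ^ (ρ - 1)) ^ (1/ρ) + (1 - ρ) * u := by
  have hx : 0 ≤ s * u ^ (ρ - 1) := mul_nonneg hs (Real.rpow_nonneg hu.le _)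
  have hy : 0 ≤ u ^ (1 - ρ) := Real.rpow_nonneg hu.le _
  have := Real.young_inequality_of_nonneg hx hy (conj_exp hρ0 hρ1)
  have hxy : s * u ^ (ρ - 1) * u ^ (1 - ρ) = s := by
    rw [mul_assoc, ← Real.rpow_add hu]
    norm_num
  have hyq : (u ^ (1 - ρ)) ^ (1/(1-ρ)) = u := by
    rw [← Real.rpow_mul hu.le]
    rw [mul_one_div, div_self (by linarith : 1 - ρ ≠ 0), Real.rpow_one]
  rw [hxy, hyq] at this
  simp only [one_div] at this ⊢
  rw [div_eq_mul_inv, div_eq_mul_inv, inv_inv, inv_inv] at this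
  have e1 : (s * u ^ (ρ - 1)) ^ ρ⁻¹ * ρ = ρ * (s * u ^ (ρ - 1)) ^ ρ⁻¹ := mul_comm _ _
  have e2 : u * (1 - ρ) = (1 - ρ) * u := mul_comm _ _
  linarith [this, e1, e2]

/-- There is `t > 0` with `t - ρ (t c)^{1/ρ} > 0` when `ρ < 1`. -/
lemma exists_pos_gain {ρ c : ℝ} (hρ0 : 0 < ρ) (hρ1 : ρ < 1) (hc : 0 ≤ c) :
    ∃ t : ℝ, 0 < t ∧ 0 < t - ρ * (t * c) ^ (1/ρ) := by
  have hexp : 0 < (1 - ρ)/ρ := div_pos (by linarith) hρ0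
  have hcont : ContinuousAt (fun t : ℝ => ρ * c ^ (1/ρ) * t ^ ((1-ρ)/ρ)) 0 := by
    apply ContinuousAt.mul continuousAt_const
    exact (Real.continuousAt_rpow_const 0 _ (Or.inr hexp.le))
  have h0 : (fun t : ℝ => ρ * c ^ (1/ρ) * t ^ ((1-ρ)/ρ)) 0 < 1 := by
    simp [Real.zero_rpow (ne_of_gt hexp)]
  have hev : ∀ᶠ t in 𝓝[>] (0:ℝ), ρ * c ^ (1/ρ) * t ^ ((1-ρ)/ρ) < 1 := by
    apply eventually_nhdsWithin_of_eventually_nhds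
    exact hcont.eventually_lt continuousAt_const h0
  obtain ⟨t, ht, ht0⟩ := (hev.and eventually_mem_nhdsWithin).exists
  refine ⟨t, ht0, ?_⟩
  have htc : (t * c) ^ (1/ρ) = t ^ (1/ρ) * c ^ (1/ρ) := Real.mul_rpow ht0.le hc
  have htpow : t ^ (1/ρ) = t * t ^ ((1-ρ)/ρ) := by
    nth_rewrite 2 [← Real.rpow_one t]
    rw [← Real.rpow_add ht0]
    congr 1
    field_simp
    ring
  rw [htc, htpow]
  have : t * (ρ * c ^ (1/ρ) * t ^ ((1-ρ)/ρ)) < t * 1 := mul_lt_mul_of_pos_left ht ht0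
  nlinarith [this]

/-- First-order condition: if `u > 0` maximizes `t ↦ t - ρ (t c)^{1/ρ}` over `t ≥ 0`,
then `c = u ^ (ρ - 1)`. -/
lemma foc {ρ c u : ℝ} (hρ0 : 0 < ρ) (hρ1 : ρ < 1) (hu : 0 < u) (hc : 0 ≤ c)
    (h : ∀ t, 0 ≤ t → t - ρ * (t * c) ^ (1/ρ) ≤ u - ρ * (u * c) ^ (1/ρ)) :
    c = u ^ (ρ - 1) := by
  have hρ' : ρ ≠ 0 := ne_of_gt hρ0
  have hcpos : 0 < c := by
    rcases lt_or_eq_of_le hc with h' | h'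
    · exact h'
    · exfalso
      have h1 := h (u + 1) (by positivity)
      rw [← h'] at h1
      simp only [mul_zero, Real.zero_rpow (by positivity : (1:ℝ)/ρ ≠ 0)] at h1
      linarith
  have hfh : ∀ t : ℝ, 0 ≤ t →
      t - ρ * c ^ (1/ρ) * t ^ (1/ρ) = t - ρ * (t * c) ^ (1/ρ) := by
    intro t ht
    rw [Real.mul_rpow ht hc]
    ring
  have hmax : IsLocalMax (fun t : ℝ => t - ρ * c ^ (1/ρ) * t ^ (1/ρ)) u := by
    have hIoi : Ioi (0:ℝ) ∈ 𝓝 u := isOpen_Ioi.mem_nhds hu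
    filter_upwards [hIoi] with t ht
    show t - ρ * c ^ (1/ρ) * t ^ (1/ρ) ≤ u - ρ * c ^ (1/ρ) * u ^ (1/ρ)
    rw [hfh t ht.le, hfh u hu.le]
    exact h t ht.le
  have hderiv : HasDerivAt (fun t : ℝ => t - ρ * c ^ (1/ρ) * t ^ (1/ρ))
      (1 - ρ * c ^ (1/ρ) * ((1/ρ) * u ^ (1/ρ - 1))) u := by
    have h1 : HasDerivAt (fun t : ℝ => t ^ (1/ρ)) ((1/ρ) * u ^ (1/ρ - 1)) u :=
      Real.hasDerivAt_rpow_const (Or.inl hu.ne')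
    exact (hasDerivAt_id' u).sub (h1.const_mul (ρ * c ^ (1/ρ)))
  have hzero := hmax.hasDerivAt_eq_zero hderiv
  have hone : c ^ (1/ρ) * u ^ (1/ρ - 1) = 1 := by
    have h3 : ρ * c ^ (1/ρ) * ((1/ρ) * u ^ (1/ρ - 1)) =
        (ρ * (1/ρ)) * (c ^ (1/ρ) * u ^ (1/ρ - 1)) := by ring
    rw [mul_one_div_cancel hρ', one_mul] at h3
    linarith [hzero, h3]
  have := congrArg (fun z : ℝ => z ^ ρ) hone
  simp only [Real.one_rpow] at this
  rw [Real.mul_rpow (Real.rpow_nonneg hc _) (Real.rpow_nonneg hu.le _),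
    ← Real.rpow_mul hc, ← Real.rpow_mul hu.le] at this
  rw [one_div_mul_cancel hρ', Real.rpow_one] at this
  rw [show (1/ρ - 1) * ρ = 1 - ρ by field_simp] at this
  have hupos : 0 < u ^ (1 - ρ) := Real.rpow_pos_of_pos hu _
  rw [show ρ - 1 = -(1 - ρ) by ring, Real.rpow_neg hu.le]
  field_simp
  linarith [this]

/-- One-sided derivative test at a left endpoint maximum. -/
lemma deriv_nonpos_of_max {F : ℝ → ℝ} {D θb : ℝ} (hθb : 0 < θb)
    (hD : HasDerivAt F D 0) (h : ∀ θ, 0 ≤ θ → θ ≤ θb → F θ ≤ F 0) : D ≤ 0 := by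
  have ht := hasDerivAt_iff_tendsto_slope.mp hD
  have hmono : 𝓝[>] (0:ℝ) ≤ 𝓝[≠] (0:ℝ) :=
    nhdsWithin_mono 0 (fun t ht => ne_of_gt ht)
  have ht' : Tendsto (slope F 0) (𝓝[>] (0:ℝ)) (𝓝 D) := ht.mono_left hmono
  apply le_of_tendsto ht'
  filter_upwards [Ioo_mem_nhdsGT_of_mem (Set.left_mem_Ico.mpr hθb)] with t htI
  rw [slope_def_field]
  apply div_nonpos_of_nonpos_of_nonneg
  · have := h t htI.1.le htI.2.le; linarith
  · linarith [htI.1]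

lemma grad_le {n : ℕ} {ρ : ℝ} (hρ0 : 0 < ρ) (u d : Fin n → ℝ) (hu : ∀ i, 0 < u i)
    {θb : ℝ} (hθb : 0 < θb)
    (h : ∀ θ, 0 ≤ θ → θ ≤ θb → ∑ i, (u i + θ * d i) ^ ρ ≤ ∑ i, (u i) ^ ρ) :
    ∑ i, (u i) ^ (ρ - 1) * d i ≤ 0 := by
  have hF : HasDerivAt (fun θ => ∑ i, (u i + θ * d i) ^ ρ)
      (∑ i, ρ * (u i) ^ (ρ-1) * d i) 0 := by
    apply HasDerivAt.fun_sum
    intro i _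
    have hin : HasDerivAt (fun θ : ℝ => u i + θ * d i) (d i) 0 := by
      simpa using (hasDerivAt_mul_const (d i)).const_add (u i)
    have hne : (fun θ : ℝ => u i + θ * d i) 0 ≠ 0 := by simpa using (hu i).ne'
    have := hin.rpow_const (p := ρ) (Or.inl hne)
    have e : d i * ρ * (u i + 0 * d i) ^ (ρ - 1) = ρ * (u i) ^ (ρ-1) * d i := by
      rw [zero_mul, add_zero]; ring
    rw [e] at this
    exact this
  have hle := deriv_nonpos_of_max hθb hF (fun θ h0 h1 => by simpa using h θ h0 h1)
  have hsum : ∑ i, ρ * (u i) ^ (ρ-1) * d i = ρ * ∑ i, (u i)^(ρ-1) * d i := by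
    rw [Finset.mul_sum]; apply Finset.sum_congr rfl; intro i _; ring
  rw [hsum] at hle
  nlinarith [hle, hρ0]


open Finset

section Farkas
variable {n : ℕ} {ι : Type*} [Fintype ι] [DecidableEq ι]

lemma cone_carath (a : ι → (Fin n → ℝ)) (T : Finset ι) :
    ∀ (q : ι → ℝ), (∀ i, 0 ≤ q i) → (∀ i ∉ T, q i = 0) →
    ∃ (S : Finset ι) (q' : ι → ℝ), LinearIndependent ℝ (fun j : S => a j) ∧
      (∀ i, 0 ≤ q' i) ∧ (∀ i ∉ S, q' i = 0) ∧ ∑ i, q' i • a i = ∑ i, q i • a i := by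
  induction T using Finset.strongInduction with
  | _ T ih =>
    intro q hq0 hqs
    by_cases hind : LinearIndependent ℝ (fun j : T => a j)
    · exact ⟨T, q, hind, hq0, hqs, rfl⟩
    · obtain ⟨g, hgsum, j₀, hg0⟩ := Fintype.not_linearIndependent_iff.mp hind
      -- make sure some coefficient is positive
      obtain ⟨g, hgsum, j₀, hg0⟩ :
          ∃ g : T → ℝ, ∑ j : T, g j • a j = 0 ∧ ∃ j₀ : T, 0 < g j₀ := by
        by_cases hpos : ∃ j : T, 0 < g j
        · exact ⟨g, hgsum, hpos⟩
        · push_neg at hpos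
          refine ⟨-g, by simp only [Pi.neg_apply, neg_smul, Finset.sum_neg_distrib, hgsum, neg_zero], j₀, ?_⟩
          have := lt_of_le_of_ne (hpos j₀) hg0
          simpa using this
      set lam : ι → ℝ := fun i => if h : i ∈ T then g ⟨i, h⟩ else 0 with hlam
      have hlamsum : ∑ i, lam i • a i = 0 := by
        rw [← Finset.sum_subset (Finset.subset_univ T)
          (by intro i _ hiT; simp [hlam, hiT])]
        rw [← Finset.sum_attach T (fun i => lam i • a i)]
        rw [Finset.univ_eq_attach] at hgsum
        simpa [hlam] using hgsum
      have hj₀T : (j₀ : ι) ∈ T := j₀.2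
      set P : Finset ι := T.filter (fun i => 0 < lam i) with hP
      have hPne : P.Nonempty := ⟨j₀, by simp [hP, hlam, hj₀T, hg0]⟩
      set t : ℝ := P.inf' hPne (fun i => q i / lam i) with ht
      have hlamT : ∀ i ∉ T, lam i = 0 := by intro i hi; simp [hlam, hi]
      have ht0 : 0 ≤ t := by
        apply Finset.le_inf'
        intro b hb
        have := (Finset.mem_filter.mp hb).2
        exact div_nonneg (hq0 b) this.le
      obtain ⟨jm, hjmP, hjm⟩ := Finset.exists_mem_eq_inf' hPne (fun i => q i / lam i)
      have hjmT : jm ∈ T := (Finset.mem_filter.mp hjmP).1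
      have hjml : 0 < lam jm := (Finset.mem_filter.mp hjmP).2
      set q'' : ι → ℝ := fun i => q i - t * lam i with hq''
      have hq''0 : ∀ i, 0 ≤ q'' i := by
        intro i
        rcases le_or_gt (lam i) 0 with h | h
        · have : t * lam i ≤ 0 := mul_nonpos_of_nonneg_of_nonpos ht0 h
          simp only [hq'']
          nlinarith [hq0 i]
        · have hiP : i ∈ P := by
            refine Finset.mem_filter.mpr ⟨?_, h⟩
            by_contra hiT
            rw [hlamT i hiT] at h; exact lt_irrefl _ h
          have := Finset.inf'_le (fun i => q i / lam i) hiP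
          rw [← ht] at this
          have := (le_div_iff₀ h).mp this
          simp only [hq'']; linarith
      have hq''jm : q'' jm = 0 := by
        simp only [hq'', hjm, ht]
        field_simp
        ring
      have hq''s : ∀ i ∉ T.erase jm, q'' i = 0 := by
        intro i hi
        by_cases h : i = jm
        · rw [h]; exact hq''jm
        · have hiT : i ∉ T := fun hT => hi (Finset.mem_erase.mpr ⟨h, hT⟩)
          simp [hq'', hqs i hiT, hlamT i hiT]
      have hsum : ∑ i, q'' i • a i = ∑ i, q i • a i := by
        simp only [hq'', sub_smul, Finset.sum_sub_distrib, mul_smul]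
        rw [← Finset.smul_sum, hlamsum, smul_zero, sub_zero]
      obtain ⟨S, q', h1, h2, h3, h4⟩ :=
        ih (T.erase jm) (Finset.erase_ssubset hjmT) q'' hq''0 hq''s
      exact ⟨S, q', h1, h2, h3, h4.trans hsum⟩

lemma cone_closed (a : ι → (Fin n → ℝ)) :
    IsClosed {z : Fin n → ℝ | ∃ q : ι → ℝ, (∀ i, 0 ≤ q i) ∧ z = ∑ i, q i • a i} := by
  have hrw : {z : Fin n → ℝ | ∃ q : ι → ℝ, (∀ i, 0 ≤ q i) ∧ z = ∑ i, q i • a i} =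
      ⋃ (S : Finset ι) (_ : LinearIndependent ℝ (fun j : S => a j)),
        {z | ∃ q : ι → ℝ, (∀ i, 0 ≤ q i) ∧ (∀ i ∉ S, q i = 0) ∧ z = ∑ i, q i • a i} := by
    ext z
    simp only [Set.mem_setOf_eq, Set.mem_iUnion]
    constructor
    · rintro ⟨q, hq0, rfl⟩
      obtain ⟨S, q', h1, h2, h3, h4⟩ := cone_carath a Finset.univ q hq0 (by simp)
      exact ⟨S, h1, q', h2, h3, h4.symm⟩
    · rintro ⟨S, _, q, hq0, _, rfl⟩
      exact ⟨q, hq0, rfl⟩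
  rw [hrw]
  apply isClosed_iUnion_of_finite
  intro S
  apply isClosed_iUnion_of_finite
  intro hS
  -- the image of the nonnegative orthant under an injective linear map
  set L : ({x // x ∈ S} → ℝ) →ₗ[ℝ] (Fin n → ℝ) :=
    ∑ j : S, (LinearMap.proj (R := ℝ) (φ := fun _ : {x // x ∈ S} => ℝ) j).smulRight (a j) with hL
  have hLapp : ∀ c : {x // x ∈ S} → ℝ, L c = ∑ j : S, c j • a j := by
    intro c
    simp [hL, LinearMap.sum_apply]
  have hinj : LinearMap.ker L = ⊥ := by
    rw [LinearMap.ker_eq_bot']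
    intro c hc
    rw [hLapp] at hc
    funext j
    exact Fintype.linearIndependent_iff.mp hS c hc j
  have hemb := LinearMap.isClosedEmbedding_of_injective hinj
  have himg : {z : Fin n → ℝ | ∃ q : ι → ℝ, (∀ i, 0 ≤ q i) ∧ (∀ i ∉ S, q i = 0) ∧
      z = ∑ i, q i • a i} = L '' {c | ∀ j, 0 ≤ c j} := by
    ext z
    simp only [Set.mem_setOf_eq, Set.mem_image]
    constructor
    · rintro ⟨q, hq0, hqs, rfl⟩
      refine ⟨fun j => q j, fun j => hq0 j, ?_⟩
      rw [hLapp]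
      rw [← Finset.sum_subset (Finset.subset_univ S) (by intro i _ hiS; simp [hqs i hiS])]
      rw [← Finset.sum_attach S (fun i => q i • a i)]
      rw [Finset.univ_eq_attach]
    · rintro ⟨c, hc0, rfl⟩
      classical
      refine ⟨fun i => if h : i ∈ S then c ⟨i, h⟩ else 0, ?_, ?_, ?_⟩
      · intro i; by_cases h : i ∈ S <;> simp [h, hc0]
      · intro i h; simp [h]
      · rw [hLapp]
        rw [← Finset.sum_subset (Finset.subset_univ S) (by intro i _ hiS; simp [hiS])]
        rw [← Finset.sum_attach S (fun i => (if h : i ∈ S then c ⟨i, h⟩ else 0) • a i)]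
        rw [Finset.univ_eq_attach]
        apply Finset.sum_congr rfl
        intro j _
        simp
  rw [himg]
  apply hemb.isClosedMap
  have hKi : {c : {x // x ∈ S} → ℝ | ∀ j, 0 ≤ c j} = ⋂ j, {c | 0 ≤ c j} := by
    ext c; simp [Set.mem_iInter]
  rw [hKi]
  exact isClosed_iInter (fun j => isClosed_le continuous_const (continuous_apply j))

lemma farkas (a : ι → (Fin n → ℝ)) (g : Fin n → ℝ)
    (h : ∀ d : Fin n → ℝ, (∀ i, ∑ k, d k * a i k ≤ 0) → ∑ k, d k * g k ≤ 0) :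
    ∃ q : ι → ℝ, (∀ i, 0 ≤ q i) ∧ ∀ k, ∑ i, q i * a i k = g k := by
  set C := {z : Fin n → ℝ | ∃ q : ι → ℝ, (∀ i, 0 ≤ q i) ∧ z = ∑ i, q i • a i} with hC
  suffices hg : g ∈ C by
    obtain ⟨q, hq0, hq⟩ := hg
    refine ⟨q, hq0, fun k => ?_⟩
    rw [hq]
    simp [Finset.sum_apply]
  by_contra hg
  have hconv : Convex ℝ C := by
    rintro z₁ ⟨q₁, hq₁, rfl⟩ z₂ ⟨q₂, hq₂, rfl⟩ α β hα hβ hαβ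
    refine ⟨fun i => α * q₁ i + β * q₂ i,
      fun i => add_nonneg (mul_nonneg hα (hq₁ i)) (mul_nonneg hβ (hq₂ i)), ?_⟩
    simp only [add_smul, mul_smul, Finset.sum_add_distrib, ← Finset.smul_sum]
  have hclosed : IsClosed C := cone_closed a
  obtain ⟨f, s, hfC, hsg⟩ := geometric_hahn_banach_closed_point hconv hclosed hg
  have h0C : (0 : Fin n → ℝ) ∈ C := ⟨0, by simp, by simp⟩
  have hs0 : 0 < s := by simpa using hfC 0 h0C
  have hcone : ∀ z ∈ C, ∀ t : ℝ, 0 ≤ t → t • z ∈ C := by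
    rintro z ⟨q, hq0, rfl⟩ t ht
    exact ⟨fun i => t * q i, fun i => mul_nonneg ht (hq0 i),
      by simp only [mul_smul, ← Finset.smul_sum]⟩
  have hfle : ∀ z ∈ C, f z ≤ 0 := by
    intro z hz
    by_contra hzf
    push_neg at hzf
    have ht0 : (0:ℝ) ≤ (s + 1) / f z := by
      apply div_nonneg (by linarith) (le_of_lt hzf)
    have := hfC _ (hcone z hz _ ht0)
    rw [map_smul] at this
    simp only [smul_eq_mul] at this
    rw [div_mul_cancel₀ _ (ne_of_gt hzf)] at this
    linarith
  have haC : ∀ i, a i ∈ C := by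
    intro i
    refine ⟨fun i' => if i' = i then 1 else 0, fun i' => by by_cases h : i' = i <;> simp [h], ?_⟩
    simp only [ite_smul, one_smul, zero_smul]
    rw [Finset.sum_ite_eq' Finset.univ i a]
    simp
  set d : Fin n → ℝ := fun k => f (Pi.single k 1) with hd
  have hrep : ∀ z : Fin n → ℝ, f z = ∑ k, d k * z k := by
    intro z
    have hz : z = ∑ k, z k • (Pi.single k 1 : Fin n → ℝ) := by
      funext j
      simp [Finset.sum_apply, Pi.single_apply, mul_ite]
    conv_lhs => rw [hz]
    rw [map_sum]
    apply Finset.sum_congr rfl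
    intro k _
    rw [map_smul]
    simp [hd, mul_comm]
  have hda : ∀ i, ∑ k, d k * a i k ≤ 0 := fun i => by rw [← hrep]; exact hfle _ (haC i)
  have := h d hda
  rw [← hrep] at this
  linarith

end Farkas




section Leo
variable {m : ℕ} {wi : Fin m → ℝ} {vi : ℝ} {y : Fin m → ℝ}

lemma leo_nonneg (hls : IsLeast {t : ℝ | ∃ j, wi j ≠ 0 ∧ t = y j / wi j} vi)
    (hw : ∀ j, 0 ≤ wi j) (hy : Nonneg y) : 0 ≤ vi := by
  obtain ⟨⟨j, hj, he⟩, -⟩ := hls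
  exact he ▸ div_nonneg (hy j) (hw j)

lemma leo_le (hls : IsLeast {t : ℝ | ∃ j, wi j ≠ 0 ∧ t = y j / wi j} vi)
    (hw : ∀ j, 0 ≤ wi j) (hy : Nonneg y) (j : Fin m) : vi * wi j ≤ y j := by
  rcases eq_or_ne (wi j) 0 with h | h
  · rw [h, mul_zero]; exact hy j
  · have hpos : 0 < wi j := lt_of_le_of_ne (hw j) (Ne.symm h)
    have := hls.2 ⟨j, h, rfl⟩
    exact (le_div_iff₀ hpos).mp this

lemma leo_scale (hw : ∀ j, 0 ≤ wi j) (hnz : ∃ j, wi j ≠ 0) {c : ℝ}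
    (hls : IsLeast {t : ℝ | ∃ j, wi j ≠ 0 ∧ t = (c • wi) j / wi j} vi) : vi = c := by
  obtain ⟨j0, hj0⟩ := hnz
  apply hls.unique
  constructor
  · refine ⟨j0, hj0, ?_⟩
    simp only [Pi.smul_apply, smul_eq_mul]
    rw [mul_div_assoc, div_self hj0, mul_one]
  · rintro t ⟨j, hj, rfl⟩
    simp only [Pi.smul_apply, smul_eq_mul]
    rw [mul_div_assoc, div_self hj, mul_one]

end Leo











section Aux
variable {n m : ℕ}

lemma market (q : Fin m → ℝ) (hq0 : ∀ j, 0 ≤ q j) {ρ : ℝ} (hρ0 : 0 < ρ)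
    (x : Fin n → Fin m → ℝ)
    (hclear : ∀ j, NonzeroCost (fun y => ρ * (∑ j, q j * y j) ^ (1/ρ)) j →
      ∑ i, x i j = 1) :
    ∑ j, q j = ∑ i, ∑ j, q j * x i j := by
  classical
  rw [Finset.sum_comm]
  apply Finset.sum_congr rfl
  intro j _
  rcases eq_or_lt_of_le (hq0 j) with h | h
  · simp [← h]
  · have hsum : ∑ l, q l * (Pi.single j 1 : Fin m → ℝ) l = q j := by
      rw [Finset.sum_eq_single j]
      · simp
      · intro l _ hl; simp [Pi.single_apply, hl]
      · simp
    have hnz : NonzeroCost (fun y => ρ * (∑ j, q j * y j) ^ (1/ρ)) j := by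
      refine ⟨(Pi.single j 1 : Fin m → ℝ), ?_, ?_, ?_⟩
      · intro l; by_cases hl : l = j <;> simp [Pi.single_apply, hl]
      · intro l hl; simp [Pi.single_apply, hl]
      · simp only [hsum]
        exact mul_pos hρ0 (Real.rpow_pos_of_pos h _)
    rw [← Finset.mul_sum, hclear j hnz, mul_one]

lemma sumQ_le (q : Fin m → ℝ) (hq0 : ∀ j, 0 ≤ q j) (y : Fin n → Fin m → ℝ)
    (hy : ∀ j, ∑ i, y i j ≤ 1) :
    ∑ i, ∑ j, q j * y i j ≤ ∑ j, q j := by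
  rw [Finset.sum_comm]
  apply Finset.sum_le_sum
  intro j _
  rw [← Finset.mul_sum]
  calc q j * ∑ i, y i j ≤ q j * 1 := by
        apply mul_le_mul_of_nonneg_left (hy j) (hq0 j)
    _ = q j := mul_one _
end Aux


lemma rev_core {n m : ℕ} (v : Fin n → (Fin m → ℝ) → ℝ) (w : Fin n → Fin m → ℝ)
    (hw_nn : ∀ i j, 0 ≤ w i j) (hw_nz : ∀ i, ∃ j, w i j ≠ 0)
    (hv : ∀ i (y : Fin m → ℝ), Nonneg y →
      IsLeast {t : ℝ | ∃ j, w i j ≠ 0 ∧ t = y j / w i j} (v i y))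
    {ρ : ℝ} (hρ0 : 0 < ρ) (hρ1 : ρ ≤ 1)
    (x : Fin n → Fin m → ℝ) (q : Fin m → ℝ) (hq0 : ∀ j, 0 ≤ q j)
    (hdem : ∀ i, InDemand (v i) (fun y => ρ * (∑ j, q j * y j) ^ (1/ρ)) (x i))
    (hvalid : ValidAlloc x)
    (hclear : ∀ j, NonzeroCost (fun y => ρ * (∑ j, q j * y j) ^ (1/ρ)) j → ∑ i, x i j = 1)
    (y : Fin n → Fin m → ℝ) (hy : ValidAlloc y) :
    ∑ i, v i (y i) ^ ρ ≤ ∑ i, v i (x i) ^ ρ := by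
  classical
  have hx1 := hvalid.1
  have hy1 := hy.1
  have hu0 : ∀ i, 0 ≤ v i (x i) := fun i => leo_nonneg (hv i _ (hx1 i)) (hw_nn i) (hx1 i)
  have hs0 : ∀ i, 0 ≤ v i (y i) := fun i => leo_nonneg (hv i _ (hy1 i)) (hw_nn i) (hy1 i)
  have hswnn : ∀ (t : ℝ), 0 ≤ t → ∀ i, Nonneg (t • w i) := by
    intro t ht i j
    show 0 ≤ t * w i j
    exact mul_nonneg ht (hw_nn i j)
  have hsw : ∀ (t : ℝ) (i : Fin n), 0 ≤ t → v i (t • w i) = t := fun t i ht =>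
    leo_scale (hw_nn i) (hw_nz i) (hv i _ (hswnn t ht i))
  have hc0 : ∀ i, 0 ≤ ∑ j, q j * w i j :=
    fun i => Finset.sum_nonneg fun j _ => mul_nonneg (hq0 j) (hw_nn i j)
  have hQx0 : ∀ i, 0 ≤ ∑ j, q j * x i j :=
    fun i => Finset.sum_nonneg fun j _ => mul_nonneg (hq0 j) (hx1 i j)
  have hQxc : ∀ i, v i (x i) * ∑ j, q j * w i j ≤ ∑ j, q j * x i j := by
    intro i
    rw [Finset.mul_sum]
    apply Finset.sum_le_sum; intro j _
    have h := leo_le (hv i _ (hx1 i)) (hw_nn i) (hx1 i) j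
    calc v i (x i) * (q j * w i j) = q j * (v i (x i) * w i j) := by ring
      _ ≤ q j * x i j := mul_le_mul_of_nonneg_left h (hq0 j)
  have hQyc : ∀ i, v i (y i) * ∑ j, q j * w i j ≤ ∑ j, q j * y i j := by
    intro i
    rw [Finset.mul_sum]
    apply Finset.sum_le_sum; intro j _
    have h := leo_le (hv i _ (hy1 i)) (hw_nn i) (hy1 i) j
    calc v i (y i) * (q j * w i j) = q j * (v i (y i) * w i j) := by ring
      _ ≤ q j * y i j := mul_le_mul_of_nonneg_left h (hq0 j)
  have hkey : ∀ (i : Fin n) (t : ℝ), 0 ≤ t →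
      t - ρ * (t * ∑ j, q j * w i j) ^ (1/ρ) ≤
        v i (x i) - ρ * (∑ j, q j * x i j) ^ (1/ρ) := by
    intro i t ht
    have h1 : v i (t • w i) - ρ * (∑ j, q j * (t • w i) j) ^ (1/ρ) ≤
        v i (x i) - ρ * (∑ j, q j * x i j) ^ (1/ρ) :=
      (hdem i).2 (t • w i) (hswnn t ht i)
    rw [hsw t i ht] at h1
    have h2 : ∑ j, q j * (t • w i) j = t * ∑ j, q j * w i j := by
      rw [Finset.mul_sum]
      apply Finset.sum_congr rfl; intro j _
      show q j * (t * w i j) = t * (q j * w i j)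
      ring
    rw [h2] at h1; exact h1
  have hmkt : ∑ j, q j = ∑ i, ∑ j, q j * x i j := market q hq0 hρ0 x hclear
  have hQyle : ∑ i, ∑ j, q j * y i j ≤ ∑ j, q j := sumQ_le q hq0 y hy.2
  rcases eq_or_lt_of_le hρ1 with hρe | hρlt
  · -- ρ = 1
    subst hρe
    have hdy : ∀ i, v i (y i) ≤ (∑ j, q j * y i j) +
        (v i (x i) - ∑ j, q j * x i j) := by
      intro i
      have h1 : v i (y i) - (1:ℝ) * (∑ j, q j * y i j) ^ ((1:ℝ)/1) ≤
          v i (x i) - (1:ℝ) * (∑ j, q j * x i j) ^ ((1:ℝ)/1) := (hdem i).2 (y i) (hy1 i)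
      norm_num [Real.rpow_one] at h1
      linarith
    have hsum := Finset.sum_le_sum (fun i (_ : i ∈ Finset.univ) => hdy i)
    rw [Finset.sum_add_distrib, Finset.sum_sub_distrib] at hsum
    simp only [Real.rpow_one]
    linarith [hQyle, hmkt, hsum]
  · -- ρ < 1
    have hcpos : ∀ i, 0 < ∑ j, q j * w i j := by
      intro i
      rcases eq_or_lt_of_le (hc0 i) with h | h
      · exfalso
        set K := v i (x i) - ρ * (∑ j, q j * x i j) ^ (1/ρ) with hK
        have hk := hkey i (max 0 (K+1)) (le_max_left _ _)
        rw [← h, mul_zero, Real.zero_rpow (by positivity : (1:ℝ)/ρ ≠ 0), mul_zero, sub_zero] at hk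
        have := le_max_right 0 (K+1)
        rw [← hK] at hk
        linarith
      · exact h
    have hupos : ∀ i, 0 < v i (x i) := by
      intro i
      rcases eq_or_lt_of_le (hu0 i) with h | h
      · exfalso
        obtain ⟨t, ht0, hgain⟩ := exists_pos_gain hρ0 hρlt (hc0 i)
        have hk := hkey i t ht0.le
        have hQnn : 0 ≤ ρ * (∑ j, q j * x i j) ^ (1/ρ) :=
          mul_nonneg hρ0.le (Real.rpow_nonneg (hQx0 i) _)
        rw [← h] at hk
        linarith
      · exact h
    have hQxeq : ∀ i, ∑ j, q j * x i j = v i (x i) * ∑ j, q j * w i j := by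
      intro i
      refine le_antisymm ?_ (hQxc i)
      have hk := hkey i (v i (x i)) (hu0 i)
      have h2 : (∑ j, q j * x i j) ^ (1/ρ) ≤ (v i (x i) * ∑ j, q j * w i j) ^ (1/ρ) := by
        have : ρ * (∑ j, q j * x i j) ^ (1/ρ) ≤
            ρ * (v i (x i) * ∑ j, q j * w i j) ^ (1/ρ) := by linarith
        exact le_of_mul_le_mul_left this hρ0
      exact (Real.rpow_le_rpow_iff (hQx0 i) (mul_nonneg (hu0 i) (hc0 i))
        (by positivity : (0:ℝ) < 1/ρ)).mp h2
    have hfoc : ∀ i, ∑ j, q j * w i j = v i (x i) ^ (ρ - 1) := by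
      intro i
      apply foc hρ0 hρlt (hupos i) (hc0 i)
      intro t ht
      have hk := hkey i t ht
      rw [hQxeq i] at hk
      exact hk
    have hQxρ : ∀ i, ∑ j, q j * x i j = v i (x i) ^ ρ := by
      intro i
      rw [hQxeq i, hfoc i]
      nth_rewrite 1 [← Real.rpow_one (v i (x i))]
      rw [← Real.rpow_add (hupos i)]
      norm_num
    have hgm : ∀ i, v i (y i) ^ ρ ≤ ρ * (∑ j, q j * y i j) + (1-ρ) * v i (x i) ^ ρ := by
      intro i
      have hA0 : 0 ≤ v i (y i) * v i (x i) ^ (ρ-1) :=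
        mul_nonneg (hs0 i) (Real.rpow_nonneg (hu0 i) _)
      have hB0 : 0 ≤ v i (x i) ^ ρ := Real.rpow_nonneg (hu0 i) _
      have hgm0 := Real.geom_mean_le_arith_mean2_weighted hρ0.le
        (by linarith : (0:ℝ) ≤ 1 - ρ) hA0 hB0 (by ring)
      have hid : (v i (y i) * v i (x i) ^ (ρ-1)) ^ ρ * ((v i (x i) ^ ρ) ^ (1-ρ)) =
          v i (y i) ^ ρ := by
        rw [Real.mul_rpow (hs0 i) (Real.rpow_nonneg (hu0 i) _)]
        rw [← Real.rpow_mul (hu0 i), ← Real.rpow_mul (hu0 i)]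
        rw [mul_assoc, ← Real.rpow_add (hupos i)]
        rw [show (ρ-1) * ρ + ρ * (1-ρ) = 0 by ring, Real.rpow_zero, mul_one]
      rw [hid] at hgm0
      have hA : v i (y i) * v i (x i) ^ (ρ-1) ≤ ∑ j, q j * y i j := by
        have h := hQyc i
        rw [hfoc i] at h
        exact h
      have := mul_le_mul_of_nonneg_left hA hρ0.le
      linarith
    have hstep := Finset.sum_le_sum (fun i (_ : i ∈ Finset.univ) => hgm i)
    rw [Finset.sum_add_distrib, ← Finset.mul_sum, ← Finset.mul_sum] at hstep
    have hQQ : ∑ i, ∑ j, q j * x i j = ∑ i, v i (x i) ^ ρ :=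
      Finset.sum_congr rfl (fun i _ => hQxρ i)
    have h1 : ρ * (∑ i, ∑ j, q j * y i j) ≤ ρ * (∑ i, v i (x i) ^ ρ) := by
      apply mul_le_mul_of_nonneg_left _ hρ0.le
      rw [← hQQ, ← hmkt]
      exact hQyle
    linarith


section Fwd
variable {n m : ℕ} (v : Fin n → (Fin m → ℝ) → ℝ) (w : Fin n → Fin m → ℝ)

/-- Utility-space optimality derived from CES-optimality. -/
lemma hsums_lemma (hw_nn : ∀ i j, 0 ≤ w i j) (hw_nz : ∀ i, ∃ j, w i j ≠ 0)
    (hv : ∀ i (y : Fin m → ℝ), Nonneg y →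
      IsLeast {t : ℝ | ∃ j, w i j ≠ 0 ∧ t = y j / w i j} (v i y))
    {ρ : ℝ} (hρ0 : 0 < ρ)
    {x : Fin n → Fin m → ℝ} (hmax : MaxCES v ρ x)
    (u' : Fin n → ℝ) (h0 : ∀ i, 0 ≤ u' i) (hfe : ∀ j, ∑ i, u' i * w i j ≤ 1) :
    ∑ i, (u' i) ^ ρ ≤ ∑ i, v i (x i) ^ ρ := by
  have hx1 := hmax.1.1
  have hu0 : ∀ i, 0 ≤ v i (x i) := fun i => leo_nonneg (hv i _ (hx1 i)) (hw_nn i) (hx1 i)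
  have hyv : ValidAlloc (fun i => u' i • w i) := by
    constructor
    · intro i j
      show 0 ≤ u' i * w i j
      exact mul_nonneg (h0 i) (hw_nn i j)
    · intro j
      show ∑ i, u' i * w i j ≤ 1
      exact hfe j
  have h1 := hmax.2 _ hyv
  unfold CES at h1
  have hval : ∀ i : Fin n, v i (u' i • w i) = u' i := by
    intro i
    apply leo_scale (hw_nn i) (hw_nz i)
    apply hv
    intro j
    show 0 ≤ u' i * w i j
    exact mul_nonneg (h0 i) (hw_nn i j)
  rw [Finset.sum_congr rfl (fun i (_ : i ∈ Finset.univ) => by rw [hval i])] at h1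
  exact (Real.rpow_le_rpow_iff
    (Finset.sum_nonneg fun i _ => Real.rpow_nonneg (h0 i) _)
    (Finset.sum_nonneg fun i _ => Real.rpow_nonneg (hu0 i) _)
    (by positivity : (0:ℝ) < 1/ρ)).mp h1

/-- At a CES optimum with `ρ < 1`, all utilities are positive. -/
lemma upos_lemma (hw_nn : ∀ i j, 0 ≤ w i j) (hw_nz : ∀ i, ∃ j, w i j ≠ 0)
    (hv : ∀ i (y : Fin m → ℝ), Nonneg y →
      IsLeast {t : ℝ | ∃ j, w i j ≠ 0 ∧ t = y j / w i j} (v i y))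
    {ρ : ℝ} (hρ0 : 0 < ρ) (hρlt : ρ < 1)
    {x : Fin n → Fin m → ℝ} (hmax : MaxCES v ρ x) (k : Fin n) : 0 < v k (x k) := by
  have hx1 := hmax.1.1
  have hu0 : ∀ i, 0 ≤ v i (x i) := fun i => leo_nonneg (hv i _ (hx1 i)) (hw_nn i) (hx1 i)
  rcases eq_or_lt_of_le (hu0 k) with huk | huk
  swap
  · exact huk
  exfalso
  set total : ℝ := ∑ j, ∑ i, w i j with htotal
  have htot0 : 0 ≤ total :=
    Finset.sum_nonneg fun j _ => Finset.sum_nonneg fun i _ => hw_nn i j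
  set ε : ℝ := 1/(1+total) with hεd
  have hε : 0 < ε := by rw [hεd]; positivity
  have hεfeas : ∀ j, ∑ i, ε * w i j ≤ 1 := by
    intro j
    have hcol : ∑ i, w i j ≤ total := by
      apply Finset.single_le_sum (f := fun j => ∑ i, w i j)
        (fun j _ => Finset.sum_nonneg fun i _ => hw_nn i j) (Finset.mem_univ j)
    calc ∑ i, ε * w i j = ε * ∑ i, w i j := (Finset.mul_sum _ _ _).symm
      _ ≤ ε * total := mul_le_mul_of_nonneg_left hcol hε.le
      _ ≤ 1 := by
          rw [hεd, div_mul_eq_mul_div, div_le_one (by linarith)]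
          linarith
  set S : ℝ := ∑ i, v i (x i) ^ ρ with hS
  have hS0 : 0 ≤ S := Finset.sum_nonneg fun i _ => Real.rpow_nonneg (hu0 i) _
  have hερ : 0 < ε ^ ρ := Real.rpow_pos_of_pos hε _
  set θ : ℝ := min (1/2) ((ε^ρ/(S+1)) ^ (1/(1-ρ))) with hθd
  have hθ0 : 0 < θ :=
    lt_min (by norm_num) (Real.rpow_pos_of_pos (div_pos hερ (by linarith)) _)
  have hθh : θ ≤ 1/2 := min_le_left _ _
  have h0' : ∀ i, 0 ≤ (1-θ) * v i (x i) + θ * ε := by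
    intro i
    have := hu0 i
    have h1θ : 0 ≤ 1 - θ := by linarith
    positivity
  have hfe' : ∀ j, ∑ i, ((1-θ) * v i (x i) + θ * ε) * w i j ≤ 1 := by
    intro j
    have hux : ∑ i, v i (x i) * w i j ≤ 1 := by
      calc ∑ i, v i (x i) * w i j ≤ ∑ i, x i j :=
            Finset.sum_le_sum fun i _ => leo_le (hv i _ (hx1 i)) (hw_nn i) (hx1 i) j
        _ ≤ 1 := hmax.1.2 j
    have hexp : ∑ i, ((1-θ) * v i (x i) + θ * ε) * w i j =
        (1-θ) * (∑ i, v i (x i) * w i j) + θ * (∑ i, ε * w i j) := by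
      rw [Finset.mul_sum, Finset.mul_sum, ← Finset.sum_add_distrib]
      apply Finset.sum_congr rfl; intro i _; ring
    rw [hexp]
    have h1θ : 0 ≤ 1 - θ := by linarith
    nlinarith [hεfeas j]
  have hle := hsums_lemma v w hw_nn hw_nz hv hρ0 hmax _ h0' hfe'
  -- lower bound the perturbed sum
  have hterm : ∀ i, (1-θ) * v i (x i) ^ ρ ≤ ((1-θ) * v i (x i) + θ * ε) ^ ρ := by
    intro i
    have h1θ : (0:ℝ) ≤ 1 - θ := by linarith
    calc (1-θ) * v i (x i) ^ ρ ≤ (1-θ) ^ ρ * v i (x i) ^ ρ := by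
          apply mul_le_mul_of_nonneg_right _ (Real.rpow_nonneg (hu0 i) _)
          calc (1-θ) = (1-θ) ^ (1:ℝ) := (Real.rpow_one _).symm
            _ ≤ (1-θ) ^ ρ := Real.rpow_le_rpow_of_exponent_ge (by linarith) (by linarith) hρlt.le
      _ = ((1-θ) * v i (x i)) ^ ρ := (Real.mul_rpow h1θ (hu0 i)).symm
      _ ≤ ((1-θ) * v i (x i) + θ * ε) ^ ρ := by
          apply Real.rpow_le_rpow (mul_nonneg h1θ (hu0 i)) _ hρ0.le
          nlinarith [hθ0, hε]
  have hksplit : ((1-θ) * v k (x k) + θ * ε) ^ ρ = θ^ρ * ε^ρ := by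
    rw [← huk]
    rw [show (1-θ) * 0 + θ * ε = θ * ε by ring]
    exact Real.mul_rpow hθ0.le hε.le
  -- sum bound : (1-θ) * S + θ^ρ ε^ρ ≤ S  (using u k = 0)
  have hsplit : (1-θ) * S - (1-θ) * v k (x k) ^ ρ + θ^ρ * ε^ρ ≤ S := by
    have e1 : ∑ i ∈ Finset.univ.erase k, ((1-θ) * v i (x i) + θ * ε) ^ ρ +
        ((1-θ) * v k (x k) + θ * ε) ^ ρ = ∑ i, ((1-θ) * v i (x i) + θ * ε) ^ ρ :=
      Finset.sum_erase_add _ _ (Finset.mem_univ k)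
    have e2 : ∑ i ∈ Finset.univ.erase k, (1-θ) * v i (x i) ^ ρ +
        (1-θ) * v k (x k) ^ ρ = (1-θ) * S := by
      rw [hS, Finset.mul_sum]
      exact Finset.sum_erase_add _ _ (Finset.mem_univ k)
    have e3 : ∑ i ∈ Finset.univ.erase k, (1-θ) * v i (x i) ^ ρ ≤
        ∑ i ∈ Finset.univ.erase k, ((1-θ) * v i (x i) + θ * ε) ^ ρ :=
      Finset.sum_le_sum fun i _ => hterm i
    linarith [hle, e1, e2, e3, hksplit]
  have hzero : v k (x k) ^ ρ = 0 := by
    rw [← huk, Real.zero_rpow (ne_of_gt hρ0)]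
  rw [hzero, mul_zero, sub_zero] at hsplit
  -- so θ * S ≥ θ^ρ * ε^ρ
  have hθS : θ^ρ * ε^ρ ≤ θ * S := by linarith
  -- but θ^{1-ρ} ≤ ε^ρ/(S+1) gives contradiction
  have hθsmall : θ ^ (1-ρ) ≤ ε^ρ/(S+1) := by
    calc θ ^ (1-ρ) ≤ ((ε^ρ/(S+1)) ^ (1/(1-ρ))) ^ (1-ρ) :=
          Real.rpow_le_rpow hθ0.le (min_le_right _ _) (by linarith)
      _ = ε^ρ/(S+1) := by
          rw [← Real.rpow_mul (by positivity)]
          rw [one_div_mul_cancel (by linarith : (1:ℝ)-ρ ≠ 0), Real.rpow_one]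
  have hθsplit : θ = θ^ρ * θ^(1-ρ) := by
    rw [← Real.rpow_add hθ0]; norm_num
  have hθρ : 0 < θ ^ ρ := Real.rpow_pos_of_pos hθ0 _
  have hlt : θ * S < θ^ρ * ε^ρ := by
    calc θ * S = θ^ρ * θ^(1-ρ) * S := by rw [← hθsplit]
      _ ≤ θ^ρ * (ε^ρ/(S+1)) * S := by
          apply mul_le_mul_of_nonneg_right _ hS0
          exact mul_le_mul_of_nonneg_left hθsmall hθρ.le
      _ < θ^ρ * ε^ρ := by
          rw [mul_assoc]
          apply mul_lt_mul_of_pos_left _ hθρ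
          rw [div_mul_eq_mul_div, div_lt_iff₀ (by linarith)]
          nlinarith [hερ, hS0]
  linarith

/-- Gradient-based linear maximality at the optimum. -/
lemma glin_lemma (hw_nn : ∀ i j, 0 ≤ w i j) (hw_nz : ∀ i, ∃ j, w i j ≠ 0)
    (hv : ∀ i (y : Fin m → ℝ), Nonneg y →
      IsLeast {t : ℝ | ∃ j, w i j ≠ 0 ∧ t = y j / w i j} (v i y))
    {ρ : ℝ} (hρ0 : 0 < ρ) (hρ1 : ρ ≤ 1)
    {x : Fin n → Fin m → ℝ} (hmax : MaxCES v ρ x)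
    (u' : Fin n → ℝ) (h0 : ∀ i, 0 ≤ u' i) (hfe : ∀ j, ∑ i, u' i * w i j ≤ 1) :
    ∑ i, v i (x i) ^ (ρ-1) * u' i ≤ ∑ i, v i (x i) ^ (ρ-1) * v i (x i) := by
  have hx1 := hmax.1.1
  have hu0 : ∀ i, 0 ≤ v i (x i) := fun i => leo_nonneg (hv i _ (hx1 i)) (hw_nn i) (hx1 i)
  have hux : ∀ j, ∑ i, v i (x i) * w i j ≤ 1 := by
    intro j
    calc ∑ i, v i (x i) * w i j ≤ ∑ i, x i j :=
          Finset.sum_le_sum fun i _ => leo_le (hv i _ (hx1 i)) (hw_nn i) (hx1 i) j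
      _ ≤ 1 := hmax.1.2 j
  rcases eq_or_lt_of_le hρ1 with hρe | hρlt
  · subst hρe
    simp only [sub_self, Real.rpow_zero, one_mul]
    have h1 := hsums_lemma v w hw_nn hw_nz hv hρ0 hmax u' h0 hfe
    simpa [Real.rpow_one] using h1
  · have hupos : ∀ i, 0 < v i (x i) := fun i => upos_lemma v w hw_nn hw_nz hv hρ0 hρlt hmax i
    have hkey : ∀ θ, 0 ≤ θ → θ ≤ 1 →
        ∑ i, (v i (x i) + θ * (u' i - v i (x i))) ^ ρ ≤ ∑ i, v i (x i) ^ ρ := by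
      intro θ h0θ h1θ
      apply hsums_lemma v w hw_nn hw_nz hv hρ0 hmax
      · intro i
        nlinarith [hupos i, h0 i]
      · intro j
        have hexp : ∑ i, (v i (x i) + θ * (u' i - v i (x i))) * w i j
            = (1-θ) * (∑ i, v i (x i) * w i j) + θ * (∑ i, u' i * w i j) := by
          rw [Finset.mul_sum, Finset.mul_sum, ← Finset.sum_add_distrib]
          apply Finset.sum_congr rfl; intro i _; ring
        rw [hexp]
        nlinarith [hux j, hfe j]
    have hgr := grad_le hρ0 (fun i => v i (x i)) (fun i => u' i - v i (x i)) hupos one_pos hkey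
    have hexp2 : ∑ i, v i (x i)^(ρ-1) * (u' i - v i (x i)) =
        ∑ i, v i (x i)^(ρ-1) * u' i - ∑ i, v i (x i)^(ρ-1) * v i (x i) := by
      rw [← Finset.sum_sub_distrib]
      apply Finset.sum_congr rfl; intro i _; ring
    rw [hexp2] at hgr
    linarith





/-- Existence of dual prices at the optimum. -/
lemma dual_exists (hw_nn : ∀ i j, 0 ≤ w i j) (hw_nz : ∀ i, ∃ j, w i j ≠ 0)
    (hv : ∀ i (y : Fin m → ℝ), Nonneg y →
      IsLeast {t : ℝ | ∃ j, w i j ≠ 0 ∧ t = y j / w i j} (v i y))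
    {ρ : ℝ} (hρ0 : 0 < ρ) (hρ1 : ρ ≤ 1)
    {x : Fin n → Fin m → ℝ} (hmax : MaxCES v ρ x) :
    ∃ q : Fin m → ℝ, (∀ j, 0 ≤ q j) ∧
      (∀ j, (∑ i, v i (x i) * w i j) ≠ 1 → q j = 0) ∧
      (∀ k, v k (x k) ^ (ρ-1) ≤ ∑ j, q j * w k j) ∧
      (∀ k, 0 < v k (x k) → ∑ j, q j * w k j = v k (x k) ^ (ρ-1)) := by
  classical
  have hx1 := hmax.1.1
  have hu0 : ∀ i, 0 ≤ v i (x i) := fun i => leo_nonneg (hv i _ (hx1 i)) (hw_nn i) (hx1 i)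
  have hufeas : ∀ j, ∑ i, v i (x i) * w i j ≤ 1 := by
    intro j
    calc ∑ i, v i (x i) * w i j ≤ ∑ i, x i j :=
          Finset.sum_le_sum fun i _ => leo_le (hv i _ (hx1 i)) (hw_nn i) (hx1 i) j
      _ ≤ 1 := hmax.1.2 j
  -- Farkas setup
  have hfar : ∀ d : Fin n → ℝ,
      (∀ ind : {j : Fin m // ∑ i, v i (x i) * w i j = 1} ⊕ {i : Fin n // v i (x i) = 0},
        ∑ k, d k *
          Sum.elim (fun (j : {j : Fin m // ∑ i, v i (x i) * w i j = 1}) (k : Fin n) => w k j.1)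
            (fun (i0 : {i : Fin n // v i (x i) = 0}) (k : Fin n) =>
              if k = i0.1 then (-1:ℝ) else 0) ind k ≤ 0) →
      ∑ k, d k * (v k (x k) ^ (ρ-1)) ≤ 0 := by
    intro d hd
    have hdT : ∀ (j : Fin m), (∑ i, v i (x i) * w i j = 1) → ∑ k, d k * w k j ≤ 0 :=
      fun j hj => hd (Sum.inl ⟨j, hj⟩)
    have hdZ : ∀ i, v i (x i) = 0 → 0 ≤ d i := by
      intro i hi
      have h : ∑ k, d k * (if k = i then (-1:ℝ) else 0) ≤ 0 := hd (Sum.inr ⟨i, hi⟩)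
      have hsum : ∑ k, d k * (if k = i then (-1:ℝ) else 0) = -(d i) := by
        rw [Finset.sum_eq_single i]
        · simp
        · intro b _ hb; simp [hb]
        · intro hh; exact absurd (Finset.mem_univ i) hh
      rw [hsum] at h
      linarith
    -- find a feasible perturbation step
    have hev : ∀ᶠ θ in 𝓝[>] (0:ℝ),
        (∀ i, 0 ≤ v i (x i) + θ * d i) ∧
          (∀ j, ∑ i, (v i (x i) + θ * d i) * w i j ≤ 1) := by
      apply Filter.Eventually.and
      · rw [Filter.eventually_all]
        intro i
        rcases eq_or_lt_of_le (hu0 i) with hz | hpos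
        · filter_upwards [eventually_mem_nhdsWithin] with θ hθ
          have hd0 := hdZ i hz.symm
          have hθ0 : (0:ℝ) < θ := hθ
          rw [← hz]
          nlinarith
        · apply eventually_nhdsWithin_of_eventually_nhds
          have hcont : ContinuousAt (fun θ : ℝ => v i (x i) + θ * d i) 0 :=
            continuousAt_const.add (continuousAt_id.mul continuousAt_const)
          have h00 : (fun _ : ℝ => (0:ℝ)) 0 < (fun θ : ℝ => v i (x i) + θ * d i) 0 := by
            simpa using hpos
          filter_upwards [continuousAt_const.eventually_lt hcont h00] with θ hθ
          exact hθ.le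
      · rw [Filter.eventually_all]
        intro j
        have hexp : ∀ θ : ℝ, ∑ i, (v i (x i) + θ * d i) * w i j
            = (∑ i, v i (x i) * w i j) + θ * (∑ i, d i * w i j) := by
          intro θ
          rw [Finset.mul_sum, ← Finset.sum_add_distrib]
          apply Finset.sum_congr rfl; intro i _; ring
        by_cases hTj : ∑ i, v i (x i) * w i j = 1
        · filter_upwards [eventually_mem_nhdsWithin] with θ hθ
          rw [hexp θ, hTj]
          have hθ0 : (0:ℝ) < θ := hθ
          have h1 : ∑ i, d i * w i j ≤ 0 := by
            have := hdT j hTj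
            simpa using this
          nlinarith
        · have hlt : ∑ i, v i (x i) * w i j < 1 := lt_of_le_of_ne (hufeas j) hTj
          apply eventually_nhdsWithin_of_eventually_nhds
          have hcont : ContinuousAt
              (fun θ : ℝ => (∑ i, v i (x i) * w i j) + θ * (∑ i, d i * w i j)) 0 :=
            continuousAt_const.add (continuousAt_id.mul continuousAt_const)
          have h00 : (fun θ : ℝ => (∑ i, v i (x i) * w i j) + θ * (∑ i, d i * w i j)) 0
              < (fun _ : ℝ => (1:ℝ)) 0 := by simpa using hlt
          filter_upwards [hcont.eventually_lt continuousAt_const h00] with θ hθ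
          rw [hexp θ]
          exact hθ.le
    obtain ⟨θ, hθc, hθmem⟩ := (hev.and eventually_mem_nhdsWithin).exists
    obtain ⟨hθnn, hθfe⟩ := hθc
    have hθ0 : (0:ℝ) < θ := hθmem
    have hlin := glin_lemma v w hw_nn hw_nz hv hρ0 hρ1 hmax
      (fun i => v i (x i) + θ * d i) hθnn hθfe
    have hexp2 : ∑ i, v i (x i)^(ρ-1) * (v i (x i) + θ * d i)
        = ∑ i, v i (x i)^(ρ-1) * v i (x i) + θ * ∑ i, v i (x i)^(ρ-1) * d i := by
      rw [Finset.mul_sum, ← Finset.sum_add_distrib]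
      apply Finset.sum_congr rfl; intro i _; ring
    rw [hexp2] at hlin
    have hgd : ∑ i, v i (x i)^(ρ-1) * d i ≤ 0 := by nlinarith
    calc ∑ k, d k * v k (x k)^(ρ-1) = ∑ k, v k (x k)^(ρ-1) * d k :=
          Finset.sum_congr rfl fun k _ => mul_comm _ _
      _ ≤ 0 := hgd
  obtain ⟨qF, hqF0, hqFeq⟩ := farkas
    (Sum.elim (fun (j : {j : Fin m // ∑ i, v i (x i) * w i j = 1}) (k : Fin n) => w k j.1)
      (fun (i0 : {i : Fin n // v i (x i) = 0}) (k : Fin n) => if k = i0.1 then (-1:ℝ) else 0))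
    (fun k => v k (x k) ^ (ρ-1)) hfar
  -- extract the prices
  have key : ∀ k, (∑ j, (if h : ∑ i, v i (x i) * w i j = 1
      then qF (Sum.inl ⟨j, h⟩) else 0) * w k j)
      - (if h : v k (x k) = 0 then qF (Sum.inr ⟨k, h⟩) else 0) = v k (x k) ^ (ρ-1) := by
    intro k
    have heq := hqFeq k
    rw [Fintype.sum_sum_type] at heq
    simp only [Sum.elim_inl, Sum.elim_inr] at heq
    have h1 : ∑ (j : {j : Fin m // ∑ i, v i (x i) * w i j = 1}), qF (Sum.inl j) * w k j.1
        = ∑ j, (if h : ∑ i, v i (x i) * w i j = 1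
            then qF (Sum.inl ⟨j, h⟩) else 0) * w k j := by
      calc ∑ (j : {j : Fin m // ∑ i, v i (x i) * w i j = 1}), qF (Sum.inl j) * w k j.1
          = ∑ (j : {j : Fin m // ∑ i, v i (x i) * w i j = 1}),
              (if h : ∑ i, v i (x i) * w i (j:Fin m) = 1
                then qF (Sum.inl ⟨(j:Fin m), h⟩) else 0) * w k (j:Fin m) := by
            apply Finset.sum_congr rfl; intro j _; rw [dif_pos j.2, Subtype.coe_eta]
        _ = ∑ j ∈ Finset.univ.filter (fun j => ∑ i, v i (x i) * w i j = 1),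
              (if h : ∑ i, v i (x i) * w i j = 1
                then qF (Sum.inl ⟨j, h⟩) else 0) * w k j :=
            (Finset.sum_subtype (p := fun j => ∑ i, v i (x i) * w i j = 1)
              (Finset.univ.filter (fun j => ∑ i, v i (x i) * w i j = 1))
              (fun j => by simp)
              (fun j => (if h : ∑ i, v i (x i) * w i j = 1
                then qF (Sum.inl ⟨j, h⟩) else 0) * w k j)).symm
        _ = ∑ j, (if h : ∑ i, v i (x i) * w i j = 1
              then qF (Sum.inl ⟨j, h⟩) else 0) * w k j := by
            apply Finset.sum_subset (Finset.filter_subset _ _)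
            intro j _ hj
            have hP : ¬ (∑ i, v i (x i) * w i j = 1) := by simpa using hj
            rw [dif_neg hP, zero_mul]
    have h2 : ∑ (i0 : {i : Fin n // v i (x i) = 0}),
        qF (Sum.inr i0) * (if k = i0.1 then (-1:ℝ) else 0)
        = -(if h : v k (x k) = 0 then qF (Sum.inr ⟨k, h⟩) else 0) := by
      by_cases hk : v k (x k) = 0
      · rw [dif_pos hk, Finset.sum_eq_single (⟨k, hk⟩ : {i : Fin n // v i (x i) = 0})]
        · simp
        · intro b _ hb
          have hne : k ≠ b.1 := by
            intro he; exact hb (Subtype.ext he.symm)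
          rw [if_neg hne, mul_zero]
        · intro hh; exact absurd (Finset.mem_univ _) hh
      · rw [dif_neg hk, neg_zero]
        apply Finset.sum_eq_zero
        intro i0 _
        rw [if_neg, mul_zero]
        intro he; exact hk (by rw [he]; exact i0.2)
    rw [h1, h2] at heq
    linarith
  refine ⟨fun j => if h : ∑ i, v i (x i) * w i j = 1 then qF (Sum.inl ⟨j, h⟩) else 0,
    ?_, ?_, ?_, ?_⟩
  · intro j
    beta_reduce
    by_cases h : ∑ i, v i (x i) * w i j = 1
    · rw [dif_pos h]; exact hqF0 _
    · rw [dif_neg h]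
  · intro j hj
    beta_reduce
    rw [dif_neg hj]
  · intro k
    beta_reduce
    have hk := key k
    have hl0 : 0 ≤ (if h : v k (x k) = 0 then qF (Sum.inr ⟨k, h⟩) else 0) := by
      by_cases h : v k (x k) = 0
      · rw [dif_pos h]; exact hqF0 _
      · rw [dif_neg h]
    linarith
  · intro k hpos
    beta_reduce
    have hk := key k
    rw [dif_neg (ne_of_gt hpos)] at hk
    linarith


end Fwd

lemma fwd_core {n m : ℕ} (v : Fin n → (Fin m → ℝ) → ℝ) (w : Fin n → Fin m → ℝ)
    (hw_nn : ∀ i j, 0 ≤ w i j) (hw_nz : ∀ i, ∃ j, w i j ≠ 0)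
    (hv : ∀ i (y : Fin m → ℝ), Nonneg y →
      IsLeast {t : ℝ | ∃ j, w i j ≠ 0 ∧ t = y j / w i j} (v i y))
    {ρ : ℝ} (hρ0 : 0 < ρ) (hρ1 : ρ ≤ 1)
    {x : Fin n → Fin m → ℝ} (hmax : MaxCES v ρ x) :
    ∃ q : Fin m → ℝ, (∀ j, 0 ≤ q j) ∧
      IsWE v (fun y => ρ * (∑ j, q j * y j) ^ (1/ρ)) x := by
  classical
  obtain ⟨q, hq0, hqt, hcge, hceq⟩ := dual_exists v w hw_nn hw_nz hv hρ0 hρ1 hmax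
  have hx := hmax.1
  have hx1 := hx.1
  have hu0 : ∀ i, 0 ≤ v i (x i) := fun i => leo_nonneg (hv i _ (hx1 i)) (hw_nn i) (hx1 i)
  have hule : ∀ i j, v i (x i) * w i j ≤ x i j :=
    fun i j => leo_le (hv i _ (hx1 i)) (hw_nn i) (hx1 i) j
  have htightx : ∀ j, (∑ i, v i (x i) * w i j = 1) → ∀ i, x i j = v i (x i) * w i j := by
    intro j hTj
    have hnn : ∀ i ∈ Finset.univ, (0:ℝ) ≤ x i j - v i (x i) * w i j :=
      fun i _ => sub_nonneg.mpr (hule i j)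
    have h0 : ∑ i, (x i j - v i (x i) * w i j) = (∑ i, x i j) - 1 := by
      rw [Finset.sum_sub_distrib, hTj]
    have hle : ∑ i, (x i j - v i (x i) * w i j) ≤ 0 := by
      rw [h0]; linarith [hx.2 j]
    have heq : ∑ i, (x i j - v i (x i) * w i j) = 0 :=
      le_antisymm hle (Finset.sum_nonneg hnn)
    intro i
    have := (Finset.sum_eq_zero_iff_of_nonneg hnn).mp heq i (Finset.mem_univ i)
    linarith
  have hQx : ∀ i, ∑ j, q j * x i j = v i (x i) * ∑ j, q j * w i j := by
    intro i
    rw [Finset.mul_sum]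
    apply Finset.sum_congr rfl
    intro j _
    by_cases hTj : ∑ i', v i' (x i') * w i' j = 1
    · rw [htightx j hTj i]; ring
    · rw [hqt j hTj]; ring
  have hclear : ∀ j, NonzeroCost (fun y => ρ * (∑ j, q j * y j) ^ (1/ρ)) j →
      ∑ i, x i j = 1 := by
    rintro j ⟨yw, hynn, hysupp, hypos⟩
    have hsum : ∑ l, q l * yw l = q j * yw j :=
      Finset.sum_eq_single j (fun l _ hl => by rw [hysupp l hl, mul_zero])
        (fun hj => absurd (Finset.mem_univ j) hj)
    have hypos' : 0 < ρ * (∑ l, q l * yw l) ^ (1/ρ) := hypos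
    rw [hsum] at hypos'
    have hqy0 : 0 ≤ q j * yw j := mul_nonneg (hq0 j) (hynn j)
    rcases eq_or_lt_of_le hqy0 with h | h
    · exfalso
      rw [← h, Real.zero_rpow (by positivity : (1:ℝ)/ρ ≠ 0), mul_zero] at hypos'
      exact lt_irrefl _ hypos'
    · have hqj : 0 < q j := by
        rcases eq_or_lt_of_le (hq0 j) with h' | h'
        · exfalso; rw [← h', zero_mul] at h; exact lt_irrefl _ h
        · exact h'
      have hTj : ∑ i, v i (x i) * w i j = 1 := by
        by_contra hne
        rw [hqt j hne] at hqj; exact lt_irrefl _ hqj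
      calc ∑ i, x i j = ∑ i, v i (x i) * w i j :=
            Finset.sum_congr rfl fun i _ => htightx j hTj i
        _ = 1 := hTj
  refine ⟨q, hq0, ?_, hx, hclear⟩
  intro i
  refine ⟨hx1 i, ?_⟩
  intro z hz
  show v i z - ρ * (∑ j, q j * z j) ^ (1/ρ) ≤
    v i (x i) - ρ * (∑ j, q j * x i j) ^ (1/ρ)
  have hs0 : 0 ≤ v i z := leo_nonneg (hv i _ hz) (hw_nn i) hz
  have hsc : v i z * (∑ j, q j * w i j) ≤ ∑ j, q j * z j := by
    rw [Finset.mul_sum]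
    apply Finset.sum_le_sum
    intro j _
    have h := leo_le (hv i _ hz) (hw_nn i) hz j
    calc v i z * (q j * w i j) = q j * (v i z * w i j) := by ring
      _ ≤ q j * z j := mul_le_mul_of_nonneg_left h (hq0 j)
  rcases eq_or_lt_of_le hρ1 with hρe | hρlt
  · -- ρ = 1
    subst hρe
    have h11 : (1:ℝ)/1 = 1 := by norm_num
    rw [h11, Real.rpow_one, Real.rpow_one, one_mul, one_mul]
    have hge1 : (1:ℝ) ≤ ∑ j, q j * w i j := by
      have h := hcge i
      rwa [sub_self, Real.rpow_zero] at h
    have hxqe : ∑ j, q j * x i j = v i (x i) := by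
      rw [hQx i]
      rcases eq_or_lt_of_le (hu0 i) with h | h
      · rw [← h, zero_mul]
      · rw [hceq i h, sub_self, Real.rpow_zero, mul_one]
    rw [hxqe]
    have hmul : v i z * 1 ≤ v i z * (∑ j, q j * w i j) :=
      mul_le_mul_of_nonneg_left hge1 hs0
    linarith [hsc, hmul]
  · -- ρ < 1
    have hupos : 0 < v i (x i) := upos_lemma v w hw_nn hw_nz hv hρ0 hρlt hmax i
    have hc : ∑ j, q j * w i j = v i (x i) ^ (ρ-1) := hceq i hupos
    have hxq : ∑ j, q j * x i j = v i (x i) ^ ρ := by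
      rw [hQx i, hc]
      nth_rewrite 1 [← Real.rpow_one (v i (x i))]
      rw [← Real.rpow_add hupos]; norm_num
    have hpx : (v i (x i) ^ ρ) ^ (1/ρ) = v i (x i) := by
      rw [← Real.rpow_mul (hu0 i), mul_one_div_cancel (ne_of_gt hρ0), Real.rpow_one]
    rw [hxq, hpx]
    have hy := young_bound hρ0 hρlt hs0 hupos
    have hmono : ρ * (v i z * v i (x i)^(ρ-1)) ^ (1/ρ) ≤ ρ * (∑ j, q j * z j) ^ (1/ρ) := by
      apply mul_le_mul_of_nonneg_left _ hρ0.le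
      apply Real.rpow_le_rpow (mul_nonneg hs0 (Real.rpow_nonneg (hu0 i) _)) _ (by positivity)
      rw [← hc]; exact hsc
    linarith

end AuxProof

theorem stmt18 {n m : ℕ} (v : Fin n → (Fin m → ℝ) → ℝ)
    (w : Fin n → Fin m → ℝ) (hw_nn : ∀ i j, 0 ≤ w i j)
    (hw_nz : ∀ i, ∃ j, w i j ≠ 0)
    -- v i is the Leontief valuation with weights w i: on nonnegative bundles,
    -- v i y is the least element of {y j / w i j : w i j ≠ 0}
    (hv : ∀ i (y : Fin m → ℝ), Nonneg y →
      IsLeast {t : ℝ | ∃ j, w i j ≠ 0 ∧ t = y j / w i j} (v i y))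
    (ρ : ℝ) (hρ0 : 0 < ρ) (hρ1 : ρ ≤ 1)
    (x : Fin n → Fin m → ℝ) (hx : ValidAlloc x) :
    MaxCES v ρ x ↔ ∃ q : Fin m → ℝ, (∀ j, 0 ≤ q j) ∧
      IsWE v (fun y => ρ * (∑ j, q j * y j) ^ (1 / ρ)) x := by
  classical
  constructor
  · intro hmax
    exact fwd_core v w hw_nn hw_nz hv hρ0 hρ1 hmax
  · rintro ⟨q, hq0, hdem, hvalid, hclear⟩
    refine ⟨hx, ?_⟩
    intro y hy
    have hcomp := rev_core v w hw_nn hw_nz hv hρ0 hρ1 x q hq0 hdem hvalid hclear y hy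
    unfold CES
    apply Real.rpow_le_rpow _ hcomp (by positivity)
    apply Finset.sum_nonneg
    intro i _
    exact Real.rpow_nonneg (leo_nonneg (hv i _ (hy.1 i)) (hw_nn i) (hy.1 i)) _
end
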